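/- arXiv:1806.00269 — 7 statements merged into one kernel-verified Lean document; each statement's English description precedes it below -/
import Mathlib

section
/- The algebra of symmetric functions invariant under all substitutions α_y (which set x₁ = y, x₂ = -y and shift the remaining variables) is generated by the odd power sums p_{2k+1} = Σ_j x_j^{2k+1}, k ∈ ℕ. -/
open MvPolynomial

noncomputable def alphaSubst (y : ℝ) : MvPolynomial ℕ ℂ →ₐ[ℂ] MvPolynomial ℕ ℂ :=
  MvPolynomial.aeval (fun k => X k + C ((y : ℂ) ^ (k + 1) + (-(y : ℂ)) ^ (k + 1)))

namespace InvAux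

/-- Translation of the variables by the vector `c`. -/
noncomputable def T (c : ℕ → ℂ) : MvPolynomial ℕ ℂ →ₐ[ℂ] MvPolynomial ℕ ℂ :=
  aeval (fun k => X k + C (c k))

lemma T_congr {P : MvPolynomial ℕ ℂ} {c c' : ℕ → ℂ}
    (h : ∀ k ∈ P.vars, c k = c' k) : T c P = T c' P := by
  simp only [T, aeval_def]
  apply eval₂_congr
  intro i m hi hc
  have hv : i ∈ P.vars := (mem_vars i).2 ⟨m, mem_support_iff.2 hc, hi⟩
  rw [h i hv]

lemma T_comp (c c' : ℕ → ℂ) : (T c).comp (T c') = T (c + c') := by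
  apply algHom_ext
  intro k
  simp [T, map_add, aeval_X, aeval_C, algebraMap_eq]
  ring

lemma T_add_apply (c c' : ℕ → ℂ) (P : MvPolynomial ℕ ℂ) :
    T (c + c') P = T c (T c' P) :=
  (AlgHom.congr_fun (T_comp c c') P).symm

lemma T_zero : T (0 : ℕ → ℂ) = AlgHom.id ℂ _ := by
  apply algHom_ext
  intro k
  simp [T]

lemma T_smul {P : MvPolynomial ℕ ℂ} {c : ℕ → ℂ} {S : Set ℂ} (hS : S.Infinite)
    (h : ∀ t ∈ S, T (fun k => t * c k) P = P) (t : ℂ) :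
    T (fun k => t * c k) P = P := by
  classical
  set Φ : MvPolynomial ℕ ℂ →ₐ[ℂ] MvPolynomial ℕ (Polynomial ℂ) :=
    aeval (fun k => X k + C (Polynomial.C (c k) * Polynomial.X)) with hΦ
  set ι : MvPolynomial ℕ ℂ →ₐ[ℂ] MvPolynomial ℕ (Polynomial ℂ) :=
    mapAlgHom (Algebra.ofId ℂ (Polynomial ℂ)) with hι
  have hmap : ∀ (f : Polynomial ℂ →ₐ[ℂ] ℂ) (p : MvPolynomial ℕ (Polynomial ℂ)),
      mapAlgHom (σ := ℕ) f p = map (f : Polynomial ℂ →+* ℂ) p := fun f p => rfl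
  have hmap' : ∀ (f : ℂ →ₐ[ℂ] Polynomial ℂ) (p : MvPolynomial ℕ ℂ),
      mapAlgHom (σ := ℕ) f p = map (f : ℂ →+* Polynomial ℂ) p := fun f p => rfl
  have hEΦ : ∀ s : ℂ, (mapAlgHom (Polynomial.aeval s : Polynomial ℂ →ₐ[ℂ] ℂ)).comp Φ
      = T (fun k => s * c k) := by
    intro s
    apply algHom_ext
    intro k
    simp only [AlgHom.comp_apply, hΦ, aeval_X, hmap, map_add, map_X, map_C, T,
      AlgHom.coe_toRingHom, map_mul, Polynomial.aeval_X, Polynomial.aeval_C,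
      Algebra.algebraMap_self, RingHom.id_apply]
    ring
  have hEι : ∀ s : ℂ, ((mapAlgHom (Polynomial.aeval s : Polynomial ℂ →ₐ[ℂ] ℂ)).comp ι)
      = AlgHom.id ℂ _ := by
    intro s
    apply algHom_ext
    intro k
    simp only [AlgHom.comp_apply, hι, hmap, hmap', map_X, AlgHom.coe_id, id_eq]
  have hQ : Φ P - ι P = 0 := by
    apply MvPolynomial.ext
    intro m
    rw [coeff_zero]
    apply Polynomial.eq_zero_of_infinite_isRoot
    apply hS.mono
    intro s hs
    have h0 : (mapAlgHom (Polynomial.aeval s : Polynomial ℂ →ₐ[ℂ] ℂ)) (Φ P - ι P) = 0 := by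
      rw [map_sub]
      have e1 : (mapAlgHom (Polynomial.aeval s : Polynomial ℂ →ₐ[ℂ] ℂ)) (Φ P)
          = T (fun k => s * c k) P := AlgHom.congr_fun (hEΦ s) P
      have e2 : (mapAlgHom (Polynomial.aeval s : Polynomial ℂ →ₐ[ℂ] ℂ)) (ι P) = P :=
        AlgHom.congr_fun (hEι s) P
      rw [e1, e2, h s hs, sub_self]
    have : Polynomial.aeval s (coeff m (Φ P - ι P)) = 0 := by
      rw [hmap] at h0
      have := congrArg (coeff m) h0
      rwa [coeff_map, coeff_zero] at this
    simpa [Polynomial.coe_aeval_eq_eval] using this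
  have hΦι : Φ P = ι P := sub_eq_zero.mp hQ
  calc T (fun k => t * c k) P
      = (mapAlgHom (Polynomial.aeval t : Polynomial ℂ →ₐ[ℂ] ℂ)) (Φ P) :=
        (AlgHom.congr_fun (hEΦ t) P).symm
    _ = (mapAlgHom (Polynomial.aeval t : Polynomial ℂ →ₐ[ℂ] ℂ)) (ι P) := by rw [hΦι]
    _ = P := AlgHom.congr_fun (hEι t) P

/-- The invariance group of `P`, as a submodule of translation vectors. -/
noncomputable def G (P : MvPolynomial ℕ ℂ) : Submodule ℂ (ℕ → ℂ) where
  carrier := {c | T c P = P}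
  zero_mem' := by
    show T 0 P = P
    rw [T_zero]; rfl
  add_mem' := by
    intro c c' hc hc'
    show T (c + c') P = P
    rw [T_add_apply, hc', hc]
  smul_mem' := by
    intro t c hc
    have hn : ∀ n : ℕ, T (fun k => (n : ℂ) * c k) P = P := by
      intro n
      induction n with
      | zero =>
        have : (fun k => ((0 : ℕ) : ℂ) * c k) = (0 : ℕ → ℂ) := by funext k; simp
        rw [this, T_zero]; rfl
      | succ n ih =>
        have : (fun k => ((n + 1 : ℕ) : ℂ) * c k) = c + fun k => (n : ℂ) * c k := by
          funext k; simp only [Pi.add_apply]; push_cast; ring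
        rw [this, T_add_apply, ih, hc]
    have hinf : (Set.range ((↑·) : ℕ → ℂ)).Infinite :=
      Set.infinite_range_of_injective Nat.cast_injective
    have := T_smul hinf (fun s hs => by
      obtain ⟨n, rfl⟩ := hs
      exact hn n) t
    show T (t • c) P = P
    exact this

lemma mem_G {P : MvPolynomial ℕ ℂ} {c : ℕ → ℂ} : c ∈ G P ↔ T c P = P := Iff.rfl

lemma aeval_eq_eval (x : ℕ → ℂ) (p : MvPolynomial ℕ ℂ) : aeval x p = eval x p := by
  rw [aeval_def, Algebra.algebraMap_self]
  rfl

lemma eval_aeval (x : ℕ → ℂ) (f : ℕ → MvPolynomial ℕ ℂ) (p : MvPolynomial ℕ ℂ) :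
    eval x (aeval f p) = eval (fun k => eval x (f k)) p := by
  rw [← aeval_eq_eval x (aeval f p)]
  have := AlgHom.congr_fun
    (comp_aeval (f := f) (φ := (aeval x : MvPolynomial ℕ ℂ →ₐ[ℂ] ℂ))) p
  rw [AlgHom.comp_apply] at this
  rw [this]
  simp only [aeval_eq_eval]

end InvAux

/-- The subalgebra of symmetric functions invariant under all `α_y` (`y > 0`)
is generated by the odd power sums `p_{2k+1}` (i.e. the variables `X (2k)`). -/
theorem invariant_algebra_generated_by_odd_power_sums :
    {P : MvPolynomial ℕ ℂ | ∀ y : ℝ, 0 < y → alphaSubst y P = P}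
      = ↑(Algebra.adjoin ℂ (Set.range fun k : ℕ => (X (2 * k) : MvPolynomial ℕ ℂ))) := by
  classical
  ext P
  simp only [Set.mem_setOf_eq, SetLike.mem_coe]
  constructor
  · intro h
    -- the hard direction
    set M : ℕ := P.vars.sup id + 1 with hMdef
    have hvars : ∀ k ∈ P.vars, k < 2 * M := by
      intro k hk
      have : k ≤ P.vars.sup id := Finset.le_sup (f := id) hk
      omega
    -- the truncated shift vectors
    set w : Fin M → (ℕ → ℂ) := fun a k =>
      if Odd k ∧ k < 2 * M then 2 * ((a : ℕ) + 1 : ℂ) ^ (k + 1) else 0 with hwdef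
    have hw : ∀ a : Fin M, w a ∈ InvAux.G P := by
      intro a
      rw [InvAux.mem_G]
      have hy : (0 : ℝ) < ((a : ℕ) : ℝ) + 1 := by positivity
      have hinv := h (((a : ℕ) : ℝ) + 1) hy
      have hTy : InvAux.T (fun k => ((((a : ℕ) : ℝ) + 1 : ℝ) : ℂ) ^ (k + 1)
          + (-((((a : ℕ) : ℝ) + 1 : ℝ) : ℂ)) ^ (k + 1)) P = P := hinv
      refine (InvAux.T_congr ?_).trans hTy
      intro k hk
      have hk2 := hvars k hk
      rcases Nat.even_or_odd k with he | ho
      · have hodd : Odd (k + 1) := Even.add_one he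
        have : ¬ (Odd k ∧ k < 2 * M) := by
          rintro ⟨h1, -⟩; exact (Nat.not_odd_iff_even.mpr he) h1
        rw [hwdef]
        simp only [this, if_false, hodd.neg_pow]
        ring
      · have heven : Even (k + 1) := Odd.add_one ho
        rw [hwdef]
        simp only [ho, hk2, and_self, if_true, heven.neg_pow]
        push_cast
        ring
    -- the matrix
    set u : Fin M → ℂ := fun a => ((a : ℕ) + 1 : ℂ) ^ 2 with hudef
    set A : Matrix (Fin M) (Fin M) ℂ :=
      Matrix.of fun a j => (2 * ((a : ℕ) + 1 : ℂ) ^ 2) * (Matrix.vandermonde u) a j with hAdef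
    have hA : ∀ (a j : Fin M), A a j = w a (2 * (j : ℕ) + 1) := by
      intro a j
      have h1 : Odd (2 * (j : ℕ) + 1) ∧ 2 * (j : ℕ) + 1 < 2 * M := by
        constructor
        · exact odd_two_mul_add_one _
        · have := j.is_lt; omega
      simp only [hwdef, hAdef, hudef, Matrix.of_apply, Matrix.vandermonde_apply]
      rw [if_pos h1, ← pow_mul]
      ring_nf
    have hu_inj : Function.Injective u := by
      intro a b hab
      rw [hudef] at hab
      have : ((((a : ℕ) + 1) ^ 2 : ℕ) : ℂ) = ((((b : ℕ) + 1) ^ 2 : ℕ) : ℂ) := by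
        push_cast; exact hab
      have h2 : (((a : ℕ) + 1) ^ 2 : ℕ) = (((b : ℕ) + 1) ^ 2 : ℕ) := Nat.cast_inj.mp this
      have h3 : (a : ℕ) + 1 = (b : ℕ) + 1 :=
        Nat.pow_left_injective (by norm_num) h2
      exact Fin.ext (by omega)
    have hdet : A.det ≠ 0 := by
      rw [hAdef]
      rw [Matrix.det_mul_column]
      apply mul_ne_zero
      · apply Finset.prod_ne_zero_iff.2
        intro a _
        apply mul_ne_zero two_ne_zero
        apply pow_ne_zero
        intro h0
        have : (((a : ℕ) + 1 : ℕ) : ℂ) = 0 := by push_cast; exact h0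
        exact Nat.cast_ne_zero.2 (Nat.succ_ne_zero _) this
      · exact Matrix.det_vandermonde_ne_zero_iff.mpr hu_inj
    have hinvA : A⁻¹ * A = 1 := Matrix.nonsing_inv_mul A (isUnit_iff_ne_zero.2 hdet)
    -- the standard basis vectors on odd coordinates lie in G
    have he : ∀ j : Fin M,
        (fun k => if k = 2 * (j : ℕ) + 1 then (1 : ℂ) else 0) ∈ InvAux.G P := by
      intro j
      have key : (fun k => if k = 2 * (j : ℕ) + 1 then (1 : ℂ) else 0)
          = ∑ a : Fin M, A⁻¹ j a • w a := by
        funext k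
        rw [Finset.sum_apply]
        simp only [Pi.smul_apply, smul_eq_mul]
        by_cases hk : Odd k ∧ k < 2 * M
        · have hkodd := hk.1
          rw [Nat.odd_iff] at hkodd
          set t : ℕ := k / 2 with htdef
          have hkt : k = 2 * t + 1 := by omega
          have htM : t < M := by omega
          have hwA : ∀ a : Fin M, w a k = A a ⟨t, htM⟩ := by
            intro a
            rw [hA]
            congr 1
          rw [Finset.sum_congr rfl (fun a _ => by rw [hwA a])]
          have := congrFun (congrFun hinvA j) ⟨t, htM⟩
          rw [Matrix.mul_apply] at this
          rw [this, Matrix.one_apply]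
          have hiff : (k = 2 * (j : ℕ) + 1) ↔ (j = (⟨t, htM⟩ : Fin M)) := by
            rw [hkt]
            constructor
            · intro hh
              apply Fin.ext
              simp only [Fin.val_mk]
              omega
            · intro hh
              rw [hh]
          by_cases hcase : j = (⟨t, htM⟩ : Fin M)
          · rw [if_pos (hiff.mpr hcase), if_pos hcase]
          · rw [if_neg (fun hh => hcase (hiff.mp hh)), if_neg hcase]
        · have hzero : ∀ a : Fin M, w a k = 0 := fun a => by
            rw [hwdef]; exact if_neg hk
          rw [Finset.sum_congr rfl (fun a _ => by rw [hzero a, mul_zero]),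
            Finset.sum_const_zero]
          rw [if_neg]
          intro hh
          apply hk
          constructor
          · rw [hh]; exact odd_two_mul_add_one _
          · have := j.is_lt; omega
      rw [key]
      exact Submodule.sum_mem _ fun a _ => Submodule.smul_mem _ _ (hw a)
    -- P equals its even part
    set g : ℕ → MvPolynomial ℕ ℂ := fun k => if Even k then X k else 0 with hgdef
    have hPg : P = aeval g P := by
      apply MvPolynomial.funext
      intro x
      rw [InvAux.eval_aeval]
      set x' : ℕ → ℂ := fun k => if Even k then x k else 0 with hx'def
      have hgx : (fun k => eval x (g k)) = x' := by
        funext k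
        rw [hgdef, hx'def]
        by_cases hk : Even k <;> simp [hk]
      rw [hgx]
      -- show eval x P = eval x' P using invariance
      set c : ℕ → ℂ := fun k => if Even k then 0 else -(x k) with hcdef
      have hc : c ∈ InvAux.G P := by
        have hsum : (∑ j : Fin M, (-(x (2 * (j : ℕ) + 1))) •
            (fun k => if k = 2 * (j : ℕ) + 1 then (1 : ℂ) else 0)) ∈ InvAux.G P :=
          Submodule.sum_mem _ fun j _ => Submodule.smul_mem _ _ (he j)
        rw [InvAux.mem_G] at hsum ⊢
        refine (InvAux.T_congr ?_).trans hsum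
        intro k hk
        have hk2 := hvars k hk
        rw [Finset.sum_apply]
        simp only [Pi.smul_apply, smul_eq_mul]
        rcases Nat.even_or_odd k with hke | hko
        · rw [hcdef]
          simp only [hke, if_true]
          rw [Finset.sum_congr rfl (fun j _ => ?_), Finset.sum_const_zero]
          rw [if_neg, mul_zero]
          intro hh
          rw [hh] at hke
          exact (Nat.not_odd_iff_even.mpr hke) (odd_two_mul_add_one _)
        · have hkodd := hko
          rw [Nat.odd_iff] at hkodd
          set t : ℕ := k / 2 with htdef
          have hkt : k = 2 * t + 1 := by omega
          have htM : t < M := by omega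
          have hterm : ∀ j : Fin M, (-(x (2 * (j : ℕ) + 1))) *
              (if k = 2 * (j : ℕ) + 1 then (1 : ℂ) else 0)
              = if j = (⟨t, htM⟩ : Fin M) then -(x k) else 0 := by
            intro j
            by_cases hj : j = (⟨t, htM⟩ : Fin M)
            · subst hj
              rw [if_pos rfl, if_pos (by simp only [Fin.val_mk]; omega), mul_one, hkt]
            · rw [if_neg hj, if_neg, mul_zero]
              intro hh
              apply hj
              apply Fin.ext
              simp only [Fin.val_mk]
              omega
          rw [Finset.sum_congr rfl (fun j _ => hterm j)]
          rw [Finset.sum_ite_eq' Finset.univ (⟨t, htM⟩ : Fin M) (fun _ => -(x k))]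
          rw [if_pos (Finset.mem_univ _)]
          rw [hcdef]
          simp only [Nat.even_iff, Nat.odd_iff.mp hko]
          norm_num
      rw [InvAux.mem_G] at hc
      have : eval x (InvAux.T c P) = eval x' P := by
        rw [InvAux.T, InvAux.eval_aeval]
        have harg : (fun k => eval x ((X k : MvPolynomial ℕ ℂ) + C (c k))) = x' := by
          funext k
          simp only [map_add, eval_X, eval_C, hcdef, hx'def]
          by_cases hk : Even k <;> simp [hk]
        rw [harg]
      rw [← this, hc]
    -- conclude membership
    rw [hPg]
    have : ∀ Q : MvPolynomial ℕ ℂ, aeval g Q ∈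
        Algebra.adjoin ℂ (Set.range fun k : ℕ => (X (2 * k) : MvPolynomial ℕ ℂ)) := by
      intro Q
      induction Q using MvPolynomial.induction_on with
      | C a =>
        rw [aeval_C]
        exact Subalgebra.algebraMap_mem _ a
      | add p q hp hq =>
        rw [map_add]
        exact Subalgebra.add_mem _ hp hq
      | mul_X p n hp =>
        rw [map_mul, aeval_X]
        apply Subalgebra.mul_mem _ hp
        by_cases hn : Even n
        · simp only [hgdef, hn, if_true]
          apply Algebra.subset_adjoin
          obtain ⟨r, hr⟩ := hn
          refine ⟨r, ?_⟩
          show (X (2 * r) : MvPolynomial ℕ ℂ) = X n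
          rw [hr, two_mul]
        · simp only [hgdef, hn, if_false]
          exact Subalgebra.zero_mem _
    exact this P
  · intro h y hy
    induction h using Algebra.adjoin_induction with
    | mem q hq =>
      obtain ⟨k, rfl⟩ := hq
      have hodd : Odd (2 * k + 1) := odd_two_mul_add_one k
      simp [alphaSubst, aeval_X, hodd.neg_pow]
    | algebraMap r => exact (alphaSubst y).commutes r
    | add p q hp hq hip hiq => rw [map_add, hip, hiq]
    | mul p q hp hq hip hiq => rw [map_mul, hip, hiq]
end

section
/- For a symmetric polynomial P in n variables satisfying P(y, -y, x₃, …, xₙ) = P(x₃, …, xₙ) for all y (viewed as reduction from a symmetric function invariant under the pair-insertion substitutions), P is a polynomial in the odd power sums p₁, p₃, p₅, … restricted to n variables. -/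
open MvPolynomial

section Helpers
open Finset

private lemma eval_psum {d : ℕ} (x : Fin d → ℂ) (k : ℕ) :
    MvPolynomial.eval x (psum (Fin d) ℂ k) = ∑ i, x i ^ k := by
  simp [psum]

private lemma realize_esymm (d : ℕ) (e : ℕ → ℂ) :
    ∃ x : Fin d → ℂ, ∀ k, 1 ≤ k → k ≤ d → MvPolynomial.eval x (esymm (Fin d) ℂ k) = e k := by
  classical
  rcases Nat.eq_zero_or_pos d with rfl | hd
  · exact ⟨fun i => 0, fun k h1 h2 => by omega⟩
  set r : Polynomial ℂ := ∑ k ∈ Finset.range d, Polynomial.C ((-1) ^ (k+1) * e (k+1)) *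
      Polynomial.X ^ (d - (k+1)) with hr
  have hrdeg : r.degree < (d : ℕ) := by
    apply lt_of_le_of_lt (Polynomial.degree_sum_le _ _)
    rw [Finset.sup_lt_iff (by exact_mod_cast WithBot.bot_lt_coe (d:ℕ))]
    intro k hk
    refine lt_of_le_of_lt (Polynomial.degree_C_mul_X_pow_le _ _) ?_
    rw [Finset.mem_range] at hk
    exact_mod_cast (by omega : d - (k+1) < d)
  set q : Polynomial ℂ := Polynomial.X ^ d + r with hq
  have hmon : q.Monic := Polynomial.monic_X_pow_add hrdeg
  have hdeg : q.degree = (d : ℕ) := by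
    rw [hq, Polynomial.degree_add_eq_left_of_degree_lt (by simpa using hrdeg),
      Polynomial.degree_X_pow]
  have hnd : q.natDegree = d := Polynomial.natDegree_eq_of_degree_eq_some hdeg
  have hsplit : q.Splits := IsAlgClosed.splits q
  have hcard : Multiset.card q.roots = d := by
    rw [Polynomial.splits_iff_card_roots.mp hsplit, hnd]
  -- coefficients of q
  have hcoeff : ∀ j, 1 ≤ j → j ≤ d → q.coeff (d - j) = (-1)^j * e j := by
    intro j h1 h2
    rw [hq, Polynomial.coeff_add, Polynomial.coeff_X_pow, if_neg (by omega), hr,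
      Polynomial.finset_sum_coeff]
    rw [Finset.sum_eq_single (j - 1)]
    · rw [Polynomial.coeff_C_mul, Polynomial.coeff_X_pow, if_pos (by omega)]
      have : j - 1 + 1 = j := by omega
      rw [this, mul_one, zero_add]
    · intro k hk hne
      rw [Polynomial.coeff_C_mul, Polynomial.coeff_X_pow, if_neg (by simp at hk; omega), mul_zero]
    · intro h; exact absurd (Finset.mem_range.mpr (by omega)) h
  -- roots esymm
  have hesymm : ∀ j, 1 ≤ j → j ≤ d → q.roots.esymm j = e j := by
    intro j h1 h2
    have := Polynomial.coeff_eq_esymm_roots_of_splits hsplit (k := d - j) (by omega)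
    rw [hmon.leadingCoeff, hnd, one_mul] at this
    have hdj : d - (d - j) = j := by omega
    rw [hdj] at this
    rw [hcoeff j h1 h2] at this
    have hne : ((-1 : ℂ))^j ≠ 0 := by
      apply pow_ne_zero; norm_num
    exact (mul_left_cancel₀ hne this).symm
  -- construct x from roots
  set L := q.roots.toList with hL
  have hLlen : L.length = d := by rw [hL, Multiset.length_toList, hcard]
  refine ⟨fun i => L.getD i 0, fun k h1 h2 => ?_⟩
  have hxmap : Multiset.map (fun i : Fin d => L.getD (i : ℕ) 0) Finset.univ.val = q.roots := by
    have h1 : (Multiset.map (fun i : Fin d => L.getD (i : ℕ) 0) Finset.univ.val)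
        = ↑(List.ofFn (fun i : Fin d => L.getD (i : ℕ) 0)) := by
      rw [List.ofFn_eq_map]
      simp [Finset.univ, Fintype.elems, List.finRange]
    rw [h1]
    have h2 : List.ofFn (fun i : Fin d => L.getD (i : ℕ) 0) = L := by
      apply List.ext_getElem
      · simp [hLlen]
      · intro i hi1 hi2
        simp [List.getD_eq_getElem?_getD, List.getElem?_eq_getElem hi2]
    rw [h2, hL]
    exact Multiset.coe_toList q.roots
  have : MvPolynomial.eval (fun i : Fin d => L.getD (i:ℕ) 0) (esymm (Fin d) ℂ k)
      = (Multiset.map (fun i : Fin d => L.getD (i:ℕ) 0) Finset.univ.val).esymm k := by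
    have := aeval_esymm_eq_multiset_esymm (Fin d) ℂ k (fun i : Fin d => L.getD (i:ℕ) 0)
    rwa [aeval_def, eval₂_eq_eval_map, Algebra.algebraMap_self, map_id] at this
  rw [this, hxmap, hesymm k h1 h2]

private lemma eval_psum' {d : ℕ} (x : Fin d → ℂ) (k : ℕ) :
    MvPolynomial.eval x (psum (Fin d) ℂ k) = ∑ i, x i ^ k := by
  simp [psum]

private lemma solve_newton (d : ℕ) (b : ℕ → ℂ) :
    ∃ e : ℕ → ℂ, ∀ k, 1 ≤ k → k ≤ d →
      b k = (-1 : ℂ)^(k+1) * k * e k -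
        ∑ a ∈ Finset.filter (fun a => a.1 ∈ Set.Ioo 0 k) (Finset.HasAntidiagonal.antidiagonal k),
          (-1 : ℂ)^a.1 * e a.1 * b a.2 := by
  classical
  induction d with
  | zero => exact ⟨fun _ => 0, fun k h1 h2 => by omega⟩
  | succ d ih =>
    obtain ⟨e, he⟩ := ih
    set S : ℂ := ∑ a ∈ Finset.filter (fun a => a.1 ∈ Set.Ioo 0 (d+1)) (Finset.HasAntidiagonal.antidiagonal (d+1)),
          (-1 : ℂ)^a.1 * e a.1 * b a.2 with hS
    set v : ℂ := (-1 : ℂ)^(d+2) / (d+1) * (b (d+1) + S) with hv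
    refine ⟨Function.update e (d+1) v, fun k h1 h2 => ?_⟩
    have hsum : ∀ m, m ≤ d + 1 →
        (∑ a ∈ Finset.filter (fun a => a.1 ∈ Set.Ioo 0 m) (Finset.HasAntidiagonal.antidiagonal m),
          (-1 : ℂ)^a.1 * (Function.update e (d+1) v) a.1 * b a.2)
        = ∑ a ∈ Finset.filter (fun a => a.1 ∈ Set.Ioo 0 m) (Finset.HasAntidiagonal.antidiagonal m),
          (-1 : ℂ)^a.1 * e a.1 * b a.2 := by
      intro m hm
      apply Finset.sum_congr rfl
      intro a ha
      simp only [Finset.mem_filter, Finset.mem_antidiagonal, Set.mem_Ioo] at ha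
      rw [Function.update_of_ne (by omega)]
    rcases Nat.lt_or_ge k (d+1) with hlt | hge
    · rw [hsum k (by omega), Function.update_of_ne (by omega)]
      exact he k h1 (by omega)
    · have hk : k = d + 1 := by omega
      subst hk
      rw [hsum (d+1) le_rfl, Function.update_self, ← hS, hv]
      have h1 : ((d:ℂ) + 1) ≠ 0 := by
        exact Nat.cast_add_one_ne_zero d
      have h2 : ((d+1 : ℕ) : ℂ) = (d : ℂ) + 1 := by push_cast; ring
      rw [h2]
      have h3 : (-1 : ℂ)^(d+1+1) * ((d:ℂ)+1) * ((-1 : ℂ)^(d+2) / ((d:ℂ)+1) * (b (d+1) + S))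
          = (-1 : ℂ)^(d+2) * (-1 : ℂ)^(d+2) * (b (d+1) + S) := by
        field_simp
      rw [h3, ← pow_add]
      have h4 : (-1 : ℂ)^(d+2+(d+2)) = 1 := by
        apply Even.neg_one_pow
        exact ⟨d+2, by ring⟩
      rw [h4]
      ring

private lemma realize_psum (d : ℕ) (b : ℕ → ℂ) :
    ∃ x : Fin d → ℂ, ∀ k, 1 ≤ k → k ≤ d → (∑ i, x i ^ k) = b k := by
  obtain ⟨e, he⟩ := solve_newton d b
  obtain ⟨x, hx⟩ := realize_esymm d e
  refine ⟨x, ?_⟩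
  intro k
  induction k using Nat.strong_induction_on with
  | _ k IH =>
    intro h1 h2
    have hN := congrArg (MvPolynomial.eval x) (psum_eq_mul_esymm_sub_sum (Fin d) ℂ k (by omega))
    rw [eval_psum'] at hN
    rw [map_sub, map_mul, map_mul, map_pow, map_neg, map_one, map_natCast, map_sum] at hN
    rw [hx k h1 h2] at hN
    have hsum : (∑ a ∈ Finset.filter (fun a => a.1 ∈ Set.Ioo 0 k) (Finset.HasAntidiagonal.antidiagonal k),
          MvPolynomial.eval x ((-1)^a.1 * esymm (Fin d) ℂ a.1 * psum (Fin d) ℂ a.2))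
        = ∑ a ∈ Finset.filter (fun a => a.1 ∈ Set.Ioo 0 k) (Finset.HasAntidiagonal.antidiagonal k),
          (-1 : ℂ)^a.1 * e a.1 * b a.2 := by
      apply Finset.sum_congr rfl
      intro a ha
      simp only [Finset.mem_filter, Finset.HasAntidiagonal.mem_antidiagonal, Set.mem_Ioo] at ha
      rw [map_mul, map_mul, map_pow, map_neg, map_one, eval_psum',
        hx a.1 (by omega) (by omega), IH a.2 (by omega) (by omega) (by omega)]
    rw [hsum] at hN
    rw [hN, ← he k h1 h2]

private lemma realize_psum_pad (d K : ℕ) (h : d ≤ K) (b : ℕ → ℂ) :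
    ∃ x : Fin K → ℂ, ∀ k, 1 ≤ k → k ≤ d → (∑ i, x i ^ k) = b k := by
  classical
  obtain ⟨x₀, hx₀⟩ := realize_psum d b
  set g : ℕ → ℂ := fun j => if h' : j < d then x₀ ⟨j, h'⟩ else 0 with hg
  refine ⟨fun i => g i, fun k h1 h2 => ?_⟩
  have e1 : (∑ i : Fin K, g (i : ℕ) ^ k) = ∑ j ∈ Finset.range K, g j ^ k :=
    Fin.sum_univ_eq_sum_range (fun j => g j ^ k) K
  have e2 : (∑ j ∈ Finset.range K, g j ^ k) = ∑ j ∈ Finset.range d, g j ^ k := by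
    rw [← Finset.sum_range_add_sum_Ico _ h]
    have : (∑ j ∈ Finset.Ico d K, g j ^ k) = 0 := by
      apply Finset.sum_eq_zero
      intro j hj
      simp only [Finset.mem_Ico] at hj
      rw [hg]
      simp only
      rw [dif_neg (by omega)]
      exact zero_pow (by omega)
    rw [this, add_zero]
  have e3 : (∑ j ∈ Finset.range d, g j ^ k) = ∑ i : Fin d, x₀ i ^ k := by
    rw [← Fin.sum_univ_eq_sum_range (fun j => g j ^ k) d]
    apply Finset.sum_congr rfl
    intro i _
    rw [hg]
    simp only
    rw [dif_pos i.isLt]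
  rw [e1, e2, e3, hx₀ k h1 h2]

universe u v w

private lemma eval_aeval' {σ : Type u} {τ : Type v} (g : σ → MvPolynomial τ ℂ) (a : τ → ℂ)
    (F : MvPolynomial σ ℂ) :
    MvPolynomial.eval a (MvPolynomial.aeval g F)
      = MvPolynomial.eval (fun j => MvPolynomial.eval a (g j)) F := by
  induction F using MvPolynomial.induction_on with
  | C c => simp
  | add p q hp hq => rw [map_add, map_add, map_add, hp, hq]
  | mul_X p i hp => rw [map_mul, map_mul, map_mul, MvPolynomial.aeval_X, MvPolynomial.eval_X, hp]

private lemma aeval_aeval' {σ : Type u} {τ : Type v} {υ : Type w}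
    (g : σ → MvPolynomial τ ℂ) (h : τ → MvPolynomial υ ℂ) (F : MvPolynomial σ ℂ) :
    MvPolynomial.aeval h (MvPolynomial.aeval g F)
      = MvPolynomial.aeval (fun j => MvPolynomial.aeval h (g j)) F := by
  induction F using MvPolynomial.induction_on with
  | C c => simp
  | add p q hp hq => rw [map_add, map_add, map_add, hp, hq]
  | mul_X p i hp => rw [map_mul, map_mul, map_mul, MvPolynomial.aeval_X, MvPolynomial.aeval_X, hp]

private lemma eval_congr_vars {σ : Type u} {F : MvPolynomial σ ℂ} {t t' : σ → ℂ}
    (h : ∀ j ∈ F.vars, t j = t' j) :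
    MvPolynomial.eval t F = MvPolynomial.eval t' F := by
  rw [MvPolynomial.eval_eq, MvPolynomial.eval_eq]
  apply Finset.sum_congr rfl
  intro m hm
  congr 1
  apply Finset.prod_congr rfl
  intro j hj
  rw [h j ((MvPolynomial.mem_vars j).mpr ⟨m, hm, hj⟩)]

private lemma eval_smul_isHomogeneous {σ : Type u} {q : MvPolynomial σ ℂ} {D : ℕ}
    (hq : q.IsHomogeneous D) (t : ℂ) (u : σ → ℂ) :
    MvPolynomial.eval (fun j => t * u j) q = t ^ D * MvPolynomial.eval u q := by
  rw [MvPolynomial.eval_eq, MvPolynomial.eval_eq, Finset.mul_sum]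
  apply Finset.sum_congr rfl
  intro m hm
  have hdeg : ∑ j ∈ m.support, m j = D := by
    have h1 := hq (MvPolynomial.mem_support_iff.mp hm)
    rw [Finsupp.weight_apply] at h1
    simpa [Finsupp.sum] using h1
  calc MvPolynomial.coeff m q * ∏ j ∈ m.support, (t * u j) ^ m j
      = MvPolynomial.coeff m q * ((∏ j ∈ m.support, t ^ m j) * ∏ j ∈ m.support, u j ^ m j) := by
        rw [← Finset.prod_mul_distrib]
        congr 1
        exact Finset.prod_congr rfl (fun j _ => mul_pow _ _ _)
    _ = t ^ D * (MvPolynomial.coeff m q * ∏ j ∈ m.support, u j ^ m j) := by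
        rw [Finset.prod_pow_eq_pow_sum, hdeg]; ring

private lemma aeval_isWeightedHomogeneous {σ : Type u} {τ : Type v}
    (g : σ → MvPolynomial τ ℂ) (w : σ → ℕ)
    (hg : ∀ j, (g j).IsHomogeneous (w j)) {F : MvPolynomial σ ℂ} {D : ℕ}
    (hF : IsWeightedHomogeneous w F D) :
    (MvPolynomial.aeval g F).IsHomogeneous D := by
  have hrw : MvPolynomial.aeval g F
      = ∑ m ∈ F.support, MvPolynomial.aeval g (monomial m (MvPolynomial.coeff m F)) := by
    rw [← map_sum, ← MvPolynomial.as_sum]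
  rw [hrw]
  apply MvPolynomial.IsHomogeneous.sum
  intro m hm
  rw [MvPolynomial.aeval_monomial]
  have h2 : (∏ i ∈ m.support, g i ^ m i).IsHomogeneous (∑ i ∈ m.support, w i * m i) :=
    MvPolynomial.IsHomogeneous.prod _ _ _ (fun i _ => (hg i).pow (m i))
  have hdeg : (∑ i ∈ m.support, w i * m i) = D := by
    have h1 := hF (MvPolynomial.mem_support_iff.mp hm)
    rw [Finsupp.weight_apply] at h1
    rw [← h1]
    simp only [Finsupp.sum, smul_eq_mul]
    exact Finset.sum_congr rfl (fun i _ => mul_comm _ _)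
  have h3 : (Finsupp.prod m fun i k => g i ^ k) = ∏ i ∈ m.support, g i ^ m i := rfl
  rw [h3]
  have := (MvPolynomial.isHomogeneous_C τ
    ((algebraMap ℂ ℂ) (MvPolynomial.coeff m F))).mul (hdeg ▸ h2)
  simpa [MvPolynomial.algebraMap_eq] using this

private lemma aeval_isHomogeneous {σ : Type u} {τ : Type v}
    (g : σ → MvPolynomial τ ℂ) (hg : ∀ j, (g j).IsHomogeneous 1)
    {F : MvPolynomial σ ℂ} {D : ℕ} (hF : F.IsHomogeneous D) :
    (MvPolynomial.aeval g F).IsHomogeneous D :=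
  aeval_isWeightedHomogeneous g (fun _ => 1) hg hF

private lemma homComp_aeval {σ : Type u} {τ : Type v}
    (g : σ → MvPolynomial τ ℂ) (hg : ∀ j, (g j).IsHomogeneous 1)
    (Q : MvPolynomial σ ℂ) (d : ℕ) :
    homogeneousComponent d (MvPolynomial.aeval g Q)
      = MvPolynomial.aeval g (homogeneousComponent d Q) := by
  have expand : MvPolynomial.aeval g Q
      = ∑ i ∈ Finset.range (Q.totalDegree + 1),
          MvPolynomial.aeval g (homogeneousComponent i Q) := by
    rw [← map_sum, MvPolynomial.sum_homogeneousComponent]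
  rw [expand, map_sum]
  have hterm : ∀ i, homogeneousComponent d (MvPolynomial.aeval g (homogeneousComponent i Q))
      = if d = i then MvPolynomial.aeval g (homogeneousComponent i Q) else 0 := by
    intro i
    exact MvPolynomial.homogeneousComponent_of_mem
      (aeval_isHomogeneous g hg (MvPolynomial.homogeneousComponent_isHomogeneous i Q))
  rw [Finset.sum_congr rfl (fun i _ => hterm i)]
  rw [Finset.sum_ite_eq (Finset.range (Q.totalDegree + 1)) d
    (fun i => MvPolynomial.aeval g (homogeneousComponent i Q))]
  by_cases hd : d ∈ Finset.range (Q.totalDegree + 1)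
  · rw [if_pos hd]
  · rw [if_neg hd]
    rw [MvPolynomial.homogeneousComponent_eq_zero _ _ (by simp at hd; omega), map_zero]

private lemma psum_homog (M k : ℕ) : (psum (Fin M) ℂ k).IsHomogeneous k := by
  apply MvPolynomial.IsHomogeneous.sum
  intro i _
  simpa using (MvPolynomial.isHomogeneous_X ℂ i).pow k

private lemma sum_pow_cons {m : ℕ} (z : ℂ) (v : Fin m → ℂ) (e : ℕ) :
    (∑ i : Fin (m+1), (Fin.cons z v) i ^ e) = z ^ e + ∑ i : Fin m, v i ^ e := by
  have h : (fun i : Fin (m+1) => (Fin.cons z v) i ^ e)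
      = Fin.cons (z^e) (fun i : Fin m => v i ^ e) := by
    funext i
    exact congrFun (Fin.comp_cons (· ^ e) z v) i
  calc (∑ i : Fin (m+1), (Fin.cons z v) i ^ e)
      = ∑ i : Fin (m+1), (Fin.cons (z^e) (fun i : Fin m => v i ^ e)) i := by rw [h]
    _ = z ^ e + ∑ i : Fin m, v i ^ e := Fin.sum_cons _ _

private lemma esymm_mem_adjoin (M : ℕ) (k : ℕ) :
    esymm (Fin M) ℂ k ∈ Algebra.adjoin ℂ
      (Set.range (fun j : Fin M => psum (Fin M) ℂ ((j:ℕ)+1))) := by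
  induction k using Nat.strong_induction_on with
  | _ k IH =>
    rcases Nat.eq_zero_or_pos k with rfl | hk
    · rw [MvPolynomial.esymm_zero]
      exact Subalgebra.one_mem _
    rcases le_or_gt k M with hkM | hkM
    · have hstep : esymm (Fin M) ℂ k
          = C ((k:ℂ))⁻¹ * ((k : MvPolynomial (Fin M) ℂ) * esymm (Fin M) ℂ k) := by
        rw [← map_natCast (C : ℂ →+* MvPolynomial (Fin M) ℂ) k, ← mul_assoc, ← map_mul,
          inv_mul_cancel₀ (by exact_mod_cast hk.ne' : (k:ℂ) ≠ 0), map_one, one_mul]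
      rw [hstep, MvPolynomial.mul_esymm_eq_sum]
      refine Subalgebra.mul_mem _ ?_ (Subalgebra.mul_mem _ ?_ (Subalgebra.sum_mem _ ?_))
      · rw [← MvPolynomial.algebraMap_eq]
        exact Subalgebra.algebraMap_mem _ _
      · exact Subalgebra.pow_mem _ (Subalgebra.neg_mem _ (Subalgebra.one_mem _)) _
      · intro a ha
        simp only [Finset.mem_filter, Finset.HasAntidiagonal.mem_antidiagonal] at ha
        refine Subalgebra.mul_mem _ (Subalgebra.mul_mem _ ?_ (IH a.1 ha.2)) ?_
        · exact Subalgebra.pow_mem _ (Subalgebra.neg_mem _ (Subalgebra.one_mem _)) _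
        · have ha2 : 1 ≤ a.2 := by omega
          have ha2M : a.2 - 1 < M := by omega
          apply Algebra.subset_adjoin
          refine ⟨⟨a.2 - 1, ha2M⟩, ?_⟩
          simp only
          congr 1
          omega
    · have hz : esymm (Fin M) ℂ k = 0 := by
        rw [MvPolynomial.esymm]
        rw [Finset.powersetCard_eq_empty.mpr (by simpa using hkM)]
        simp
      rw [hz]
      exact Subalgebra.zero_mem _

private lemma symm_mem_adjoin_psum (M : ℕ) (f : MvPolynomial (Fin M) ℂ) (hf : f.IsSymmetric) :
    f ∈ Algebra.adjoin ℂ (Set.range (fun j : Fin M => psum (Fin M) ℂ ((j:ℕ)+1))) := by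
  obtain ⟨G, hG⟩ := MvPolynomial.esymmAlgHom_fin_surjective (R := ℂ) (n := M) (m := M) le_rfl
    ⟨f, (MvPolynomial.mem_symmetricSubalgebra _).mpr hf⟩
  have hfeq : f = MvPolynomial.aeval (fun i : Fin M => esymm (Fin M) ℂ ((i:ℕ)+1)) G := by
    rw [← MvPolynomial.esymmAlgHom_apply, hG]
  have h1 : f ∈ Algebra.adjoin ℂ (Set.range (fun i : Fin M => esymm (Fin M) ℂ ((i:ℕ)+1))) := by
    rw [hfeq, Algebra.adjoin_range_eq_range_aeval]
    exact ⟨G, rfl⟩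
  refine Algebra.adjoin_le ?_ h1
  rintro q ⟨i, rfl⟩
  exact esymm_mem_adjoin M ((i:ℕ)+1)

private lemma aeval_whc {σ : Type} {τ : Type} (g : σ → MvPolynomial τ ℂ) (w : σ → ℕ)
    (hg : ∀ j, (g j).IsHomogeneous (w j)) (F : MvPolynomial σ ℂ) (D : ℕ) :
    MvPolynomial.aeval g (weightedHomogeneousComponent w D F)
      = homogeneousComponent D (MvPolynomial.aeval g F) := by
  classical
  induction F using MvPolynomial.induction_on' with
  | monomial m c =>
    have hmono : IsWeightedHomogeneous w (monomial m c) (Finsupp.weight w m) :=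
      isWeightedHomogeneous_monomial w m c rfl
    rw [MvPolynomial.weightedHomogeneousComponent_of_mem
        ((MvPolynomial.mem_weightedHomogeneousSubmodule _ _ _ _).mpr hmono),
      MvPolynomial.homogeneousComponent_of_mem
        ((MvPolynomial.mem_homogeneousSubmodule _ _).mpr
          (aeval_isWeightedHomogeneous g w hg hmono))]
    by_cases hDm : D = Finsupp.weight w m
    · rw [if_pos hDm, if_pos hDm]
    · rw [if_neg hDm, if_neg hDm, map_zero]
  | add p q hp hq =>
    simp only [map_add, hp, hq]

private lemma stable_case (K D : ℕ) (hKD : D ≤ K) (f : MvPolynomial (Fin (K+2)) ℂ)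
    (hsym : f.IsSymmetric) (hhom : f.IsHomogeneous D)
    (hf : ∀ (y : ℂ) (x : Fin K → ℂ),
      MvPolynomial.eval (Fin.cons y (Fin.cons (-y) x)) f
        = MvPolynomial.eval (Fin.cons 0 (Fin.cons 0 x)) f) :
    f ∈ Algebra.adjoin ℂ
      {q : MvPolynomial (Fin (K+2)) ℂ | ∃ k : ℕ, q = psum (Fin (K+2)) ℂ (2*k+1)} := by
  classical
  set pp : Fin (K+2) → MvPolynomial (Fin (K+2)) ℂ :=
    fun j => psum (Fin (K+2)) ℂ ((j:ℕ)+1) with hpp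
  have hppj : ∀ j : Fin (K+2), (pp j).IsHomogeneous ((j:ℕ)+1) := fun j => psum_homog _ _
  obtain ⟨F0, hF0⟩ : ∃ F0, f = MvPolynomial.aeval pp F0 := by
    have h := symm_mem_adjoin_psum (K+2) f hsym
    rw [Algebra.adjoin_range_eq_range_aeval] at h
    obtain ⟨F0, h⟩ := h
    exact ⟨F0, h.symm⟩
  set w : Fin (K+2) → ℕ := fun j => (j:ℕ)+1 with hw
  set F := weightedHomogeneousComponent w D F0 with hFdef
  have hwh : IsWeightedHomogeneous w F D :=
    weightedHomogeneousComponent_isWeightedHomogeneous D F0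
  have hfF : f = MvPolynomial.aeval pp F := by
    rw [hFdef, aeval_whc pp w hppj F0 D, ← hF0,
      MvPolynomial.homogeneousComponent_of_mem
        ((MvPolynomial.mem_homogeneousSubmodule _ _).mpr hhom), if_pos rfl]
  -- variables of F are small
  have hvars : ∀ j ∈ F.vars, ((j:ℕ)+1) ≤ D := by
    intro j hj
    obtain ⟨m, hm, hjm⟩ := (MvPolynomial.mem_vars j).mp hj
    have h1 := hwh (MvPolynomial.mem_support_iff.mp hm)
    rw [Finsupp.weight_apply] at h1
    have h2 : m j * w j ≤ D := by
      rw [← h1]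
      simp only [Finsupp.sum, smul_eq_mul]
      exact Finset.single_le_sum (f := fun i => m i * w i) (fun i _ => Nat.zero_le _) hjm
    have hmj : 1 ≤ m j := Nat.one_le_iff_ne_zero.mpr (Finsupp.mem_support_iff.mp hjm)
    calc (j:ℕ)+1 = 1 * w j := (one_mul _).symm
      _ ≤ m j * w j := Nat.mul_le_mul_right _ hmj
      _ ≤ D := h2
  -- the two point families
  set S : (Fin K → ℂ) → Fin (K+2) → ℂ := fun x j => ∑ i, x i ^ ((j:ℕ)+1) with hS
  set wv : ℂ → Fin (K+2) → ℂ := fun y j => y^((j:ℕ)+1) + (-y)^((j:ℕ)+1) with hwv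
  have key0 : ∀ (y : ℂ) (x : Fin K → ℂ),
      MvPolynomial.eval (fun j => S x j + wv y j) F = MvPolynomial.eval (S x) F := by
    intro y x
    have h1 := hf y x
    rw [hfF, eval_aeval', eval_aeval'] at h1
    have e1 : (fun j => MvPolynomial.eval (Fin.cons y (Fin.cons (-y) x)) (pp j))
        = fun j => S x j + wv y j := by
      funext j
      rw [hpp]
      simp only
      rw [eval_psum', sum_pow_cons, sum_pow_cons, hS, hwv]
      simp only
      ring
    have e2 : (fun j => MvPolynomial.eval (Fin.cons 0 (Fin.cons 0 x)) (pp j)) = S x := by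
      funext j
      rw [hpp]
      simp only
      rw [eval_psum', sum_pow_cons, sum_pow_cons, hS]
      simp only
      rw [zero_pow (by omega : (j:ℕ)+1 ≠ 0)]
      ring
    rw [e1, e2] at h1
    exact h1
  -- Claim A
  have claimA : ∀ (y : ℂ) (a : Fin (K+2) → ℂ),
      MvPolynomial.eval (fun j => a j + wv y j) F = MvPolynomial.eval a F := by
    intro y a
    obtain ⟨x, hx⟩ := realize_psum_pad D K hKD
      (fun k => if h : k - 1 < K + 2 then a ⟨k-1, h⟩ else 0)
    have hxa : ∀ j ∈ F.vars, S x j = a j := by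
      intro j hj
      have hjD := hvars j hj
      have h3 := hx ((j:ℕ)+1) (by omega) (by omega)
      rw [hS]
      simp only
      rw [h3, dif_pos (by omega : (j:ℕ)+1-1 < K+2)]
      exact congrArg a (Fin.ext (by show (j:ℕ)+1-1 = (j:ℕ); omega))
    calc MvPolynomial.eval (fun j => a j + wv y j) F
        = MvPolynomial.eval (fun j => S x j + wv y j) F :=
          eval_congr_vars (fun j hj => by rw [hxa j hj])
      _ = MvPolynomial.eval (S x) F := key0 y x
      _ = MvPolynomial.eval a F := eval_congr_vars (fun j hj => hxa j hj)
  -- Claim A iterated over a list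
  have claimList : ∀ (l : List ℂ) (a : Fin (K+2) → ℂ),
      MvPolynomial.eval (fun j => a j + (l.map (fun y => wv y j)).sum) F
        = MvPolynomial.eval a F := by
    intro l
    induction l with
    | nil => intro a; simp
    | cons y l ih =>
      intro a
      have hre : (fun j => a j + ((y :: l).map (fun y' => wv y' j)).sum)
          = fun j => (a j + (l.map (fun y' => wv y' j)).sum) + wv y j := by
        funext j
        rw [List.map_cons, List.sum_cons]
        ring
      rw [hre, claimA y (fun j => a j + (l.map (fun y' => wv y' j)).sum), ih a]
  -- Claim B : even coordinates can be zeroed out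
  have claimB : ∀ a : Fin (K+2) → ℂ,
      MvPolynomial.eval a F
        = MvPolynomial.eval (fun j : Fin (K+2) => if Even ((j:ℕ)+1) then 0 else a j) F := by
    intro a
    set c : Fin (K+2) → ℂ := fun j => if Even ((j:ℕ)+1) then -a j else 0 with hc
    obtain ⟨u, hu⟩ := realize_psum D
      (fun m => (if h : 2*m-1 < K+2 then c ⟨2*m-1, h⟩ else 0) / 2)
    have hsq : ∀ i : Fin D, ∃ z : ℂ, z^2 = u i :=
      fun i => IsAlgClosed.exists_pow_nat_eq (u i) (by norm_num)
    choose y hy using hsq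
    set l : List ℂ := List.ofFn y with hl
    have hsum : ∀ j ∈ F.vars, (l.map (fun y' => wv y' j)).sum = c j := by
      intro j hj
      have hjD := hvars j hj
      rw [hl, List.map_ofFn, List.sum_ofFn]
      rcases Nat.even_or_odd ((j:ℕ)+1) with he | ho
      · -- even case, (j:ℕ)+1 = 2*m with 1 ≤ m ≤ D
        obtain ⟨m, hm⟩ := he
        have hm1 : 1 ≤ m := by omega
        have hmD : m ≤ D := by omega
        have hterm : ∀ i : Fin D, (Function.comp (fun y' => wv y' j) y) i = 2 * (u i)^m := by
          intro i
          simp only [Function.comp]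
          rw [hwv]
          simp only
          rw [Even.neg_pow ⟨m, hm⟩, show (j:ℕ)+1 = 2*m by omega, pow_mul, hy i]
          ring
        rw [Finset.sum_congr rfl (fun i _ => hterm i), ← Finset.mul_sum,
          hu m hm1 hmD, dif_pos (by omega : 2*m-1 < K+2)]
        have hje : (⟨2*m-1, by omega⟩ : Fin (K+2)) = j := Fin.ext (by show 2*m-1 = (j:ℕ); omega)
        rw [hje, hc]
        simp only
        rw [if_pos ⟨m, hm⟩]
        ring
      · -- odd case: each term vanishes
        have hterm : ∀ i : Fin D, (Function.comp (fun y' => wv y' j) y) i = 0 := by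
          intro i
          simp only [Function.comp]
          rw [hwv]
          simp only
          rw [Odd.neg_pow ho]
          ring
        rw [Finset.sum_congr rfl (fun i _ => hterm i), Finset.sum_const_zero, hc]
        simp only
        rw [if_neg (by rwa [← Nat.not_even_iff_odd] at ho)]
    calc MvPolynomial.eval a F
        = MvPolynomial.eval (fun j => a j + (l.map (fun y' => wv y' j)).sum) F :=
          (claimList l a).symm
      _ = MvPolynomial.eval (fun j : Fin (K+2) => if Even ((j:ℕ)+1) then 0 else a j) F := by
          apply eval_congr_vars
          intro j hj
          rw [hsum j hj, hc]
          simp only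
          split_ifs with h
          · ring
          · ring
  -- F is fixed by killing the even variables
  set σ0 : Fin (K+2) → MvPolynomial (Fin (K+2)) ℂ :=
    fun j => if Even ((j:ℕ)+1) then 0 else X j with hσ0
  have hFσ : F = MvPolynomial.aeval σ0 F := by
    apply MvPolynomial.funext
    intro a
    rw [eval_aeval']
    have hpt : (fun j => MvPolynomial.eval a (σ0 j))
        = fun j : Fin (K+2) => if Even ((j:ℕ)+1) then 0 else a j := by
      funext j
      rw [hσ0]
      simp only
      split_ifs with h
      · simp
      · simp
    rw [hpt, ← claimB a]
  -- conclude
  rw [hfF, hFσ, aeval_aeval']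
  set ρ : Fin (K+2) → MvPolynomial (Fin (K+2)) ℂ :=
    fun j => MvPolynomial.aeval pp (σ0 j) with hρ
  have hmem : MvPolynomial.aeval ρ F ∈ Algebra.adjoin ℂ (Set.range ρ) := by
    rw [Algebra.adjoin_range_eq_range_aeval]
    exact ⟨F, rfl⟩
  refine Algebra.adjoin_le ?_ hmem
  rintro q ⟨j, rfl⟩
  rw [hρ]
  simp only
  rw [hσ0]
  simp only
  split_ifs with h
  · rw [map_zero]
    exact Subalgebra.zero_mem _
  · rw [MvPolynomial.aeval_X]
    obtain ⟨k, hk⟩ := Nat.not_even_iff_odd.mp h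
    apply Algebra.subset_adjoin
    exact ⟨k, by rw [hpp]; simp only; rw [hk]⟩

private lemma sum_pow_cons' {R : Type} [CommSemiring R] {m : ℕ} (z : R) (v : Fin m → R) (e : ℕ) :
    (∑ i : Fin (m+1), (Fin.cons z v) i ^ e) = z ^ e + ∑ i : Fin m, v i ^ e := by
  have h : (fun i : Fin (m+1) => (Fin.cons z v) i ^ e)
      = Fin.cons (z^e) (fun i : Fin m => v i ^ e) := by
    funext i
    exact congrFun (Fin.comp_cons (· ^ e) z v) i
  calc (∑ i : Fin (m+1), (Fin.cons z v) i ^ e)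
      = ∑ i : Fin (m+1), (Fin.cons (z^e) (fun i : Fin m => v i ^ e)) i := by rw [h]
    _ = z ^ e + ∑ i : Fin m, v i ^ e := Fin.sum_cons _ _

private noncomputable def AdjOdd (m : ℕ) : Subalgebra ℂ (MvPolynomial (Fin m) ℂ) :=
  Algebra.adjoin ℂ {q : MvPolynomial (Fin m) ℂ | ∃ k : ℕ, q = psum (Fin m) ℂ (2*k+1)}

private lemma homComp_symm {σ : Type} [Fintype σ] (Q : MvPolynomial σ ℂ) (h : Q.IsSymmetric)
    (d : ℕ) : (homogeneousComponent d Q).IsSymmetric := by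
  intro e
  have h1 : (rename (⇑e) : MvPolynomial σ ℂ →ₐ[ℂ] MvPolynomial σ ℂ)
      = MvPolynomial.aeval (fun i => X (e i)) := MvPolynomial.rename_eq_aeval _
  have h2 : rename (⇑e) (homogeneousComponent d Q)
      = homogeneousComponent d (rename (⇑e) Q) := by
    rw [h1]
    exact (homComp_aeval (fun i => X (e i)) (fun i => MvPolynomial.isHomogeneous_X ℂ (e i)) Q d).symm
  rw [h2, h e]

private lemma cons_mul {m : ℕ} (t z : ℂ) (v : Fin m → ℂ) :
    (fun i : Fin (m+1) => t * (Fin.cons (α := fun _ => ℂ) z v) i) = Fin.cons (t*z) (fun i => t * v i) := by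
  funext i
  refine Fin.cases ?_ (fun i' => ?_) i
  · rw [Fin.cons_zero, Fin.cons_zero]
  · rw [Fin.cons_succ, Fin.cons_succ]

private lemma eval_mul_expand {σ : Type} (Q : MvPolynomial σ ℂ) (t : ℂ) (u : σ → ℂ) :
    MvPolynomial.eval (fun j => t * u j) Q
      = ∑ d ∈ Finset.range (Q.totalDegree+1),
          t^d * MvPolynomial.eval u (homogeneousComponent d Q) := by
  conv_lhs => rw [← MvPolynomial.sum_homogeneousComponent Q]
  rw [map_sum]
  exact Finset.sum_congr rfl (fun d _ =>
    eval_smul_isHomogeneous (MvPolynomial.homogeneousComponent_isHomogeneous d Q) t u)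

private lemma coeff_extract (N : ℕ) (A B : ℕ → ℂ)
    (h : ∀ t : ℂ, (∑ d ∈ Finset.range N, t^d * A d) = ∑ d ∈ Finset.range N, t^d * B d) :
    ∀ d, d < N → A d = B d := by
  have hpoly : (∑ d ∈ Finset.range N, Polynomial.C (A d) * Polynomial.X ^ d)
      = ∑ d ∈ Finset.range N, Polynomial.C (B d) * Polynomial.X ^ d := by
    apply Polynomial.funext
    intro t
    rw [Polynomial.eval_finset_sum, Polynomial.eval_finset_sum]
    simp only [Polynomial.eval_mul, Polynomial.eval_C, Polynomial.eval_pow, Polynomial.eval_X]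
    simpa [mul_comm] using h t
  intro d hd
  have h2 := congrArg (fun p => Polynomial.coeff p d) hpoly
  simp only [Polynomial.finset_sum_coeff, Polynomial.coeff_C_mul, Polynomial.coeff_X_pow,
    mul_ite, mul_one, mul_zero] at h2
  rwa [Finset.sum_ite_eq (Finset.range N) d A, Finset.sum_ite_eq (Finset.range N) d B,
    if_pos (Finset.mem_range.mpr hd), if_pos (Finset.mem_range.mpr hd)] at h2

private lemma homComp_eval_pair (K : ℕ) (P2 : MvPolynomial (Fin (K+2)) ℂ)
    (h : ∀ (y : ℂ) (x : Fin K → ℂ),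
      MvPolynomial.eval (Fin.cons y (Fin.cons (-y) x)) P2
        = MvPolynomial.eval (Fin.cons 0 (Fin.cons 0 x)) P2)
    (d : ℕ) (y : ℂ) (x : Fin K → ℂ) :
    MvPolynomial.eval (Fin.cons y (Fin.cons (-y) x)) (homogeneousComponent d P2)
      = MvPolynomial.eval (Fin.cons 0 (Fin.cons 0 x)) (homogeneousComponent d P2) := by
  rcases Nat.lt_or_ge d (P2.totalDegree + 1) with hd | hd
  · set u : Fin (K+2) → ℂ := Fin.cons y (Fin.cons (-y) x) with hu
    set u' : Fin (K+2) → ℂ := Fin.cons 0 (Fin.cons 0 x) with hu'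
    have hts : ∀ t : ℂ, MvPolynomial.eval (fun j => t * u j) P2
        = MvPolynomial.eval (fun j => t * u' j) P2 := by
      intro t
      have e1 : (fun j => t * u j)
          = Fin.cons (t*y) (Fin.cons (-(t*y)) (fun i => t * x i)) := by
        rw [hu, cons_mul, cons_mul, mul_neg]
      have e2 : (fun j => t * u' j) = Fin.cons 0 (Fin.cons 0 (fun i => t * x i)) := by
        rw [hu', cons_mul, cons_mul, mul_zero]
      rw [e1, e2, h (t*y) (fun i => t * x i)]
    have hts2 : ∀ t : ℂ,
        (∑ e ∈ Finset.range (P2.totalDegree+1),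
          t^e * MvPolynomial.eval u (homogeneousComponent e P2))
        = ∑ e ∈ Finset.range (P2.totalDegree+1),
          t^e * MvPolynomial.eval u' (homogeneousComponent e P2) := by
      intro t
      rw [← eval_mul_expand, ← eval_mul_expand]
      exact hts t
    exact coeff_extract _ _ _ hts2 d hd
  · rw [MvPolynomial.homogeneousComponent_eq_zero _ _ (by omega), map_zero, map_zero]

private lemma restrict_eval (m : ℕ) (Q : MvPolynomial (Fin (m+2)) ℂ) (x : Fin m → ℂ) :
    MvPolynomial.eval x (MvPolynomial.aeval
        (Fin.cons 0 (Fin.cons 0 X) : Fin (m+2) → MvPolynomial (Fin m) ℂ) Q)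
      = MvPolynomial.eval (Fin.cons 0 (Fin.cons 0 x)) Q := by
  rw [eval_aeval']
  have hpt : (fun j => MvPolynomial.eval x
      ((Fin.cons 0 (Fin.cons 0 X) : Fin (m+2) → MvPolynomial (Fin m) ℂ) j))
      = Fin.cons 0 (Fin.cons 0 x) := by
    funext i
    refine Fin.cases ?_ (fun i' => ?_) i
    · rw [Fin.cons_zero, Fin.cons_zero]
      exact map_zero _
    · rw [Fin.cons_succ, Fin.cons_succ]
      refine Fin.cases ?_ (fun i'' => ?_) i'
      · rw [Fin.cons_zero, Fin.cons_zero]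
        exact map_zero _
      · rw [Fin.cons_succ, Fin.cons_succ]
        exact MvPolynomial.eval_X _
  rw [hpt]

private lemma restrict_psum (m : ℕ) (e : ℕ) (he : e ≠ 0) :
    MvPolynomial.aeval (Fin.cons 0 (Fin.cons 0 X) : Fin (m+2) → MvPolynomial (Fin m) ℂ)
      (psum (Fin (m+2)) ℂ e) = psum (Fin m) ℂ e := by
  rw [psum, map_sum]
  have h1 : ∀ i : Fin (m+2), MvPolynomial.aeval
      (Fin.cons 0 (Fin.cons 0 X) : Fin (m+2) → MvPolynomial (Fin m) ℂ) ((X i : MvPolynomial (Fin (m+2)) ℂ) ^ e)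
      = (Fin.cons 0 (Fin.cons 0 X) : Fin (m+2) → MvPolynomial (Fin m) ℂ) i ^ e := by
    intro i
    rw [map_pow, MvPolynomial.aeval_X]
  rw [Finset.sum_congr rfl (fun i _ => h1 i), sum_pow_cons', sum_pow_cons',
    zero_pow he, psum]
  ring

private lemma cons_zero_homog (m : ℕ) :
    ∀ i : Fin (m+2), ((Fin.cons 0 (Fin.cons 0 X) : Fin (m+2) → MvPolynomial (Fin m) ℂ) i
      ).IsHomogeneous 1 := by
  intro i
  refine Fin.cases ?_ (fun i' => ?_) i
  · rw [Fin.cons_zero]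
    exact MvPolynomial.isHomogeneous_zero _ _ _
  · rw [Fin.cons_succ]
    refine Fin.cases ?_ (fun i'' => ?_) i'
    · rw [Fin.cons_zero]
      exact MvPolynomial.isHomogeneous_zero _ _ _
    · rw [Fin.cons_succ]
      exact MvPolynomial.isHomogeneous_X ℂ _

private lemma down_step (P : ∀ m : ℕ, MvPolynomial (Fin m) ℂ)
    (hinv : ∀ (m : ℕ) (y : ℂ) (x : Fin m → ℂ),
      MvPolynomial.eval (Fin.cons y (Fin.cons (-y) x)) (P (m + 2))
        = MvPolynomial.eval x (P m))
    (m d : ℕ) (h : homogeneousComponent d (P (m+2)) ∈ AdjOdd (m+2)) :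
    homogeneousComponent d (P m) ∈ AdjOdd m := by
  set ζ : Fin (m+2) → MvPolynomial (Fin m) ℂ := Fin.cons 0 (Fin.cons 0 X) with hζ
  have hres : P m = MvPolynomial.aeval ζ (P (m+2)) := by
    apply MvPolynomial.funext
    intro x
    rw [hζ, restrict_eval m (P (m+2)) x]
    have h0 := hinv m 0 x
    rw [neg_zero] at h0
    exact h0.symm
  have h1 : homogeneousComponent d (P m)
      = MvPolynomial.aeval ζ (homogeneousComponent d (P (m+2))) := by
    rw [hres, homComp_aeval ζ (hζ ▸ cons_zero_homog m) (P (m+2)) d]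
  rw [h1]
  have h2 : MvPolynomial.aeval ζ (homogeneousComponent d (P (m+2)))
      ∈ Algebra.adjoin ℂ ((MvPolynomial.aeval ζ) ''
        {q : MvPolynomial (Fin (m+2)) ℂ | ∃ k : ℕ, q = psum (Fin (m+2)) ℂ (2*k+1)}) := by
    rw [← AlgHom.map_adjoin]
    exact ⟨_, h, rfl⟩
  refine Algebra.adjoin_mono ?_ h2
  rintro q ⟨q', ⟨k, rfl⟩, rfl⟩
  exact ⟨k, hζ ▸ restrict_psum m (2*k+1) (by omega)⟩

private lemma down_chain (P : ∀ m : ℕ, MvPolynomial (Fin m) ℂ)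
    (hinv : ∀ (m : ℕ) (y : ℂ) (x : Fin m → ℂ),
      MvPolynomial.eval (Fin.cons y (Fin.cons (-y) x)) (P (m + 2))
        = MvPolynomial.eval x (P m))
    (N : ℕ) : ∀ (m d : ℕ), homogeneousComponent d (P (m + 2*N)) ∈ AdjOdd (m + 2*N) →
    homogeneousComponent d (P m) ∈ AdjOdd m := by
  induction N with
  | zero => intro m d h; simpa using h
  | succ N ih =>
    intro m d h
    rw [show m + 2*(N+1) = (m+2) + 2*N from by ring] at h
    exact down_step P hinv m d (ih (m+2) d h)

end Helpers

/-- A family of symmetric polynomials `P m` in `m` variables, compatible under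
insertion of a pair of variables `(y, -y)` (i.e. the reduction of a symmetric
function invariant under the pair-insertion substitutions), is, in each number
of variables `n`, a polynomial in the odd power sums
`p_{2k+1}(x₁,…,xₙ) = Σ_j x_j^{2k+1}`. -/
theorem symmetric_pair_invariant_is_poly_in_odd_power_sums
    (P : ∀ m : ℕ, MvPolynomial (Fin m) ℂ)
    (hsymm : ∀ m : ℕ, (P m).IsSymmetric)
    (hinv : ∀ (m : ℕ) (y : ℂ) (x : Fin m → ℂ),
      MvPolynomial.eval (Fin.cons y (Fin.cons (-y) x)) (P (m + 2))
        = MvPolynomial.eval x (P m))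
    (n : ℕ) :
    P n ∈ Algebra.adjoin ℂ
      {q : MvPolynomial (Fin n) ℂ | ∃ k : ℕ, q = ∑ i : Fin n, X i ^ (2 * k + 1)} := by
  have hgoal : P n ∈ AdjOdd n := by
    rw [← MvPolynomial.sum_homogeneousComponent (P n)]
    apply Subalgebra.sum_mem
    intro d _
    have hpair : ∀ (y : ℂ) (x : Fin (n+2*d) → ℂ),
        MvPolynomial.eval (Fin.cons y (Fin.cons (-y) x)) (P ((n+2*d)+2))
          = MvPolynomial.eval (Fin.cons 0 (Fin.cons 0 x)) (P ((n+2*d)+2)) := by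
      intro y x
      rw [hinv (n+2*d) y x]
      have h0 := hinv (n+2*d) 0 x
      rw [neg_zero] at h0
      exact h0.symm
    have hst := stable_case (n+2*d) d (by omega) (homogeneousComponent d (P ((n+2*d)+2)))
      (homComp_symm _ (hsymm _) d)
      (MvPolynomial.homogeneousComponent_isHomogeneous d _)
      (fun y x => homComp_eval_pair (n+2*d) (P ((n+2*d)+2)) hpair d y x)
    have hst' : homogeneousComponent d (P (n + 2*(d+1))) ∈ AdjOdd (n + 2*(d+1)) := by
      rw [show n + 2*(d+1) = (n+2*d)+2 from by ring]
      exact hst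
    exact down_chain P hinv (d+1) n d hst'
  exact hgoal
end

section
/- The sum of sign(p) over all pairings p of {1, …, n} equals 1, for every n ≥ 0. -/
open Finset

/-- A pairing of `{1,…,n}` into `⌊n/2⌋` disjoint ordered pairs `(ℓ < r)` is
encoded by the unique permutation `σ` of `Fin n` listing the pairs as
`(σ(2j), σ(2j+1))` with `σ(2j) < σ(2j+1)` and the pairs ordered by their left
entries (the unpaired index, for odd `n`, sits in the last position); the sign
of the pairing is the sign of this permutation. -/
def IsPairingPerm (n : ℕ) (σ : Equiv.Perm (Fin n)) : Prop :=
  (∀ j : Fin (n / 2),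
      σ ⟨2 * (j : ℕ), by have := j.isLt; omega⟩
        < σ ⟨2 * (j : ℕ) + 1, by have := j.isLt; omega⟩) ∧
  (∀ j j' : Fin (n / 2), j < j' →
      σ ⟨2 * (j : ℕ), by have := j.isLt; omega⟩
        < σ ⟨2 * (j' : ℕ), by have := j'.isLt; omega⟩)

instance (n : ℕ) (σ : Equiv.Perm (Fin n)) : Decidable (IsPairingPerm n σ) := by
  unfold IsPairingPerm; infer_instance

def fval (n : ℕ) (σ : Equiv.Perm (Fin n)) (i : ℕ) : ℕ :=
  if h : i < n then (σ ⟨i, h⟩ : ℕ) else i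

lemma fval_lt {n : ℕ} {σ : Equiv.Perm (Fin n)} {i : ℕ} (h : i < n) : fval n σ i < n := by
  simp only [fval, dif_pos h]; exact (σ ⟨i, h⟩).isLt

lemma fval_of_ge {n : ℕ} {σ : Equiv.Perm (Fin n)} {i : ℕ} (h : ¬ i < n) : fval n σ i = i := by
  simp only [fval, dif_neg h]

lemma fval_inj {n : ℕ} {σ : Equiv.Perm (Fin n)} : Function.Injective (fval n σ) := by
  intro a b hab
  unfold fval at hab
  split_ifs at hab with ha hb hb
  · have := σ.injective (Fin.val_injective hab)
    exact congrArg Fin.val this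
  · have := (σ ⟨a, ha⟩).isLt; omega
  · have := (σ ⟨b, hb⟩).isLt; omega
  · exact hab

lemma fval_inv {n : ℕ} {σ : Equiv.Perm (Fin n)} {i : ℕ} (h : i < n) :
    fval n σ (fval n σ⁻¹ i) = i := by
  unfold fval
  rw [dif_pos h, dif_pos (σ⁻¹ ⟨i, h⟩).isLt]
  rw [Fin.eta, ← Equiv.Perm.mul_apply, mul_inv_cancel, Equiv.Perm.one_apply]

lemma eq_one_of_fval {n : ℕ} {σ : Equiv.Perm (Fin n)} (h : ∀ i, fval n σ i = i) : σ = 1 := by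
  ext x
  have := h x
  simpa [fval, x.isLt] using this

lemma exists_fval_ne {n : ℕ} {σ : Equiv.Perm (Fin n)} (h : σ ≠ 1) : ∃ i, fval n σ i ≠ i := by
  by_contra hc
  push_neg at hc
  exact h (eq_one_of_fval hc)

lemma ipp_iff {n : ℕ} {σ : Equiv.Perm (Fin n)} :
    IsPairingPerm n σ ↔
      ((∀ k, k < n / 2 → fval n σ (2 * k) < fval n σ (2 * k + 1)) ∧
       (∀ k k', k < k' → k' < n / 2 → fval n σ (2 * k) < fval n σ (2 * k'))) := by
  unfold IsPairingPerm fval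
  constructor
  · rintro ⟨h1, h2⟩
    constructor
    · intro k hk
      have := h1 ⟨k, hk⟩
      rw [Fin.lt_def] at this
      rw [dif_pos (by omega : 2 * k < n), dif_pos (by omega : 2 * k + 1 < n)]
      exact this
    · intro k k' hkk hk'
      have := h2 ⟨k, by omega⟩ ⟨k', hk'⟩ (Fin.mk_lt_mk.mpr hkk)
      rw [Fin.lt_def] at this
      rw [dif_pos (by omega : 2 * k < n), dif_pos (by omega : 2 * k' < n)]
      exact this
  · rintro ⟨h1, h2⟩
    constructor
    · intro j
      have hj := j.isLt
      have := h1 j hj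
      rw [dif_pos (by omega : 2 * (j:ℕ) < n), dif_pos (by omega : 2 * (j:ℕ) + 1 < n)] at this
      rw [Fin.lt_def]
      exact this
    · intro j j' hjj
      have hj' := j'.isLt
      have := h2 j j' (Fin.lt_def.mp hjj) hj'
      rw [dif_pos (by omega : 2 * (j:ℕ) < n), dif_pos (by omega : 2 * (j':ℕ) < n)] at this
      rw [Fin.lt_def]
      exact this

section Ctx

variable {n : ℕ} {σ : Equiv.Perm (Fin n)} {t : ℕ}

lemma L_tlt (ht : fval n σ t ≠ t) : t < n := by
  by_contra h
  exact ht (fval_of_ge h)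

lemma L_ge (htm : ∀ i, i < t → fval n σ i = i) {p : ℕ} (hp : t ≤ p) : t ≤ fval n σ p := by
  by_contra hlt
  push_neg at hlt
  have h1 : fval n σ (fval n σ p) = fval n σ p := htm _ hlt
  have h2 := fval_inj h1
  omega

lemma L_gt (htm : ∀ i, i < t → fval n σ i = i) {p : ℕ} (hp : t ≤ p)
    (hne : fval n σ p ≠ t) : t < fval n σ p :=
  lt_of_le_of_ne (L_ge htm hp) (Ne.symm hne)

lemma L_le_n2 (ht : fval n σ t ≠ t) (htm : ∀ i, i < t → fval n σ i = i) : t + 2 ≤ n := by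
  have h1 := L_ge htm (le_refl t)
  have h2 := fval_lt (σ := σ) (L_tlt ht)
  omega

lemma L_qval (ht : fval n σ t ≠ t) : fval n σ (fval n σ⁻¹ t) = t := fval_inv (L_tlt ht)

lemma L_qlt (ht : fval n σ t ≠ t) : fval n σ⁻¹ t < n := fval_lt (σ := σ⁻¹) (L_tlt ht)

lemma L_qgt (ht : fval n σ t ≠ t) (htm : ∀ i, i < t → fval n σ i = i) :
    t < fval n σ⁻¹ t := by
  have hq := L_qval ht
  set q := fval n σ⁻¹ t with hqdef
  rcases lt_trichotomy q t with h | h | h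
  · have := htm q h
    omega
  · rw [h] at hq; exact absurd hq ht
  · exact h

end Ctx

section Ctx2

variable {n : ℕ} {σ : Equiv.Perm (Fin n)} {t : ℕ}

lemma L_ne_q (ht : fval n σ t ≠ t) {p : ℕ} (hne : p ≠ fval n σ⁻¹ t) :
    fval n σ p ≠ t := fun hc => hne (fval_inj (hc.trans (L_qval ht).symm))

lemma L_gt' (ht : fval n σ t ≠ t) (htm : ∀ i, i < t → fval n σ i = i) {p : ℕ}
    (hp : t ≤ p) (hne : p ≠ fval n σ⁻¹ t) : t < fval n σ p :=
  L_gt htm hp (L_ne_q ht hne)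

lemma L_qlast (hp : IsPairingPerm n σ) (ht : fval n σ t ≠ t)
    (htm : ∀ i, i < t → fval n σ i = i) (hq : fval n σ⁻¹ t = n - 1) : n % 2 = 1 := by
  by_contra hodd
  have hev : n % 2 = 0 := by omega
  have hqv := L_qval ht
  have hqgt := L_qgt ht htm
  have htn := L_tlt ht
  have h1 := (ipp_iff.mp hp).1 ((n-1)/2) (by omega)
  rw [(by omega : 2 * ((n-1)/2) = n - 2), (by omega : n - 2 + 1 = n - 1)] at h1
  rw [hq] at hqv
  by_cases h2 : n - 2 = t
  · rw [h2] at h1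
    have := L_gt htm (le_refl t) ht
    omega
  · have : t < fval n σ (n - 2) := L_gt' ht htm (by omega) (by omega)
    omega

lemma L_E1 (hp : IsPairingPerm n σ) (ht : fval n σ t ≠ t)
    (htm : ∀ i, i < t → fval n σ i = i) (hpar : t % 2 = 0) :
    fval n σ⁻¹ t = n - 1 ∧ n % 2 = 1 := by
  have hqv := L_qval ht
  have hqgt := L_qgt ht htm
  have hqlt := L_qlt ht
  set q := fval n σ⁻¹ t with hqdef
  have hreg : ¬ q < 2 * (n / 2) := by
    intro hr
    have hftt := L_gt htm (le_refl t) ht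
    rcases Nat.mod_two_eq_zero_or_one q with hq2 | hq2
    · have h2 := (ipp_iff.mp hp).2 (t/2) (q/2) (by omega) (by omega)
      rw [(by omega : 2 * (t/2) = t), (by omega : 2 * (q/2) = q)] at h2
      omega
    · have h1 := (ipp_iff.mp hp).1 (q/2) (by omega)
      rw [(by omega : 2 * (q/2) = q - 1), (by omega : q - 1 + 1 = q)] at h1
      by_cases h3 : q - 1 = t
      · rw [h3] at h1
        omega
      · have : t < fval n σ (q - 1) := L_gt' ht htm (by omega) (by omega)
        omega
  constructor <;> omega

lemma L_E2 (hp : IsPairingPerm n σ) (ht : fval n σ t ≠ t)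
    (htm : ∀ i, i < t → fval n σ i = i) (hpar : t % 2 = 0) :
    fval n σ t = t + 1 := by
  obtain ⟨hq1, hodd⟩ := L_E1 hp ht htm hpar
  have htn := L_tlt ht
  have ht2 := L_le_n2 ht htm
  have hqv := L_qval ht
  have hpv : fval n σ (fval n σ⁻¹ (t+1)) = t + 1 := fval_inv (by omega)
  set p := fval n σ⁻¹ (t+1) with hpdef
  have hplt : p < n := fval_lt (σ := σ⁻¹) (by omega)
  have hpge : t ≤ p := by
    by_contra hc
    push_neg at hc
    have := htm p hc
    omega
  by_cases hpt : p = t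
  · rw [hpt] at hpv; exact hpv
  · exfalso
    have hftt := L_gt htm (le_refl t) ht
    have hpq : p ≠ fval n σ⁻¹ t := by
      intro hc
      rw [← hc] at hqv
      omega
    rw [hq1] at hpq
    have hple : p ≤ n - 2 := by omega
    rcases Nat.mod_two_eq_zero_or_one p with hp2 | hp2
    · have h2 := (ipp_iff.mp hp).2 (t/2) (p/2) (by omega) (by omega)
      rw [(by omega : 2 * (t/2) = t), (by omega : 2 * (p/2) = p)] at h2
      omega
    · have h1 := (ipp_iff.mp hp).1 (p/2) (by omega)
      rw [(by omega : 2 * (p/2) = p - 1), (by omega : p - 1 + 1 = p)] at h1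
      by_cases h3 : p - 1 = t
      · rw [h3] at h1
        omega
      · have : t < fval n σ (p - 1) := L_gt' ht htm (by omega) (by rw [hq1]; omega)
        omega

lemma L_E3 (hp : IsPairingPerm n σ) (ht : fval n σ t ≠ t)
    (htm : ∀ i, i < t → fval n σ i = i) (hpar : t % 2 = 0) :
    t + 1 < fval n σ (t + 1) := by
  have ht2 := L_le_n2 ht htm
  have h1 := (ipp_iff.mp hp).1 (t/2) (by omega)
  rw [(by omega : 2 * (t/2) = t)] at h1
  rw [L_E2 hp ht htm hpar] at h1
  exact h1

lemma L_O3 (hp : IsPairingPerm n σ) (ht : fval n σ t ≠ t)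
    (htm : ∀ i, i < t → fval n σ i = i) (hpar : t % 2 = 1)
    (hq : fval n σ⁻¹ t ≠ n - 1) : fval n σ⁻¹ t = t + 1 := by
  have hqv := L_qval ht
  have hqgt := L_qgt ht htm
  have hqlt := L_qlt ht
  set q := fval n σ⁻¹ t with hqdef
  have hqle : q ≤ n - 2 := by omega
  rcases Nat.mod_two_eq_zero_or_one q with hq2 | hq2
  · by_contra hne
    have hq3 : t + 3 ≤ q := by omega
    have h2 := (ipp_iff.mp hp).2 ((t+1)/2) (q/2) (by omega) (by omega)
    rw [(by omega : 2 * ((t+1)/2) = t + 1), (by omega : 2 * (q/2) = q)] at h2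
    have : t < fval n σ (t+1) := L_gt' ht htm (by omega) (by omega)
    omega
  · exfalso
    have h1 := (ipp_iff.mp hp).1 (q/2) (by omega)
    rw [(by omega : 2 * (q/2) = q - 1), (by omega : q - 1 + 1 = q)] at h1
    have hftt := L_gt htm (le_refl t) ht
    by_cases h3 : q - 1 = t
    · rw [h3] at h1
      omega
    · have : t < fval n σ (q - 1) := L_gt' ht htm (by omega) (by omega)
      omega

lemma L_O4 (hp : IsPairingPerm n σ) (ht : fval n σ t ≠ t)
    (htm : ∀ i, i < t → fval n σ i = i) (hpar : t % 2 = 1)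
    (hq : fval n σ⁻¹ t = t + 1) (hq2 : fval n σ⁻¹ t ≠ n - 1) :
    t < fval n σ (t + 2) ∧ t + 2 < n := by
  have hqv := L_qval ht
  have hqlt := L_qlt ht
  have htn2 : t + 2 < n := by omega
  have h1 := (ipp_iff.mp hp).1 ((t+1)/2) (by omega)
  rw [(by omega : 2 * ((t+1)/2) = t + 1), (by omega : t + 1 + 1 = t + 2)] at h1
  rw [hq] at hqv
  exact ⟨by omega, htn2⟩

end Ctx2

lemma fval_val {n : ℕ} {σ : Equiv.Perm (Fin n)} (a : Fin n) : fval n σ (a : ℕ) = σ a := by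
  unfold fval
  rw [dif_pos a.isLt, Fin.eta]

lemma fval_mul_swap {n : ℕ} {σ : Equiv.Perm (Fin n)} {a b : Fin n} (i : ℕ) :
    fval n (σ * Equiv.swap a b) i =
      if i = (a : ℕ) then fval n σ (b : ℕ)
      else if i = (b : ℕ) then fval n σ (a : ℕ)
      else fval n σ i := by
  by_cases hi : i < n
  · rw [fval_val (σ := σ) a, fval_val (σ := σ) b]
    unfold fval
    rw [dif_pos hi]
    rw [Equiv.Perm.mul_apply, Equiv.swap_apply_def]
    by_cases h1 : i = (a : ℕ)
    · rw [if_pos (Fin.ext h1 : (⟨i, hi⟩ : Fin n) = a), if_pos h1]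
    · rw [if_neg (fun hc => h1 (congrArg Fin.val hc)), if_neg h1]
      by_cases h2 : i = (b : ℕ)
      · rw [if_pos (Fin.ext h2 : (⟨i, hi⟩ : Fin n) = b), if_pos h2]
      · rw [if_neg (fun hc => h2 (congrArg Fin.val hc)), if_neg h2, dif_pos hi]
  · have ha := a.isLt
    have hb := b.isLt
    rw [if_neg (by omega), if_neg (by omega), fval_of_ge hi, fval_of_ge hi]

lemma gfun_find_lt {n : ℕ} {σ : Equiv.Perm (Fin n)} (h : ∃ i, fval n σ i ≠ i) :
    Nat.find h < n := L_tlt (Nat.find_spec h)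

def gfun {n : ℕ} (σ : Equiv.Perm (Fin n)) (h : ∃ i, fval n σ i ≠ i) : Equiv.Perm (Fin n) :=
  if Nat.find h % 2 = 0 then
    σ * Equiv.swap ⟨Nat.find h, gfun_find_lt h⟩ ⟨n - 1, by have := gfun_find_lt h; omega⟩
  else if fval n σ⁻¹ (Nat.find h) = n - 1 then
    σ * Equiv.swap ⟨Nat.find h - 1, by have := gfun_find_lt h; omega⟩
      ⟨n - 1, by have := gfun_find_lt h; omega⟩
  else
    σ * Equiv.swap ⟨Nat.find h, gfun_find_lt h⟩
      ⟨min (Nat.find h + 2) (n - 1), by have := gfun_find_lt h; omega⟩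

lemma gfun_spec {n : ℕ} (σ : Equiv.Perm (Fin n)) (h : ∃ i, fval n σ i ≠ i) :
    ∃ a b : Fin n, a ≠ b ∧ gfun σ h = σ * Equiv.swap a b := by
  have ht := Nat.find_spec h
  have htm : ∀ i, i < Nat.find h → fval n σ i = i := fun i hi => by
    have := Nat.find_min h hi
    simpa using this
  have h2 := L_le_n2 ht htm
  unfold gfun
  split_ifs with hc1 hc2
  · exact ⟨_, _, by simp [Fin.ext_iff]; omega, rfl⟩
  · exact ⟨_, _, by simp [Fin.ext_iff]; omega, rfl⟩
  · exact ⟨_, _, by simp [Fin.ext_iff]; omega, rfl⟩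

lemma mul_swap_invol {n : ℕ} (σ : Equiv.Perm (Fin n)) {a b c d : Fin n}
    (hac : a = c) (hbd : b = d) : σ * Equiv.swap a b * Equiv.swap c d = σ := by
  subst hac; subst hbd
  rw [mul_assoc, Equiv.swap_mul_self, mul_one]

lemma find_eq {n : ℕ} {σ : Equiv.Perm (Fin n)} (h : ∃ i, fval n σ i ≠ i) {t : ℕ}
    (h1 : fval n σ t ≠ t) (h2 : ∀ i, i < t → fval n σ i = i) : Nat.find h = t := by
  rw [Nat.find_eq_iff]
  exact ⟨h1, fun k hk => by simp only [ne_eq, not_not]; exact h2 k hk⟩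

lemma gfun_branch1 {n : ℕ} {σ : Equiv.Perm (Fin n)} (h : ∃ i, fval n σ i ≠ i) {t : ℕ}
    (hft : Nat.find h = t) (hev : t % 2 = 0) (p1 : t < n) (p2 : n - 1 < n) :
    gfun σ h = σ * Equiv.swap ⟨t, p1⟩ ⟨n - 1, p2⟩ := by
  unfold gfun
  simp only [hft]
  rw [if_pos hev]

lemma gfun_branch2 {n : ℕ} {σ : Equiv.Perm (Fin n)} (h : ∃ i, fval n σ i ≠ i) {t : ℕ}
    (hft : Nat.find h = t) (hodd : t % 2 = 1) (hq : fval n σ⁻¹ t = n - 1)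
    (p1 : t - 1 < n) (p2 : n - 1 < n) :
    gfun σ h = σ * Equiv.swap ⟨t - 1, p1⟩ ⟨n - 1, p2⟩ := by
  unfold gfun
  simp only [hft]
  rw [if_neg (by omega), if_pos hq]

lemma gfun_branch3 {n : ℕ} {σ : Equiv.Perm (Fin n)} (h : ∃ i, fval n σ i ≠ i) {t : ℕ}
    (hft : Nat.find h = t) (hodd : t % 2 = 1) (hq : fval n σ⁻¹ t ≠ n - 1)
    (hlt : t + 2 ≤ n - 1) (p1 : t < n) (p2 : t + 2 < n) :
    gfun σ h = σ * Equiv.swap ⟨t, p1⟩ ⟨t + 2, p2⟩ := by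
  unfold gfun
  simp only [hft]
  rw [if_neg (by omega), if_neg hq]
  have hy : (⟨min (t + 2) (n - 1), by omega⟩ : Fin n) = ⟨t + 2, p2⟩ :=
    Fin.ext (by show min (t + 2) (n - 1) = t + 2; omega)
  rw [hy]

lemma gfun_key {n : ℕ} {σ : Equiv.Perm (Fin n)} (hp : IsPairingPerm n σ)
    (h : ∃ i, fval n σ i ≠ i) :
    IsPairingPerm n (gfun σ h) ∧
      ∃ h' : ∃ i, fval n (gfun σ h) i ≠ i, gfun (gfun σ h) h' = σ := by
  set t := Nat.find h with htdef
  have ht : fval n σ t ≠ t := Nat.find_spec h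
  have htm : ∀ i, i < t → fval n σ i = i := fun i hi => by
    have := Nat.find_min h hi; simpa using this
  have htn : t < n := L_tlt ht
  have ht2 : t + 2 ≤ n := L_le_n2 ht htm
  have hcond := ipp_iff.mp hp
  have hb : t < fval n σ t := L_gt htm (le_refl t) ht
  rcases Nat.mod_two_eq_zero_or_one t with hpar | hpar
  · -- EVEN CASE
    obtain ⟨hq1, hodd⟩ := L_E1 hp ht htm hpar
    have hE2 := L_E2 hp ht htm hpar
    have hE3 := L_E3 hp ht htm hpar
    have hvn1 : fval n σ (n - 1) = t := by
      have := L_qval ht; rw [hq1] at this; exact this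
    have px1 : t + 1 - 1 < n := by omega
    have px2 : n - 1 < n := by omega
    have hg : gfun σ h = σ * Equiv.swap ⟨t, htn⟩ ⟨n - 1, by omega⟩ :=
      gfun_branch1 h htdef.symm hpar htn (by omega)
    have hf' : ∀ i, fval n (gfun σ h) i =
        if i = t then t else if i = n - 1 then t + 1 else fval n σ i := by
      intro i
      rw [hg, fval_mul_swap]
      show (if i = t then fval n σ (n - 1) else if i = n - 1 then fval n σ t
        else fval n σ i) = _
      rw [hvn1, hE2]
    have hmem : IsPairingPerm n (gfun σ h) := by
      rw [ipp_iff]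
      constructor
      · intro k hk
        have hx1 : 2 * k + 1 ≠ t := by omega
        have hx2 : 2 * k + 1 ≠ n - 1 := by omega
        have v2 : fval n (gfun σ h) (2 * k + 1) = fval n σ (2 * k + 1) := by
          rw [hf', if_neg hx1, if_neg hx2]
        rw [v2]
        by_cases hk1 : 2 * k = t
        · have v1 : fval n (gfun σ h) (2 * k) = t := by rw [hf', if_pos hk1]
          rw [v1, show 2 * k + 1 = t + 1 by omega]
          omega
        · have hx3 : 2 * k ≠ n - 1 := by omega
          have v1 : fval n (gfun σ h) (2 * k) = fval n σ (2 * k) := by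
            rw [hf', if_neg hk1, if_neg hx3]
          rw [v1]
          exact hcond.1 k hk
      · intro k k' hkk hk'
        have hx2 : 2 * k' ≠ n - 1 := by omega
        by_cases hk1 : 2 * k = t
        · have v1 : fval n (gfun σ h) (2 * k) = t := by rw [hf', if_pos hk1]
          have hx4 : 2 * k' ≠ t := by omega
          have v2 : fval n (gfun σ h) (2 * k') = fval n σ (2 * k') := by
            rw [hf', if_neg hx4, if_neg hx2]
          rw [v1, v2]
          exact L_gt' ht htm (by omega) (by omega)
        · have hx3 : 2 * k ≠ n - 1 := by omega
          have v1 : fval n (gfun σ h) (2 * k) = fval n σ (2 * k) := by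
            rw [hf', if_neg hk1, if_neg hx3]
          rw [v1]
          by_cases hk2 : 2 * k' = t
          · have v2 : fval n (gfun σ h) (2 * k') = t := by rw [hf', if_pos hk2]
            rw [v2]
            have := htm (2 * k) (by omega)
            omega
          · have v2 : fval n (gfun σ h) (2 * k') = fval n σ (2 * k') := by
              rw [hf', if_neg hk2, if_neg hx2]
            rw [v2]
            exact hcond.2 k k' hkk hk'
    have hne1 : fval n (gfun σ h) (t + 1) ≠ t + 1 := by
      rw [hf', if_neg (by omega), if_neg (by omega)]
      omega
    have h' : ∃ i, fval n (gfun σ h) i ≠ i := ⟨t + 1, hne1⟩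
    refine ⟨hmem, h', ?_⟩
    have hfix' : ∀ i, i < t + 1 → fval n (gfun σ h) i = i := by
      intro k hk
      rw [hf']
      by_cases hkt : k = t
      · rw [if_pos hkt, hkt]
      · rw [if_neg hkt, if_neg (by omega)]
        exact htm k (by omega)
    have hfind : Nat.find h' = t + 1 := find_eq h' hne1 hfix'
    have hq' : fval n (gfun σ h)⁻¹ (t + 1) = n - 1 := by
      apply fval_inj (σ := gfun σ h)
      rw [fval_inv (by omega : t + 1 < n)]
      rw [hf' (n - 1), if_neg (by omega), if_pos rfl]
    rw [gfun_branch2 h' hfind (by omega) hq' px1 px2]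
    rw [hg]
    exact mul_swap_invol σ (by apply Fin.ext; show t = t + 1 - 1; omega) rfl
  · -- ODD CASE
    by_cases hqc : fval n σ⁻¹ t = n - 1
    · -- CASE B
      have hodd := L_qlast hp ht htm hqc
      have hvn1 : fval n σ (n - 1) = t := by
        have := L_qval ht; rw [hqc] at this; exact this
      have pb1 : t - 1 < n := by omega
      have pb2 : n - 1 < n := by omega
      have hg : gfun σ h = σ * Equiv.swap ⟨t - 1, by omega⟩ ⟨n - 1, by omega⟩ :=
        gfun_branch2 h htdef.symm hpar hqc (by omega) (by omega)
      have hf' : ∀ i, fval n (gfun σ h) i =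
          if i = t - 1 then t else if i = n - 1 then t - 1 else fval n σ i := by
        intro i
        rw [hg, fval_mul_swap]
        show (if i = t - 1 then fval n σ (n - 1) else if i = n - 1 then fval n σ (t - 1)
          else fval n σ i) = _
        rw [hvn1, htm (t - 1) (by omega)]
      have hmem : IsPairingPerm n (gfun σ h) := by
        rw [ipp_iff]
        constructor
        · intro k hk
          have hx1 : 2 * k + 1 ≠ t - 1 := by omega
          have hx2 : 2 * k + 1 ≠ n - 1 := by omega
          have v2 : fval n (gfun σ h) (2 * k + 1) = fval n σ (2 * k + 1) := by
            rw [hf', if_neg hx1, if_neg hx2]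
          rw [v2]
          by_cases hk1 : 2 * k = t - 1
          · have v1 : fval n (gfun σ h) (2 * k) = t := by rw [hf', if_pos hk1]
            rw [v1, show 2 * k + 1 = t by omega]
            exact hb
          · have hx3 : 2 * k ≠ n - 1 := by omega
            have v1 : fval n (gfun σ h) (2 * k) = fval n σ (2 * k) := by
              rw [hf', if_neg hk1, if_neg hx3]
            rw [v1]
            exact hcond.1 k hk
        · intro k k' hkk hk'
          have hx2 : 2 * k' ≠ n - 1 := by omega
          by_cases hk1 : 2 * k = t - 1
          · have v1 : fval n (gfun σ h) (2 * k) = t := by rw [hf', if_pos hk1]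
            have hx4 : 2 * k' ≠ t - 1 := by omega
            have v2 : fval n (gfun σ h) (2 * k') = fval n σ (2 * k') := by
              rw [hf', if_neg hx4, if_neg hx2]
            rw [v1, v2]
            exact L_gt' ht htm (by omega) (by omega)
          · have hx3 : 2 * k ≠ n - 1 := by omega
            have v1 : fval n (gfun σ h) (2 * k) = fval n σ (2 * k) := by
              rw [hf', if_neg hk1, if_neg hx3]
            rw [v1]
            by_cases hk2 : 2 * k' = t - 1
            · have v2 : fval n (gfun σ h) (2 * k') = t := by rw [hf', if_pos hk2]
              rw [v2]
              have := htm (2 * k) (by omega)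
              omega
            · have v2 : fval n (gfun σ h) (2 * k') = fval n σ (2 * k') := by
                rw [hf', if_neg hk2, if_neg hx2]
              rw [v2]
              exact hcond.2 k k' hkk hk'
      have hne1 : fval n (gfun σ h) (t - 1) ≠ t - 1 := by
        rw [hf', if_pos rfl]
        omega
      have h' : ∃ i, fval n (gfun σ h) i ≠ i := ⟨t - 1, hne1⟩
      refine ⟨hmem, h', ?_⟩
      have hfix' : ∀ i, i < t - 1 → fval n (gfun σ h) i = i := by
        intro k hk
        rw [hf', if_neg (by omega), if_neg (by omega)]
        exact htm k (by omega)
      have hfind : Nat.find h' = t - 1 := find_eq h' hne1 hfix'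
      rw [gfun_branch1 h' hfind (by omega) pb1 pb2]
      rw [hg]
      exact mul_swap_invol σ rfl rfl
    · -- CASE A
      have hq := L_O3 hp ht htm hpar hqc
      obtain ⟨hc, ht2n⟩ := L_O4 hp ht htm hpar hq hqc
      have hvq : fval n σ (t + 1) = t := by
        have := L_qval ht; rw [hq] at this; exact this
      have hg : gfun σ h = σ * Equiv.swap ⟨t, htn⟩ ⟨t + 2, ht2n⟩ :=
        gfun_branch3 h htdef.symm hpar hqc (by omega) htn ht2n
      have hf' : ∀ i, fval n (gfun σ h) i =
          if i = t then fval n σ (t + 2) else if i = t + 2 then fval n σ t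
          else fval n σ i := by
        intro i
        rw [hg, fval_mul_swap]
      have hmem : IsPairingPerm n (gfun σ h) := by
        rw [ipp_iff]
        constructor
        · intro k hk
          have hx1 : 2 * k ≠ t := by omega
          have hx2 : 2 * k ≠ t + 2 := by omega
          have v1 : fval n (gfun σ h) (2 * k) = fval n σ (2 * k) := by
            rw [hf', if_neg hx1, if_neg hx2]
          rw [v1]
          by_cases hk1 : 2 * k + 1 = t
          · have v2 : fval n (gfun σ h) (2 * k + 1) = fval n σ (t + 2) := by
              rw [hf', if_pos hk1]
            rw [v2]
            have := htm (2 * k) (by omega)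
            omega
          · by_cases hk2 : 2 * k + 1 = t + 2
            · have v2 : fval n (gfun σ h) (2 * k + 1) = fval n σ t := by
                rw [hf', if_neg hk1, if_pos hk2]
              rw [v2, show 2 * k = t + 1 by omega, hvq]
              exact hb
            · have v2 : fval n (gfun σ h) (2 * k + 1) = fval n σ (2 * k + 1) := by
                rw [hf', if_neg hk1, if_neg hk2]
              rw [v2]
              exact hcond.1 k hk
        · intro k k' hkk hk'
          have v1 : fval n (gfun σ h) (2 * k) = fval n σ (2 * k) := by
            rw [hf', if_neg (by omega), if_neg (by omega)]
          have v2 : fval n (gfun σ h) (2 * k') = fval n σ (2 * k') := by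
            rw [hf', if_neg (by omega), if_neg (by omega)]
          rw [v1, v2]
          exact hcond.2 k k' hkk hk'
      have hne1 : fval n (gfun σ h) t ≠ t := by
        rw [hf', if_pos rfl]
        omega
      have h' : ∃ i, fval n (gfun σ h) i ≠ i := ⟨t, hne1⟩
      refine ⟨hmem, h', ?_⟩
      have hfix' : ∀ i, i < t → fval n (gfun σ h) i = i := by
        intro k hk
        rw [hf', if_neg (by omega), if_neg (by omega)]
        exact htm k hk
      have hfind : Nat.find h' = t := find_eq h' hne1 hfix'
      have hq' : fval n (gfun σ h)⁻¹ t = t + 1 := by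
        apply fval_inj (σ := gfun σ h)
        rw [fval_inv htn]
        rw [hf' (t + 1), if_neg (by omega), if_neg (by omega), hvq]
      rw [gfun_branch3 h' hfind hpar (by rw [hq']; omega) (by omega) htn ht2n]
      rw [hg]
      exact mul_swap_invol σ rfl rfl

lemma fval_one {n : ℕ} (i : ℕ) : fval n (1 : Equiv.Perm (Fin n)) i = i := by
  unfold fval
  split_ifs with h
  · rfl
  · rfl

/-- The sum of the signs of all pairings of `{1,…,n}` equals `1`, for every
`n ≥ 0`. -/
theorem sum_pairing_signs (n : ℕ) :
    (∑ σ ∈ Finset.univ.filter (IsPairingPerm n), ((Equiv.Perm.sign σ : ℤ) : ℤ)) = 1 := by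
  classical
  have h1mem : (1 : Equiv.Perm (Fin n)) ∈ Finset.univ.filter (IsPairingPerm n) := by
    rw [Finset.mem_filter]
    refine ⟨Finset.mem_univ _, ?_⟩
    rw [ipp_iff]
    constructor
    · intro k hk
      rw [fval_one, fval_one]
      omega
    · intro k k' hkk hk'
      rw [fval_one, fval_one]
      omega
  rw [← Finset.add_sum_erase _ _ h1mem]
  have hz : (∑ σ ∈ (Finset.univ.filter (IsPairingPerm n)).erase 1,
      ((Equiv.Perm.sign σ : ℤ) : ℤ)) = 0 := by
    have hmem : ∀ a (ha : a ∈ (Finset.univ.filter (IsPairingPerm n)).erase 1),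
        gfun a (exists_fval_ne (Finset.ne_of_mem_erase ha)) ∈
          (Finset.univ.filter (IsPairingPerm n)).erase 1 := by
      intro a ha
      have hpa : IsPairingPerm n a := (Finset.mem_filter.mp (Finset.mem_of_mem_erase ha)).2
      obtain ⟨hmem', h', _⟩ := gfun_key hpa (exists_fval_ne (Finset.ne_of_mem_erase ha))
      rw [Finset.mem_erase, Finset.mem_filter]
      refine ⟨?_, Finset.mem_univ _, hmem'⟩
      intro hc
      obtain ⟨i, hi⟩ := h'
      rw [hc, fval_one] at hi
      exact hi rfl
    have hsign : ∀ a (ha : a ∈ (Finset.univ.filter (IsPairingPerm n)).erase 1),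
        ((Equiv.Perm.sign a : ℤ) : ℤ) +
          ((Equiv.Perm.sign (gfun a (exists_fval_ne (Finset.ne_of_mem_erase ha))) : ℤ) : ℤ)
          = 0 := by
      intro a ha
      obtain ⟨x, y, hxy, hsw⟩ := gfun_spec a (exists_fval_ne (Finset.ne_of_mem_erase ha))
      rw [hsw, Equiv.Perm.sign_mul, Equiv.Perm.sign_swap hxy]
      simp
    refine Finset.sum_involution
      (fun a ha => gfun a (exists_fval_ne (Finset.ne_of_mem_erase ha)))
      hsign ?_ hmem ?_
    · intro a ha hne heq
      have := hsign a ha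
      rw [heq] at this
      have h2 : ((Equiv.Perm.sign a : ℤ) : ℤ) = 0 := by omega
      rcases Int.units_eq_one_or (Equiv.Perm.sign a) with h3 | h3 <;> rw [h3] at h2 <;>
        simp at h2
    · intro a ha
      have hpa : IsPairingPerm n a := (Finset.mem_filter.mp (Finset.mem_of_mem_erase ha)).2
      obtain ⟨hmem', h', hinv⟩ := gfun_key hpa (exists_fval_ne (Finset.ne_of_mem_erase ha))
      exact hinv
  rw [hz, add_zero, Equiv.Perm.sign_one]
  rfl
end

section
/- The meromorphic function M_n(ζ) = ∏_{i<j} tanh((ζ_i - ζ_j)/2) has a first-order pole at ζ₂ - ζ₁ = iπ, with residue res_{ζ₂-ζ₁=iπ} M_n(ζ) = -2 · M_{n-2}(ζ₃, …, ζ_n). -/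
open Finset Filter Topology


lemma pair_prod_succ {M : Type*} [CommMonoid M] {m : ℕ} (F : Fin (m+1) → Fin (m+1) → M) :
    ∏ p ∈ Finset.univ.filter (fun p : Fin (m+1) × Fin (m+1) => p.1 < p.2), F p.1 p.2
    = (∏ j : Fin m, F 0 j.succ) *
      ∏ p ∈ Finset.univ.filter (fun p : Fin m × Fin m => p.1 < p.2), F p.1.succ p.2.succ := by
  rw [← Finset.prod_filter_mul_prod_filter_not
      (Finset.univ.filter (fun p : Fin (m+1) × Fin (m+1) => p.1 < p.2)) (fun p => p.1 = 0)]
  congr 1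
  · refine (Finset.prod_bij (fun (j : Fin m) (_ : j ∈ Finset.univ) => ((0 : Fin (m+1)), j.succ))
      ?_ ?_ ?_ ?_).symm
    · intro a _
      simp [Fin.succ_pos]
    · intro a _ b _ h
      simpa [Prod.ext_iff, Fin.succ_inj] using h
    · intro b hb
      simp only [Finset.mem_filter, Finset.mem_univ, true_and] at hb
      obtain ⟨hlt, h0⟩ := hb
      have : b.2 ≠ 0 := by
        intro h; rw [h0, h] at hlt; exact lt_irrefl _ hlt
      refine ⟨b.2.pred this, Finset.mem_univ _, ?_⟩
      have : ((0 : Fin (m+1)), (b.2.pred this).succ) = (b.1, b.2) := by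
        rw [Fin.succ_pred]; exact Prod.ext h0.symm rfl
      simpa using this
    · intro a _
      rfl
  · refine (Finset.prod_bij
      (fun (p : Fin m × Fin m) (_ : p ∈ Finset.univ.filter (fun p : Fin m × Fin m => p.1 < p.2)) =>
        (p.1.succ, p.2.succ)) ?_ ?_ ?_ ?_).symm
    · intro a ha
      simp only [Finset.mem_filter, Finset.mem_univ, true_and] at ha ⊢
      exact ⟨Fin.succ_lt_succ_iff.mpr ha, Fin.succ_ne_zero _⟩
    · intro a _ b _ h
      simpa [Prod.ext_iff, Fin.succ_inj] using h
    · intro b hb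
      simp only [Finset.mem_filter, Finset.mem_univ, true_and] at hb
      obtain ⟨hlt, h0⟩ := hb
      have h2 : b.2 ≠ 0 := by
        intro h; rw [h] at hlt; exact absurd hlt (Fin.not_lt_zero _)
      refine ⟨(b.1.pred h0, b.2.pred h2), ?_, ?_⟩
      · simp only [Finset.mem_filter, Finset.mem_univ, true_and]
        rw [← Fin.succ_lt_succ_iff, Fin.succ_pred, Fin.succ_pred]
        exact hlt
      · simp [Prod.ext_iff]
    · intro a _
      rfl

lemma sinh_pi_I_div_two : Complex.sinh (↑Real.pi * Complex.I / 2) = Complex.I := by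
  have h : (↑Real.pi * Complex.I) / 2 = (↑(Real.pi/2) : ℂ) * Complex.I := by
    push_cast; ring
  rw [h, Complex.sinh_mul_I, ← Complex.ofReal_sin, Real.sin_pi_div_two, Complex.ofReal_one,
    one_mul]

lemma cosh_pi_I_div_two : Complex.cosh (↑Real.pi * Complex.I / 2) = 0 := by
  have h : (↑Real.pi * Complex.I) / 2 = (↑(Real.pi/2) : ℂ) * Complex.I := by
    push_cast; ring
  rw [h, Complex.cosh_mul_I, ← Complex.ofReal_cos, Real.cos_pi_div_two, Complex.ofReal_zero]

lemma tanh_mul_tanh_shift (a : ℂ) (h1 : Complex.cosh a ≠ 0) (h2 : Complex.sinh a ≠ 0) :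
    Complex.tanh a * Complex.tanh (a + ↑Real.pi * Complex.I / 2) = 1 := by
  rw [Complex.tanh_eq_sinh_div_cosh, Complex.tanh_eq_sinh_div_cosh, Complex.sinh_add,
    Complex.cosh_add, sinh_pi_I_div_two, cosh_pi_I_div_two]
  field_simp
  ring

lemma part_A (a : ℂ) :
    Tendsto (fun w : ℂ => (w - (a + ↑Real.pi * Complex.I)) * Complex.tanh ((a - w) / 2))
      (𝓝[≠] (a + ↑Real.pi * Complex.I)) (𝓝 (-2)) := by
  set c : ℂ := a + ↑Real.pi * Complex.I with hc
  set z₀ : ℂ := -(↑Real.pi * Complex.I) / 2 with hz₀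
  have hcosh0 : Complex.cosh z₀ = 0 := by
    rw [hz₀, neg_div, Complex.cosh_neg, cosh_pi_I_div_two]
  have hsinh0 : Complex.sinh z₀ = -Complex.I := by
    rw [hz₀, neg_div, Complex.sinh_neg, sinh_pi_I_div_two]
  -- slope limit
  have hd : HasDerivAt Complex.cosh (Complex.sinh z₀) z₀ := Complex.hasDerivAt_cosh z₀
  have hslope : Tendsto (slope Complex.cosh z₀) (𝓝[≠] z₀) (𝓝 (-Complex.I)) := by
    rw [← hsinh0]; exact hasDerivAt_iff_tendsto_slope.mp hd
  have hinv : Tendsto (fun z => (slope Complex.cosh z₀ z)⁻¹) (𝓝[≠] z₀)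
      (𝓝 Complex.I) := by
    have := hslope.inv₀ (by simp [Complex.I_ne_zero])
    simpa [inv_neg, Complex.inv_I] using this
  have hsinh : Tendsto Complex.sinh (𝓝[≠] z₀) (𝓝 (-Complex.I)) := by
    rw [← hsinh0]
    exact Complex.continuous_sinh.continuousAt.tendsto.mono_left nhdsWithin_le_nhds
  have hG : Tendsto (fun z => -2 * (Complex.sinh z * (slope Complex.cosh z₀ z)⁻¹))
      (𝓝[≠] z₀) (𝓝 (-2)) := by
    have := (tendsto_const_nhds (x := (-2 : ℂ))).mul (hsinh.mul hinv)
    simpa [Complex.I_mul_I] using this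
  -- the map φ
  have hφ : Tendsto (fun w : ℂ => (a - w) / 2) (𝓝[≠] c) (𝓝[≠] z₀) := by
    rw [tendsto_nhdsWithin_iff]
    constructor
    · have h1 : Tendsto (fun w : ℂ => (a - w) / 2) (𝓝 c) (𝓝 ((a - c) / 2)) := by
        exact ((continuous_const.sub continuous_id).div_const 2).continuousAt
      have h2 : (a - c) / 2 = z₀ := by rw [hc, hz₀]; ring
      rw [h2] at h1
      exact h1.mono_left nhdsWithin_le_nhds
    · filter_upwards [eventually_mem_nhdsWithin] with w hw
      intro h
      apply hw
      have : w = c := by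
        rw [hz₀] at h
        simp only [Set.mem_singleton_iff] at h
        rw [hc]
        linear_combination (-2 : ℂ) * h
      simpa using this
  have hcomp := hG.comp hφ
  apply hcomp.congr
  intro w
  simp only [Function.comp_apply]
  rw [Complex.tanh_eq_sinh_div_cosh, slope_def_field, hcosh0, sub_zero]
  simp only [hz₀, hc]
  rw [div_eq_mul_inv (Complex.cosh _), mul_inv, inv_inv, div_eq_mul_inv (Complex.sinh _)]
  ring

lemma cosh_add_pi_I_div_two (a : ℂ) :
    Complex.cosh (a + ↑Real.pi * Complex.I / 2) = Complex.I * Complex.sinh a := by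
  rw [Complex.cosh_add, sinh_pi_I_div_two, cosh_pi_I_div_two]; ring

/-- The meromorphic function `M_n(ζ) = ∏_{i<j} tanh((ζ_i - ζ_j)/2)` has a
first-order pole at `ζ₂ - ζ₁ = iπ` with residue `-2 M_{n-2}(ζ₃,…,ζ_n)`:
letting the second variable `w` tend to `ζ₁ + iπ` (the remaining variables
being fixed and generic, i.e. no other factor is singular there),
`(w - (ζ₁ + iπ)) M_n(ζ₁, w, ζ₃, …, ζ_n)` tends to
`-2 ∏_{3 ≤ i < j ≤ n} tanh((ζ_i - ζ_j)/2)`. -/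
theorem Modd_residue (n : ℕ) (ζ : Fin (n + 2) → ℂ)
    (hgen : ∀ i j : Fin (n + 2), i < j → ¬(i = 0 ∧ j = 1) →
      Complex.cosh ((Function.update ζ 1 (ζ 0 + Real.pi * Complex.I) i
          - Function.update ζ 1 (ζ 0 + Real.pi * Complex.I) j) / 2) ≠ 0) :
    Tendsto
      (fun w : ℂ => (w - (ζ 0 + Real.pi * Complex.I)) *
        ∏ p ∈ Finset.univ.filter (fun p : Fin (n + 2) × Fin (n + 2) => p.1 < p.2),
          Complex.tanh ((Function.update ζ 1 w p.1 - Function.update ζ 1 w p.2) / 2))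
      (𝓝[≠] (ζ 0 + Real.pi * Complex.I))
      (𝓝 (-2 *
        ∏ p ∈ Finset.univ.filter (fun p : Fin n × Fin n => p.1 < p.2),
          Complex.tanh ((ζ p.1.succ.succ - ζ p.2.succ.succ) / 2))) := by
  set c : ℂ := ζ 0 + ↑Real.pi * Complex.I with hc
  set K : ℂ := ∏ p ∈ Finset.univ.filter (fun p : Fin n × Fin n => p.1 < p.2),
      Complex.tanh ((ζ p.1.succ.succ - ζ p.2.succ.succ) / 2) with hK
  have hne1 : ∀ j : Fin n, (j.succ.succ : Fin (n + 2)) ≠ 1 := by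
    intro j
    simp only [ne_eq, Fin.ext_iff, Fin.val_succ, Fin.val_one]
    omega
  have h01 : (0 : Fin (n + 2)) ≠ 1 := by
    simp only [ne_eq, Fin.ext_iff, Fin.val_zero, Fin.val_one]
    omega
  have hlt0 : ∀ j : Fin n, (0 : Fin (n + 2)) < j.succ.succ := by
    intro j
    simp only [Fin.lt_def, Fin.val_succ, Fin.val_zero]
    omega
  have hlt1 : ∀ j : Fin n, (1 : Fin (n + 2)) < j.succ.succ := by
    intro j
    simp only [Fin.lt_def, Fin.val_succ, Fin.val_one]
    omega
  have hC : ∀ j : Fin n, Complex.cosh ((ζ 0 - ζ j.succ.succ) / 2) ≠ 0 := by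
    intro j
    have h := hgen 0 j.succ.succ (hlt0 j) (by intro h; exact hne1 j h.2)
    rwa [Function.update_of_ne h01, Function.update_of_ne (hne1 j)] at h
  have hCc : ∀ j : Fin n, Complex.cosh ((c - ζ j.succ.succ) / 2) ≠ 0 := by
    intro j
    have h := hgen 1 j.succ.succ (hlt1 j) (by intro h; exact h01 h.1.symm)
    rwa [Function.update_self, Function.update_of_ne (hne1 j)] at h
  have hS : ∀ j : Fin n, Complex.sinh ((ζ 0 - ζ j.succ.succ) / 2) ≠ 0 := by
    intro j h
    apply hCc j
    have hrw : (c - ζ j.succ.succ) / 2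
        = (ζ 0 - ζ j.succ.succ) / 2 + ↑Real.pi * Complex.I / 2 := by rw [hc]; ring
    rw [hrw, cosh_add_pi_I_div_two, h, mul_zero]
  have hone : ∀ j : Fin n,
      Complex.tanh ((ζ 0 - ζ j.succ.succ) / 2) * Complex.tanh ((c - ζ j.succ.succ) / 2) = 1 := by
    intro j
    have hrw : (c - ζ j.succ.succ) / 2
        = (ζ 0 - ζ j.succ.succ) / 2 + ↑Real.pi * Complex.I / 2 := by rw [hc]; ring
    rw [hrw]
    exact tanh_mul_tanh_shift _ (hC j) (hS j)
  have key : ∀ w : ℂ,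
      (∏ p ∈ Finset.univ.filter (fun p : Fin (n + 2) × Fin (n + 2) => p.1 < p.2),
        Complex.tanh ((Function.update ζ 1 w p.1 - Function.update ζ 1 w p.2) / 2))
      = Complex.tanh ((ζ 0 - w) / 2) *
        ((∏ j : Fin n, Complex.tanh ((ζ 0 - ζ j.succ.succ) / 2) *
            Complex.tanh ((w - ζ j.succ.succ) / 2)) * K) := by
    intro w
    rw [pair_prod_succ (fun i j : Fin (n + 2) =>
      Complex.tanh ((Function.update ζ 1 w i - Function.update ζ 1 w j) / 2))]
    rw [pair_prod_succ (fun i j : Fin (n + 1) =>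
      Complex.tanh ((Function.update ζ 1 w i.succ - Function.update ζ 1 w j.succ) / 2))]
    rw [Fin.prod_univ_succ (fun j : Fin (n + 1) =>
      Complex.tanh ((Function.update ζ 1 w 0 - Function.update ζ 1 w j.succ) / 2))]
    simp only [Fin.succ_zero_eq_one, Function.update_self,
      Function.update_of_ne h01, Function.update_of_ne (hne1 _)]
    rw [Finset.prod_mul_distrib, hK]
    ring
  have hfun : (fun w : ℂ => (w - c) *
        ∏ p ∈ Finset.univ.filter (fun p : Fin (n + 2) × Fin (n + 2) => p.1 < p.2),
          Complex.tanh ((Function.update ζ 1 w p.1 - Function.update ζ 1 w p.2) / 2))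
      = fun w : ℂ => ((w - c) * Complex.tanh ((ζ 0 - w) / 2)) *
        ((∏ j : Fin n, Complex.tanh ((ζ 0 - ζ j.succ.succ) / 2) *
            Complex.tanh ((w - ζ j.succ.succ) / 2)) * K) := by
    funext w
    rw [key w]
    ring
  rw [hfun]
  have hA := part_A (ζ 0)
  have hB : Tendsto (fun w : ℂ =>
      (∏ j : Fin n, Complex.tanh ((ζ 0 - ζ j.succ.succ) / 2) *
          Complex.tanh ((w - ζ j.succ.succ) / 2)) * K)
      (𝓝[≠] c)
      (𝓝 ((∏ j : Fin n, Complex.tanh ((ζ 0 - ζ j.succ.succ) / 2) *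
          Complex.tanh ((c - ζ j.succ.succ) / 2)) * K)) := by
    apply Tendsto.mono_left _ nhdsWithin_le_nhds
    apply Tendsto.mul _ tendsto_const_nhds
    apply tendsto_finset_prod
    intro j _
    apply Tendsto.mul tendsto_const_nhds
    have h1 : ContinuousAt (fun w : ℂ => (w - ζ j.succ.succ) / 2) c :=
      ((continuous_id.sub continuous_const).div_const 2).continuousAt
    have heq : (fun w : ℂ => Complex.tanh ((w - ζ j.succ.succ) / 2))
        = fun w : ℂ => Complex.sinh ((w - ζ j.succ.succ) / 2) /
            Complex.cosh ((w - ζ j.succ.succ) / 2) :=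
      funext fun w => Complex.tanh_eq_sinh_div_cosh _
    rw [show Complex.tanh ((c - ζ j.succ.succ) / 2)
        = Complex.sinh ((c - ζ j.succ.succ) / 2) / Complex.cosh ((c - ζ j.succ.succ) / 2)
        from Complex.tanh_eq_sinh_div_cosh _, heq]
    exact ((Complex.continuous_sinh.continuousAt.comp h1).div
      (Complex.continuous_cosh.continuousAt.comp h1) (hCc j))
  have hP : (∏ j : Fin n, Complex.tanh ((ζ 0 - ζ j.succ.succ) / 2) *
      Complex.tanh ((c - ζ j.succ.succ) / 2)) = 1 :=
    Finset.prod_eq_one fun j _ => hone j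
  have htot := hA.mul hB
  rw [hP, one_mul] at htot
  exact htot
end

section
/- For ζ in the tube ℝⁿ + i·I⁺ₙ, where I⁺ₙ = {λ ∈ ℝⁿ : 0 < λ₁ < … < λₙ < π}, there is a constant c (depending only on n) such that |M_n(ζ)| ≤ c · dist(Im ζ, ∂I⁺ₙ)^{-⌊n/2⌋}. -/
set_option maxHeartbeats 1000000

open Finset Metric

/-- The open simplex `I⁺ₙ = {λ : 0 < λ₁ < … < λₙ < π}`, as a subset of
Euclidean space. -/
def simplexIplus (n : ℕ) : Set (EuclideanSpace ℝ (Fin n)) :=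
  {l | StrictMono l ∧ ∀ i, l i ∈ Set.Ioo 0 Real.pi}

section Analytic
open Complex Real


lemma sq_abs_sinh (x y : ℝ) :
    norm (Complex.sinh (x + y * Complex.I)) ^ 2 = Real.sinh x ^ 2 + Real.sin y ^ 2 := by
  rw [Complex.sinh_add, Complex.sinh_mul_I, Complex.cosh_mul_I]
  have : (Complex.sinh x * Complex.cos y + Complex.cosh x * (Complex.sin y * Complex.I))
      = ((Real.sinh x * Real.cos y : ℝ) : ℂ) + ((Real.cosh x * Real.sin y : ℝ)) * Complex.I := by
    push_cast [← Complex.ofReal_sinh, ← Complex.ofReal_cosh, ← Complex.ofReal_sin,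
      ← Complex.ofReal_cos]
    ring
  rw [this, Complex.sq_norm, Complex.normSq_add_mul_I]
  have h1 := Real.cosh_sq x
  have h2 := Real.sin_sq_add_cos_sq y
  nlinarith [h1, h2]

lemma sq_abs_cosh (x y : ℝ) :
    norm (Complex.cosh (x + y * Complex.I)) ^ 2 = Real.sinh x ^ 2 + Real.cos y ^ 2 := by
  rw [Complex.cosh_add, Complex.sinh_mul_I, Complex.cosh_mul_I]
  have : (Complex.cosh x * Complex.cos y + Complex.sinh x * (Complex.sin y * Complex.I))
      = ((Real.cosh x * Real.cos y : ℝ) : ℂ) + ((Real.sinh x * Real.sin y : ℝ)) * Complex.I := by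
    push_cast [← Complex.ofReal_sinh, ← Complex.ofReal_cosh, ← Complex.ofReal_sin,
      ← Complex.ofReal_cos]
    ring
  rw [this, Complex.sq_norm, Complex.normSq_add_mul_I]
  have h1 := Real.cosh_sq x
  have h2 := Real.sin_sq_add_cos_sq y
  nlinarith [h1, h2]

lemma coth_bound (u : ℂ) (h0 : 0 ≤ u.im) (h1 : u.im ≤ π/2) (hu : u ≠ 0) :
    norm (Complex.cosh u / Complex.sinh u) ≤ 1 + (π/2) / norm u := by
  obtain ⟨x, y, rfl⟩ : ∃ x y : ℝ, u = x + y * Complex.I :=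
    ⟨u.re, u.im, (Complex.re_add_im u).symm⟩
  have hy : (↑x + ↑y * Complex.I).im = y := by simp
  rw [hy] at h0 h1
  have ha : 0 < norm (x + y * Complex.I) := by
    simpa using norm_pos_iff.mpr hu
  set a := norm (x + y * Complex.I) with haa
  have ha2 : a ^ 2 = x ^ 2 + y ^ 2 := by
    rw [haa, Complex.sq_norm, Complex.normSq_add_mul_I]
  have hs2 := sq_abs_sinh x y
  have hc2 := sq_abs_cosh x y
  set s := norm (Complex.sinh (x + y * Complex.I)) with hss
  set c := norm (Complex.cosh (x + y * Complex.I)) with hcc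
  have hsin : 2/π * y ≤ Real.sin y := Real.mul_le_sin h0 h1
  have hsiny : 0 ≤ Real.sin y := le_trans (by positivity) hsin
  have hxx : x ^ 2 ≤ Real.sinh x ^ 2 := by
    have h' : |x| ≤ Real.sinh |x| := Real.self_le_sinh_iff.2 (abs_nonneg x)
    have h'' : Real.sinh |x| = |Real.sinh x| := (Real.abs_sinh x).symm
    nlinarith [abs_nonneg x, abs_nonneg (Real.sinh x), _root_.sq_abs x, _root_.sq_abs (Real.sinh x)]
  have hpi : (2:ℝ) ≤ π := Real.two_le_pi
  -- lower bound for s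
  have hslow : 2/π * a ≤ s := by
    have h2pi : (0:ℝ) < 2/π := by positivity
    have hs2' : (2/π * a)^2 ≤ s ^ 2 := by
      rw [hs2]
      have hy2 : (2/π)^2 * y^2 ≤ Real.sin y ^ 2 := by
        nlinarith [mul_self_le_mul_self (show (0:ℝ) ≤ 2/π*y by positivity) hsin]
      have ht1 : 2/π ≤ (1:ℝ) := by
        rw [div_le_one (by positivity)]; linarith
      have ht2 : (2/π)^2 ≤ (1:ℝ) := by nlinarith
      have hx2 : (2/π)^2 * x^2 ≤ Real.sinh x ^ 2 := by
        have := mul_le_mul_of_nonneg_right ht2 (sq_nonneg x)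
        nlinarith
      nlinarith
    nlinarith [norm_nonneg (Complex.sinh (x + y * Complex.I)), h2pi, ha]
  have hs0 : 0 < s := lt_of_lt_of_le (by positivity) hslow
  have hcub : c ≤ s + 1 := by
    have : c^2 ≤ s^2 + 1 := by
      rw [hs2, hc2]
      nlinarith [Real.cos_sq_le_one y, sq_nonneg (Real.sin y)]
    nlinarith [norm_nonneg (Complex.cosh (x + y * Complex.I))]
  rw [norm_div, ← hss, ← hcc]
  rw [div_le_iff₀ hs0]
  have key : (1 + π/2/a) * s = s + (π/2) * (s/a) := by field_simp
  rw [key]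
  have hsa : (2:ℝ)/π ≤ s/a := by
    rw [le_div_iff₀ ha]; nlinarith
  have : (1:ℝ) ≤ (π/2) * (s/a) := by
    have hππ : (0:ℝ) < π := Real.pi_pos
    have : π/2 * (2/π) = 1 := by field_simp
    nlinarith [hsa, hππ]
  linarith

lemma sinh_upper {x : ℝ} (h0 : 0 ≤ x) (h1 : x ≤ 1/2) : Real.sinh x ≤ 19/18 * x := by
  have hx1 : |x| ≤ 1 := abs_le.2 ⟨by linarith, by linarith⟩
  have hx1' : |(-x)| ≤ 1 := by rw [abs_neg]; exact hx1
  have hp := Real.exp_bound hx1 (n := 3) (by norm_num)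
  have hm := Real.exp_bound hx1' (n := 3) (by norm_num)
  rw [Real.sinh_eq]
  have hsum : ∑ m ∈ Finset.range 3, x ^ m / (m.factorial : ℝ) = 1 + x + x^2/2 := by
    norm_num [Finset.sum_range_succ, Nat.factorial]
  have hsum' : ∑ m ∈ Finset.range 3, (-x) ^ m / (m.factorial : ℝ) = 1 - x + x^2/2 := by
    norm_num [Finset.sum_range_succ, Nat.factorial]
    ring
  rw [hsum] at hp
  rw [hsum'] at hm
  rw [_root_.abs_of_nonneg h0] at hp
  rw [abs_neg, _root_.abs_of_nonneg h0] at hm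
  norm_num [Nat.factorial] at hp hm
  have hp' := (abs_le.1 hp).2
  have hm' := (abs_le.1 hm).1
  nlinarith [hp', hm']

lemma tanh_small (u : ℂ) (h : norm u ≤ 1/2) :
    norm (Complex.tanh u) ≤ 2 * norm u := by
  obtain ⟨x, y, rfl⟩ : ∃ x y : ℝ, u = x + y * Complex.I :=
    ⟨u.re, u.im, (Complex.re_add_im u).symm⟩
  have ha2 : norm (x + y * Complex.I) ^ 2 = x ^ 2 + y ^ 2 := by
    rw [Complex.sq_norm, Complex.normSq_add_mul_I]
  set a := norm (x + y * Complex.I) with haa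
  have ha0 : 0 ≤ a := norm_nonneg _
  have hxa : |x| ≤ a := by
    nlinarith [_root_.sq_abs x, sq_nonneg y]
  have hya : |y| ≤ a := by
    nlinarith [_root_.sq_abs y, sq_nonneg x]
  have hx2 : |x| ≤ 1/2 := le_trans hxa h
  have hy2 : |y| ≤ 1/2 := le_trans hya h
  have hsinh : Real.sinh x ^ 2 ≤ (19/18)^2 * x^2 := by
    have h' : Real.sinh |x| ≤ 19/18 * |x| := sinh_upper (abs_nonneg x) hx2
    have h'' : |Real.sinh x| = Real.sinh |x| := Real.abs_sinh x
    nlinarith [abs_nonneg (Real.sinh x), abs_nonneg x, _root_.sq_abs x, _root_.sq_abs (Real.sinh x)]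
  have hcos : 7/8 ≤ Real.cos y := by
    have := Real.one_sub_sq_div_two_le_cos (x := y)
    nlinarith [_root_.sq_abs y]
  have hsin2 : Real.sin y ^ 2 ≤ y ^ 2 := Real.sin_sq_le_sq
  rw [Complex.tanh_eq_sinh_div_cosh, norm_div]
  have hs2 := sq_abs_sinh x y
  have hc2 := sq_abs_cosh x y
  set s := norm (Complex.sinh (x + y * Complex.I)) with hss
  set c := norm (Complex.cosh (x + y * Complex.I)) with hcc
  have hs0 : 0 ≤ s := norm_nonneg _
  have hc0 : 0 ≤ c := norm_nonneg _
  have hsu : s ≤ 19/18 * a := by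
    have : s^2 ≤ (19/18 * a)^2 := by rw [hs2]; nlinarith
    nlinarith
  have hcl : 7/8 ≤ c := by
    have : (7/8:ℝ)^2 ≤ c^2 := by rw [hc2]; nlinarith [sq_nonneg (Real.sinh x)]
    nlinarith
  have hc0' : (0:ℝ) < c := by linarith
  rw [div_le_iff₀ hc0']
  nlinarith

lemma tanh_eq_coth (w : ℂ) :
    Complex.tanh (w/2) = Complex.cosh ((w + ↑π * Complex.I)/2) /
      Complex.sinh ((w + ↑π * Complex.I)/2) := by
  set u := (w + ↑π * Complex.I)/2 with hu
  have hw : w/2 = u + (↑(-(π/2)) : ℂ) * Complex.I := by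
    rw [hu]; push_cast; ring
  rw [Complex.tanh_eq_sinh_div_cosh, hw, Complex.sinh_add, Complex.cosh_add,
    Complex.sinh_mul_I, Complex.cosh_mul_I]
  rw [show Complex.cos (↑(-(π/2)) : ℂ) = 0 by
      rw [← Complex.ofReal_cos]; norm_num [Real.cos_pi_div_two],
    show Complex.sin (↑(-(π/2)) : ℂ) = -1 by
      rw [← Complex.ofReal_sin]; norm_num [Real.sin_pi_div_two]]
  rw [show Complex.sinh u * 0 + Complex.cosh u * (-1 * Complex.I)
      = Complex.cosh u * (-Complex.I) by ring,
    show Complex.cosh u * 0 + Complex.sinh u * (-1 * Complex.I)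
      = Complex.sinh u * (-Complex.I) by ring]
  rw [mul_div_mul_right _ _ (by simp : (-Complex.I) ≠ 0)]


lemma half_im (z : ℂ) : (z/2).im = z.im / 2 := by
  rw [show z/2 = z * ((1:ℝ)/2 : ℝ) by push_cast; ring]
  simp [Complex.mul_im]
  ring

lemma half_abs (z : ℂ) : norm (z/2) = norm z / 2 := by
  rw [norm_div]
  norm_num

lemma bim : ∀ w : ℂ, (w + ↑π * Complex.I).im = w.im + π := by
  intro w; simp

lemma tanh_bound_near_pole (w : ℂ) (h1 : -π ≤ w.im) (h2 : w.im ≤ 0)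
    (hb0 : w + ↑π * Complex.I ≠ 0) (hb : norm (w + ↑π * Complex.I) ≤ 1/2) :
    norm (Complex.tanh (w/2)) ≤ 5 / norm (w + ↑π * Complex.I) := by
  rw [tanh_eq_coth]
  have ht : 0 < norm (w + ↑π * Complex.I) := norm_pos_iff.mpr hb0
  have him : ((w + ↑π * Complex.I)/2).im = (w.im + π)/2 := by rw [half_im, bim]
  have habs : norm ((w + ↑π * Complex.I)/2) = norm (w + ↑π * Complex.I) / 2 :=
    half_abs _
  have hu0 : (w + ↑π * Complex.I)/2 ≠ 0 := div_ne_zero hb0 (by norm_num)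
  have hc := coth_bound ((w + ↑π * Complex.I)/2) (by rw [him]; linarith)
    (by rw [him]; linarith [Real.pi_pos]) hu0
  rw [habs] at hc
  have heq : (π/2) / (norm (w + ↑π * Complex.I) / 2) = π / norm (w + ↑π * Complex.I) := by
    field_simp
  rw [heq] at hc
  refine hc.trans ?_
  rw [← sub_nonneg]
  have hπ : π ≤ 4 := Real.pi_le_four
  have : 5 / norm (w + ↑π * Complex.I) - (1 + π / norm (w + ↑π * Complex.I))
      = (5 - π - norm (w + ↑π * Complex.I)) / norm (w + ↑π * Complex.I) := by
    field_simp
    ring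
  rw [this]
  apply div_nonneg _ ht.le
  linarith

lemma tanh_bound_generic (w : ℂ) (h1 : -π ≤ w.im) (h2 : w.im ≤ 0)
    (hb : 1/2 ≤ norm (w + ↑π * Complex.I)) :
    norm (Complex.tanh (w/2)) ≤ 10 := by
  rw [tanh_eq_coth]
  have hb0 : w + ↑π * Complex.I ≠ 0 := by
    intro h; rw [h] at hb; simp at hb; linarith
  have him : ((w + ↑π * Complex.I)/2).im = (w.im + π)/2 := by rw [half_im, bim]
  have habs : norm ((w + ↑π * Complex.I)/2) = norm (w + ↑π * Complex.I) / 2 :=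
    half_abs _
  have hu0 : (w + ↑π * Complex.I)/2 ≠ 0 := div_ne_zero hb0 (by norm_num)
  have hc := coth_bound ((w + ↑π * Complex.I)/2) (by rw [him]; linarith)
    (by rw [him]; linarith [Real.pi_pos]) hu0
  refine hc.trans ?_
  rw [habs]
  have h4 : (1:ℝ)/4 ≤ norm (w + ↑π * Complex.I) / 2 := by linarith
  have hπ : π ≤ 4 := Real.pi_le_four
  have : (π/2) / (norm (w + ↑π * Complex.I) / 2) ≤ (π/2) / (1/4) := by
    apply div_le_div_of_nonneg_left _ (by norm_num) h4
    linarith [Real.pi_pos]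
  refine (by linarith : (1:ℝ) + (π/2) / (norm (w + ↑π * Complex.I) / 2)
      ≤ 1 + (π/2)/(1/4)).trans ?_
  linarith

lemma tanh_bound_compensator (w : ℂ) (h : norm w ≤ 1) :
    norm (Complex.tanh (w/2)) ≤ norm w := by
  have := tanh_small (w/2) (by rw [half_abs]; linarith)
  rw [half_abs] at this
  linarith

end Analytic

section Dist
open Finset Metric Real


lemma isOpen_simplexIplus (n : ℕ) : IsOpen (simplexIplus n) := by
  have hc : ∀ i : Fin n, Continuous fun l : EuclideanSpace ℝ (Fin n) => l i :=
    fun i => (EuclideanSpace.proj (𝕜 := ℝ) i).continuous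
  have : simplexIplus n =
      (⋂ i, ⋂ j, {l : EuclideanSpace ℝ (Fin n) | i < j → l i < l j}) ∩
      ((⋂ i, {l : EuclideanSpace ℝ (Fin n) | 0 < l i}) ∩
       (⋂ i, {l : EuclideanSpace ℝ (Fin n) | l i < Real.pi})) := by
    ext l
    simp only [simplexIplus, Set.mem_setOf_eq, Set.mem_inter_iff, Set.mem_iInter,
      Set.mem_Ioo]
    constructor
    · rintro ⟨h1, h2⟩
      exact ⟨fun i j hij => h1 hij, fun i => (h2 i).1, fun i => (h2 i).2⟩
    · rintro ⟨h1, h2, h3⟩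
      exact ⟨fun i j hij => h1 i j hij, fun i => ⟨h2 i, h3 i⟩⟩
  rw [this]
  refine IsOpen.inter (isOpen_iInter_of_finite fun i => isOpen_iInter_of_finite fun j => ?_)
    (IsOpen.inter (isOpen_iInter_of_finite fun i => isOpen_lt continuous_const (hc i))
      (isOpen_iInter_of_finite fun i => isOpen_lt (hc i) continuous_const))
  by_cases h : i < j
  · simp only [h, true_implies]
    exact isOpen_lt (hc i) (hc j)
  · simp only [h, false_implies, Set.setOf_true]
    exact isOpen_univ

def upd {n : ℕ} (l : EuclideanSpace ℝ (Fin n)) (i0 : Fin n) (t : ℝ) :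
    EuclideanSpace ℝ (Fin n) := WithLp.toLp 2 (Function.update l i0 t)

lemma upd_apply {n : ℕ} (l : EuclideanSpace ℝ (Fin n)) (i0 : Fin n) (t : ℝ) (i : Fin n) :
    upd l i0 t i = Function.update l i0 t i := rfl

section dist
variable {n : ℕ} [NeZero n] (l : EuclideanSpace ℝ (Fin n)) (hl : l ∈ simplexIplus n)

-- an auxiliary: update point distance
lemma dist_update (t : ℝ) (i0 : Fin n) :
    dist l (upd l i0 t) = |l i0 - t| := by
  show dist l (WithLp.toLp 2 (Function.update l i0 t)) = _
  rw [EuclideanSpace.dist_eq]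
  rw [Finset.sum_eq_single i0]
  · show √(dist (l i0) (Function.update l i0 t i0) ^ 2) = _
    rw [Function.update_self, Real.dist_eq, Real.sqrt_sq_eq_abs, abs_abs]
  · intro b _ hb
    show dist (l b) (Function.update l i0 t b) ^ 2 = 0
    rw [Function.update_of_ne hb]
    simp
  · simp

lemma dist_update₂ (i0 : Fin n) (a b : ℝ) :
    dist (upd l i0 a) (upd l i0 b) = |a - b| := by
  rw [EuclideanSpace.dist_eq]
  rw [Finset.sum_eq_single i0]
  · simp [upd, Real.dist_eq, Real.sqrt_sq_eq_abs]
  · intro c _ hc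
    simp [upd, Function.update_of_ne hc]
  · simp

lemma update_mem_closure (i0 : Fin n) (u : ℕ → ℝ) (t : ℝ)
    (hu : ∀ k, upd l i0 (u k) ∈ simplexIplus n)
    (ht : Filter.Tendsto u Filter.atTop (nhds t)) :
    upd l i0 t ∈ closure (simplexIplus n) := by
  have htd : Filter.Tendsto
      (fun k => upd l i0 (u k))
      Filter.atTop (nhds (upd l i0 t)) := by
    rw [tendsto_iff_dist_tendsto_zero]
    simp only [dist_update₂ l i0]
    have h0 : Filter.Tendsto (fun k => u k - t) Filter.atTop (nhds 0) := by
      simpa using ht.sub_const t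
    simpa using h0.abs
  exact mem_closure_of_tendsto htd (Filter.Eventually.of_forall hu)

lemma mem_frontier_bot (hl : l ∈ simplexIplus n) :
    upd l 0 0 ∈ frontier (simplexIplus n) := by
  rw [(isOpen_simplexIplus n).frontier_eq]
  constructor
  · refine update_mem_closure l 0 (fun k => l 0 / (k+2)) 0 (fun k => ?_) ?_
    · have hl0 : 0 < l 0 := (hl.2 0).1
      have hk : (1:ℝ) < (k:ℝ) + 2 := by
        have := Nat.cast_nonneg (α := ℝ) k; linarith
      have hlt : l 0 / ((k:ℝ)+2) < l 0 := div_lt_self hl0 hk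
      constructor
      · intro a b hab
        show Function.update l 0 (l 0 / ((k:ℝ)+2)) a < Function.update l 0 (l 0 / ((k:ℝ)+2)) b
        rcases eq_or_ne a 0 with rfl | ha
        · rw [Function.update_self, Function.update_of_ne hab.ne']
          have : l 0 ≤ l b := hl.1.monotone hab.le
          linarith
        · have hb : b ≠ 0 := fun h => by
            rw [h] at hab
            exact absurd hab (not_lt.2 (Fin.zero_le a))
          rw [Function.update_of_ne ha, Function.update_of_ne hb]
          exact hl.1 hab
      · intro i
        show Function.update l 0 (l 0 / ((k:ℝ)+2)) i ∈ Set.Ioo 0 Real.pi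
        rcases eq_or_ne i 0 with rfl | hi
        · rw [Function.update_self]
          have := (hl.2 0).2
          constructor
          · positivity
          · linarith
        · rw [Function.update_of_ne hi]
          exact hl.2 i
    · have : Filter.Tendsto (fun k : ℕ => l 0 / (k : ℝ)) Filter.atTop (nhds 0) :=
        tendsto_const_div_atTop_nhds_zero_nat _
      have := this.comp (Filter.tendsto_add_atTop_nat 2)
      refine this.congr fun k => ?_
      simp only [Function.comp_apply]
      push_cast
      ring_nf
  · intro h
    exact absurd (h.2 0).1 (by simp [upd])

lemma infDist_le_bot (hl : l ∈ simplexIplus n) :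
    Metric.infDist l (frontier (simplexIplus n)) ≤ l 0 := by
  have h := Metric.infDist_le_dist_of_mem (x := l) (mem_frontier_bot l hl)
  rw [dist_update l 0 0] at h
  simpa [abs_of_nonneg (hl.2 0).1.le] using h

lemma infDist_le_top (hl : l ∈ simplexIplus n) :
    Metric.infDist l (frontier (simplexIplus n)) ≤
      Real.pi - l ⟨n-1, Nat.sub_lt (Nat.pos_of_ne_zero (NeZero.ne n)) one_pos⟩ := by
  set iL : Fin n := ⟨n-1, Nat.sub_lt (Nat.pos_of_ne_zero (NeZero.ne n)) one_pos⟩ with hiL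
  have hmax : ∀ i : Fin n, i ≤ iL := by
    intro i
    rw [hiL, Fin.le_def]
    have := i.isLt
    simp only []
    omega
  have hy : upd l iL Real.pi ∈
      frontier (simplexIplus n) := by
    rw [(isOpen_simplexIplus n).frontier_eq]
    constructor
    · refine update_mem_closure l iL
        (fun k => Real.pi - (Real.pi - l iL) / (k+2)) Real.pi (fun k => ?_) ?_
      · have hlπ : l iL < Real.pi := (hl.2 iL).2
        have hl0 : 0 < l iL := (hl.2 iL).1
        have hk : (1:ℝ) < (k:ℝ) + 2 := by
          have := Nat.cast_nonneg (α := ℝ) k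
          linarith
        have hlt : (Real.pi - l iL) / ((k:ℝ)+2) < Real.pi - l iL :=
          div_lt_self (by linarith) hk
        have hpos : 0 < (Real.pi - l iL) / ((k:ℝ)+2) := div_pos (by linarith) (by linarith)
        constructor
        · intro a b hab
          show Function.update l iL (Real.pi - (Real.pi - l iL) / ((k:ℝ)+2)) a
            < Function.update l iL (Real.pi - (Real.pi - l iL) / ((k:ℝ)+2)) b
          rcases eq_or_ne b iL with rfl | hb
          · rw [Function.update_self, Function.update_of_ne hab.ne]
            have : l a < l iL := hl.1 hab
            linarith
          · have ha : a ≠ iL := by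
              intro h
              exact absurd (lt_of_lt_of_le hab (hmax b)) (by rw [h]; exact lt_irrefl _)
            rw [Function.update_of_ne ha, Function.update_of_ne hb]
            exact hl.1 hab
        · intro i
          show Function.update l iL (Real.pi - (Real.pi - l iL) / ((k:ℝ)+2)) i ∈ Set.Ioo 0 Real.pi
          rcases eq_or_ne i iL with rfl | hi
          · rw [Function.update_self]
            have := (hl.2 iL).1
            constructor
            · linarith
            · linarith
          · rw [Function.update_of_ne hi]
            exact hl.2 i
      · have h1 : Filter.Tendsto (fun k : ℕ => (Real.pi - l iL) / (k : ℝ))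
            Filter.atTop (nhds 0) := tendsto_const_div_atTop_nhds_zero_nat _
        have h2 := h1.comp (Filter.tendsto_add_atTop_nat 2)
        have h3 := (tendsto_const_nhds (x := Real.pi) (f := Filter.atTop (α := ℕ))).sub h2
        rw [sub_zero] at h3
        refine h3.congr fun k => ?_
        simp only [Function.comp_apply]
        push_cast
        ring_nf
    · intro h
      have := (h.2 iL).2
      have heq : upd l iL Real.pi iL = Real.pi := by
        simp [upd]
      rw [heq] at this
      exact lt_irrefl _ this
  have h := Metric.infDist_le_dist_of_mem (x := l) hy
  rw [dist_update l Real.pi iL] at h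
  have hlπ : l iL < Real.pi := (hl.2 iL).2
  rw [abs_of_nonpos (by linarith)] at h
  linarith

lemma infDist_frontier_pos (hl : l ∈ simplexIplus n) :
    0 < Metric.infDist l (frontier (simplexIplus n)) := by
  rw [← (isClosed_frontier (s := simplexIplus n)).notMem_iff_infDist_pos
    ⟨_, mem_frontier_bot l hl⟩]
  rw [(isOpen_simplexIplus n).frontier_eq]
  intro h
  exact h.2 hl

end dist

end Dist

section Comb
open Finset

variable {n : ℕ}

def ordpair (a b : Fin n) : Fin n × Fin n := if a < b then (a, b) else (b, a)

lemma ordpair_cases (a b : Fin n) :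
    ordpair a b = (a, b) ∨ ordpair a b = (b, a) := by
  unfold ordpair; split <;> simp

lemma ordpair_lt {a b : Fin n} (h : a ≠ b) :
    (ordpair a b).1 < (ordpair a b).2 := by
  unfold ordpair
  rcases lt_or_gt_of_ne h with h' | h'
  · simp [h']
  · rw [if_neg (by omega)]
    exact h'

lemma ordpair_inj {a b c : Fin n} (hb : b ≠ a) (hc : c ≠ a)
    (h : ordpair a b = ordpair a c) : b = c := by
  rcases ordpair_cases a b with h1 | h1 <;> rcases ordpair_cases a c with h2 | h2 <;>
      rw [h1, h2, Prod.mk.injEq] at h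
  · exact h.2
  · exact absurd h.1.symm hc
  · exact absurd h.1 hb
  · exact h.1

lemma key_comb (β Δ : Fin n × Fin n → ℝ) (δ : ℝ) (hδ : 0 < δ)
    (hΔsymm : ∀ a b, Δ (a, b) = Δ (b, a))
    (hΔnn : ∀ q, 0 ≤ Δ q)
    (htriL : ∀ i a b, Δ (a, b) ≤ β (i, a) + β (i, b))
    (htriR : ∀ a b j, Δ (a, b) ≤ β (a, j) + β (b, j)) :
    ∀ (N : ℕ) (B : Finset (Fin n × Fin n)) (L H : Finset (Fin n)),
      B.card ≤ N → Disjoint L H → B ⊆ L ×ˢ H →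
      (∀ p ∈ B, δ ≤ β p) → (∀ p ∈ B, β p ≤ 1/2) →
      ∃ (C : Finset (Fin n × Fin n)) (k : ℕ),
        k ≤ min L.card H.card ∧
        (∀ q ∈ C, q.1 < q.2 ∧ ((q.1 ∈ L ∧ q.2 ∈ L) ∨ (q.1 ∈ H ∧ q.2 ∈ H)) ∧ Δ q ≤ 1) ∧
        (∏ p ∈ B, (β p)⁻¹) * ∏ q ∈ C, Δ q ≤ 2 ^ B.card * (δ ^ k)⁻¹ := by
  intro N
  induction N with
  | zero =>
    intro B L H hcard _ _ _ _
    have hB : B = ∅ := Finset.card_eq_zero.mp (Nat.le_zero.mp hcard)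
    subst hB
    exact ⟨∅, 0, by simp, by simp, by simp⟩
  | succ N ih =>
    intro B L H hcard hdisj hBLH hβδ hβr
    rcases B.eq_empty_or_nonempty with rfl | hne
    · exact ⟨∅, 0, by simp, by simp, by simp⟩
    obtain ⟨pstar, hpB, hmin⟩ := B.exists_min_image β hne
    obtain ⟨hiL, hjH⟩ := Finset.mem_product.mp (hBLH hpB)
    set istar := pstar.1 with histar
    set jstar := pstar.2 with hjstar
    -- partition B
    set E1 := B.filter (fun p => p.1 = istar ∧ p.2 ≠ jstar) with hE1
    set E2 := B.filter (fun p => p.1 ≠ istar ∧ p.2 = jstar) with hE2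
    set B' := B.filter (fun p => p.1 ≠ istar ∧ p.2 ≠ jstar) with hB'
    set E0 := B.filter (fun p => p.1 = istar ∧ p.2 = jstar) with hE0
    have hE0eq : E0 = {pstar} := by
      ext p
      simp only [hE0, Finset.mem_filter, Finset.mem_singleton]
      constructor
      · rintro ⟨hp, h1, h2⟩
        exact Prod.ext h1 h2
      · rintro rfl
        exact ⟨hpB, rfl, rfl⟩
    -- cardinalities
    have hsplit1 := Finset.card_filter_add_card_filter_not
      (s := B) (p := fun p => p.1 = istar)
    have hsplit2 := Finset.card_filter_add_card_filter_not
      (s := B.filter (fun p => p.1 = istar)) (p := fun p => p.2 = jstar)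
    have hsplit3 := Finset.card_filter_add_card_filter_not
      (s := B.filter (fun p => ¬ p.1 = istar)) (p := fun p => p.2 = jstar)
    have hff1 : (B.filter (fun p => p.1 = istar)).filter (fun p => p.2 = jstar) = E0 := by
      rw [Finset.filter_filter]
    have hff2 : (B.filter (fun p => p.1 = istar)).filter (fun p => ¬ p.2 = jstar) = E1 := by
      rw [Finset.filter_filter]
    have hff3 : (B.filter (fun p => ¬ p.1 = istar)).filter (fun p => p.2 = jstar) = E2 := by
      rw [Finset.filter_filter]
    have hff4 : (B.filter (fun p => ¬ p.1 = istar)).filter (fun p => ¬ p.2 = jstar) = B' := by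
      rw [Finset.filter_filter]
    have hcount : 1 + E1.card + (E2.card + B'.card) = B.card := by
      rw [← hsplit1, ← hsplit2, ← hsplit3, hff1, hff2, hff3, hff4, hE0eq]
      simp [Finset.card_singleton]
      try ring
      try omega
    -- apply induction hypothesis
    have hB'card : B'.card ≤ N := by
      have hsub : B' ⊆ B.erase pstar := by
        intro p hp
        rw [Finset.mem_erase]
        simp only [hB', Finset.mem_filter] at hp
        exact ⟨fun h => hp.2.1 (by rw [h]), hp.1⟩
      have := Finset.card_le_card hsub
      rw [Finset.card_erase_of_mem hpB] at this
      omega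
    have hdisj' : Disjoint (L.erase istar) (H.erase jstar) :=
      hdisj.mono (Finset.erase_subset _ _) (Finset.erase_subset _ _)
    have hB'LH : B' ⊆ (L.erase istar) ×ˢ (H.erase jstar) := by
      intro p hp
      simp only [hB', Finset.mem_filter] at hp
      obtain ⟨h1, h2⟩ := Finset.mem_product.mp (hBLH hp.1)
      exact Finset.mem_product.mpr ⟨Finset.mem_erase.mpr ⟨hp.2.1, h1⟩,
        Finset.mem_erase.mpr ⟨hp.2.2, h2⟩⟩
    obtain ⟨C', k', hk', hC', hprod'⟩ := ih B' (L.erase istar) (H.erase jstar)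
      hB'card hdisj' hB'LH
      (fun p hp => hβδ p (Finset.mem_of_mem_filter p hp))
      (fun p hp => hβr p (Finset.mem_of_mem_filter p hp))
    -- new compensators
    set newC1 := E1.image (fun p => ordpair jstar p.2) with hnewC1
    set newC2 := E2.image (fun p => ordpair istar p.1) with hnewC2
    -- basic membership facts
    have hE1mem : ∀ p ∈ E1, p ∈ B ∧ p.1 = istar ∧ p.2 ≠ jstar := by
      intro p hp
      simpa [hE1, Finset.mem_filter] using hp
    have hE2mem : ∀ p ∈ E2, p ∈ B ∧ p.1 ≠ istar ∧ p.2 = jstar := by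
      intro p hp
      simpa [hE2, Finset.mem_filter] using hp
    have hpstar_eq : (istar, jstar) = pstar := rfl
    have hδβ : ∀ p ∈ B, 0 < β p := fun p hp => lt_of_lt_of_le hδ (hβδ p hp)
    -- component facts for newC1 and newC2
    have hnewC1mem : ∀ q ∈ newC1, (q.1 ∈ H ∧ q.2 ∈ H) ∧ q.1 < q.2 ∧ Δ q ≤ 1 ∧
        (q.1 = jstar ∨ q.2 = jstar) := by
      intro q hq
      rw [hnewC1, Finset.mem_image] at hq
      obtain ⟨p, hp, rfl⟩ := hq
      obtain ⟨hpB', hp1, hp2⟩ := hE1mem p hp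
      have hp2H : p.2 ∈ H := (Finset.mem_product.mp (hBLH hpB')).2
      have hΔle : Δ (jstar, p.2) ≤ 1 := by
        have h1 := htriL istar jstar p.2
        rw [hpstar_eq] at h1
        have h2 : β (istar, p.2) = β p := by rw [← hp1]
        rw [h2] at h1
        have h3 : β pstar ≤ β p := hmin p hpB'
        have h4 : β p ≤ 1/2 := hβr p hpB'
        linarith
      rcases ordpair_cases jstar p.2 with hoc | hoc <;> rw [hoc]
      · exact ⟨⟨hjH, hp2H⟩, by rw [← hoc]; exact ordpair_lt (Ne.symm hp2), by exact hΔle,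
          Or.inl rfl⟩
      · exact ⟨⟨hp2H, hjH⟩, by rw [← hoc]; exact ordpair_lt (Ne.symm hp2),
          by rw [← hΔsymm]; exact hΔle, Or.inr rfl⟩
    have hnewC2mem : ∀ q ∈ newC2, (q.1 ∈ L ∧ q.2 ∈ L) ∧ q.1 < q.2 ∧ Δ q ≤ 1 ∧
        (q.1 = istar ∨ q.2 = istar) := by
      intro q hq
      rw [hnewC2, Finset.mem_image] at hq
      obtain ⟨p, hp, rfl⟩ := hq
      obtain ⟨hpB', hp1, hp2⟩ := hE2mem p hp
      have hp1L : p.1 ∈ L := (Finset.mem_product.mp (hBLH hpB')).1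
      have hΔle : Δ (istar, p.1) ≤ 1 := by
        have h1 := htriR istar p.1 jstar
        rw [hpstar_eq] at h1
        have h2 : β (p.1, jstar) = β p := by rw [← hp2]
        rw [h2] at h1
        have h3 : β pstar ≤ β p := hmin p hpB'
        have h4 : β p ≤ 1/2 := hβr p hpB'
        linarith
      rcases ordpair_cases istar p.1 with hoc | hoc <;> rw [hoc]
      · exact ⟨⟨hiL, hp1L⟩, by rw [← hoc]; exact ordpair_lt (Ne.symm hp1), by exact hΔle,
          Or.inl rfl⟩
      · exact ⟨⟨hp1L, hiL⟩, by rw [← hoc]; exact ordpair_lt (Ne.symm hp1),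
          by rw [← hΔsymm]; exact hΔle, Or.inr rfl⟩
    -- C' avoids istar and jstar
    have hC'avoid : ∀ q ∈ C', q.1 ≠ istar ∧ q.2 ≠ istar ∧ q.1 ≠ jstar ∧ q.2 ≠ jstar := by
      intro q hq
      obtain ⟨-, hside, -⟩ := hC' q hq
      rcases hside with ⟨h1, h2⟩ | ⟨h1, h2⟩
      · have e1 := (Finset.mem_erase.mp h1)
        have e2 := (Finset.mem_erase.mp h2)
        refine ⟨e1.1, e2.1, ?_, ?_⟩
        · intro h
          exact (Finset.disjoint_left.mp hdisj (h ▸ e1.2)) hjH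
        · intro h
          exact (Finset.disjoint_left.mp hdisj (h ▸ e2.2)) hjH
      · have e1 := (Finset.mem_erase.mp h1)
        have e2 := (Finset.mem_erase.mp h2)
        refine ⟨?_, ?_, e1.1, e2.1⟩
        · intro h
          exact (Finset.disjoint_left.mp hdisj (h ▸ hiL)) e1.2
        · intro h
          exact (Finset.disjoint_left.mp hdisj (h ▸ hiL)) e2.2
    -- disjointness
    have hd12 : Disjoint newC1 newC2 := by
      rw [Finset.disjoint_left]
      intro q hq1 hq2
      obtain ⟨⟨hH1, _⟩, _, _, _⟩ := hnewC1mem q hq1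
      obtain ⟨⟨hL1, _⟩, _, _, _⟩ := hnewC2mem q hq2
      exact (Finset.disjoint_left.mp hdisj hL1) hH1
    have hdC'1 : Disjoint C' newC1 := by
      rw [Finset.disjoint_left]
      intro q hq1 hq2
      obtain ⟨_, _, hj1, hj2⟩ := hC'avoid q hq1
      obtain ⟨_, _, _, hor⟩ := hnewC1mem q hq2
      rcases hor with h | h
      · exact hj1 h
      · exact hj2 h
    have hdC'2 : Disjoint C' newC2 := by
      rw [Finset.disjoint_left]
      intro q hq1 hq2
      obtain ⟨hi1, hi2, _, _⟩ := hC'avoid q hq1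
      obtain ⟨_, _, _, hor⟩ := hnewC2mem q hq2
      rcases hor with h | h
      · exact hi1 h
      · exact hi2 h
    set C := C' ∪ newC1 ∪ newC2 with hC
    refine ⟨C, k' + 1, ?_, ?_, ?_⟩
    · have h1 : k' ≤ min (L.erase istar).card (H.erase jstar).card := hk'
      rw [Finset.card_erase_of_mem hiL, Finset.card_erase_of_mem hjH] at h1
      have hL1 : 1 ≤ L.card := Finset.card_pos.mpr ⟨istar, hiL⟩
      have hH1 : 1 ≤ H.card := Finset.card_pos.mpr ⟨jstar, hjH⟩
      omega
    · intro q hq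
      rw [hC, Finset.mem_union, Finset.mem_union] at hq
      rcases hq with (hq | hq) | hq
      · obtain ⟨hlt, hside, hle⟩ := hC' q hq
        refine ⟨hlt, ?_, hle⟩
        rcases hside with ⟨h1, h2⟩ | ⟨h1, h2⟩
        · exact Or.inl ⟨Finset.mem_of_mem_erase h1, Finset.mem_of_mem_erase h2⟩
        · exact Or.inr ⟨Finset.mem_of_mem_erase h1, Finset.mem_of_mem_erase h2⟩
      · obtain ⟨hH2, hlt, hle, -⟩ := hnewC1mem q hq
        exact ⟨hlt, Or.inr hH2, hle⟩
      · obtain ⟨hL2, hlt, hle, -⟩ := hnewC2mem q hq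
        exact ⟨hlt, Or.inl hL2, hle⟩
    · -- the product estimate
      have hβps : 0 < β pstar := hδβ pstar hpB
      have hPB : ∏ p ∈ B, (β p)⁻¹ = (β pstar)⁻¹ * ((∏ p ∈ E1, (β p)⁻¹) *
          ((∏ p ∈ E2, (β p)⁻¹) * ∏ p ∈ B', (β p)⁻¹)) := by
        rw [← Finset.prod_filter_mul_prod_filter_not B (fun p => p.1 = istar)
          (fun p => (β p)⁻¹)]
        rw [← Finset.prod_filter_mul_prod_filter_not (B.filter (fun p => p.1 = istar))
          (fun p => p.2 = jstar) (fun p => (β p)⁻¹)]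
        rw [← Finset.prod_filter_mul_prod_filter_not (B.filter (fun p => ¬ p.1 = istar))
          (fun p => p.2 = jstar) (fun p => (β p)⁻¹)]
        rw [hff1, hff2, hff3, hff4, hE0eq, Finset.prod_singleton]
        ring
      have hinj1 : ∀ p ∈ E1, ∀ p' ∈ E1,
          ordpair jstar p.2 = ordpair jstar p'.2 → p = p' := by
        intro p hp p' hp' h
        obtain ⟨-, hp1, hp2⟩ := hE1mem p hp
        obtain ⟨-, hp'1, hp'2⟩ := hE1mem p' hp'
        have h2 := ordpair_inj hp2 hp'2 h
        exact Prod.ext (hp1.trans hp'1.symm) h2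
      have hinj2 : ∀ p ∈ E2, ∀ p' ∈ E2,
          ordpair istar p.1 = ordpair istar p'.1 → p = p' := by
        intro p hp p' hp' h
        obtain ⟨-, hp1, hp2⟩ := hE2mem p hp
        obtain ⟨-, hp'1, hp'2⟩ := hE2mem p' hp'
        have h2 := ordpair_inj hp1 hp'1 h
        exact Prod.ext h2 (hp2.trans hp'2.symm)
      have hd1 : Disjoint (C' ∪ newC1) newC2 := Finset.disjoint_union_left.mpr ⟨hdC'2, hd12⟩
      have hPC : ∏ q ∈ C, Δ q = (∏ q ∈ C', Δ q) * ((∏ p ∈ E1, Δ (ordpair jstar p.2)) *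
          (∏ p ∈ E2, Δ (ordpair istar p.1))) := by
        rw [hC, Finset.prod_union hd1, Finset.prod_union hdC'1, hnewC1, hnewC2,
          Finset.prod_image hinj1, Finset.prod_image hinj2]
        ring
      have hfac1 : ∀ p ∈ E1, (β p)⁻¹ * Δ (ordpair jstar p.2) ≤ 2 := by
        intro p hp
        obtain ⟨hpB', hp1, hp2⟩ := hE1mem p hp
        have hβp : 0 < β p := hδβ p hpB'
        have hpe : ((istar, p.2) : Fin n × Fin n) = p := by
          rw [← hp1]
        have hΔ2 : Δ (ordpair jstar p.2) ≤ 2 * β p := by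
          have h1 := htriL istar jstar p.2
          rw [hpstar_eq, hpe] at h1
          have h3 : β pstar ≤ β p := hmin p hpB'
          have hΔeq : Δ (ordpair jstar p.2) = Δ (jstar, p.2) := by
            rcases ordpair_cases jstar p.2 with hoc | hoc <;> rw [hoc]
            exact hΔsymm _ _
          rw [hΔeq]
          linarith
        calc (β p)⁻¹ * Δ (ordpair jstar p.2) ≤ (β p)⁻¹ * (2 * β p) :=
              mul_le_mul_of_nonneg_left hΔ2 (inv_nonneg.mpr hβp.le)
          _ = 2 := by field_simp
      have hfac2 : ∀ p ∈ E2, (β p)⁻¹ * Δ (ordpair istar p.1) ≤ 2 := by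
        intro p hp
        obtain ⟨hpB', hp1, hp2⟩ := hE2mem p hp
        have hβp : 0 < β p := hδβ p hpB'
        have hpe : ((p.1, jstar) : Fin n × Fin n) = p := by
          rw [← hp2]
        have hΔ2 : Δ (ordpair istar p.1) ≤ 2 * β p := by
          have h1 := htriR istar p.1 jstar
          rw [hpstar_eq, hpe] at h1
          have h3 : β pstar ≤ β p := hmin p hpB'
          have hΔeq : Δ (ordpair istar p.1) = Δ (istar, p.1) := by
            rcases ordpair_cases istar p.1 with hoc | hoc <;> rw [hoc]
            exact hΔsymm _ _
          rw [hΔeq]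
          linarith
        calc (β p)⁻¹ * Δ (ordpair istar p.1) ≤ (β p)⁻¹ * (2 * β p) :=
              mul_le_mul_of_nonneg_left hΔ2 (inv_nonneg.mpr hβp.le)
          _ = 2 := by field_simp
      -- combine
      have hE1le : ∏ p ∈ E1, ((β p)⁻¹ * Δ (ordpair jstar p.2)) ≤ 2 ^ E1.card := by
        rw [← Finset.prod_const]
        refine Finset.prod_le_prod (fun p hp => ?_) hfac1
        obtain ⟨hpB', -, -⟩ := hE1mem p hp
        exact mul_nonneg (inv_nonneg.mpr (hδβ p hpB').le) (hΔnn _)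
      have hE2le : ∏ p ∈ E2, ((β p)⁻¹ * Δ (ordpair istar p.1)) ≤ 2 ^ E2.card := by
        rw [← Finset.prod_const]
        refine Finset.prod_le_prod (fun p hp => ?_) hfac2
        obtain ⟨hpB', -, -⟩ := hE2mem p hp
        exact mul_nonneg (inv_nonneg.mpr (hδβ p hpB').le) (hΔnn _)
      have hps : (β pstar)⁻¹ ≤ δ⁻¹ := by
        apply inv_anti₀ hδ (hβδ pstar hpB)
      -- nonnegativity facts
      have hnn1 : (0:ℝ) ≤ ∏ p ∈ E1, ((β p)⁻¹ * Δ (ordpair jstar p.2)) :=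
        Finset.prod_nonneg (fun p hp =>
          mul_nonneg (inv_nonneg.mpr (hδβ p (hE1mem p hp).1).le) (hΔnn _))
      have hnn2 : (0:ℝ) ≤ ∏ p ∈ E2, ((β p)⁻¹ * Δ (ordpair istar p.1)) :=
        Finset.prod_nonneg (fun p hp =>
          mul_nonneg (inv_nonneg.mpr (hδβ p (hE2mem p hp).1).le) (hΔnn _))
      have hnnB' : (0:ℝ) ≤ (∏ p ∈ B', (β p)⁻¹) * ∏ q ∈ C', Δ q :=
        mul_nonneg (Finset.prod_nonneg (fun p hp =>
          inv_nonneg.mpr (hδβ p (Finset.mem_of_mem_filter p hp)).le))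
          (Finset.prod_nonneg (fun q hq => hΔnn _))
      have hrearr : (∏ p ∈ B, (β p)⁻¹) * ∏ q ∈ C, Δ q
          = (β pstar)⁻¹ * ((∏ p ∈ E1, ((β p)⁻¹ * Δ (ordpair jstar p.2))) *
            ((∏ p ∈ E2, ((β p)⁻¹ * Δ (ordpair istar p.1))) *
             ((∏ p ∈ B', (β p)⁻¹) * ∏ q ∈ C', Δ q))) := by
        rw [hPB, hPC, Finset.prod_mul_distrib, Finset.prod_mul_distrib]
        ring
      rw [hrearr]
      have hstep : (β pstar)⁻¹ * ((∏ p ∈ E1, ((β p)⁻¹ * Δ (ordpair jstar p.2))) *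
            ((∏ p ∈ E2, ((β p)⁻¹ * Δ (ordpair istar p.1))) *
             ((∏ p ∈ B', (β p)⁻¹) * ∏ q ∈ C', Δ q)))
          ≤ δ⁻¹ * (2 ^ E1.card * (2 ^ E2.card * (2 ^ B'.card * (δ ^ k')⁻¹))) := by
        have h2 : (∏ p ∈ E2, ((β p)⁻¹ * Δ (ordpair istar p.1))) *
            ((∏ p ∈ B', (β p)⁻¹) * ∏ q ∈ C', Δ q)
            ≤ 2 ^ E2.card * (2 ^ B'.card * (δ ^ k')⁻¹) := by
          apply mul_le_mul hE2le hprod' hnnB' (by positivity)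
        have h1 : (∏ p ∈ E1, ((β p)⁻¹ * Δ (ordpair jstar p.2))) *
            ((∏ p ∈ E2, ((β p)⁻¹ * Δ (ordpair istar p.1))) *
             ((∏ p ∈ B', (β p)⁻¹) * ∏ q ∈ C', Δ q))
            ≤ 2 ^ E1.card * (2 ^ E2.card * (2 ^ B'.card * (δ ^ k')⁻¹)) := by
          apply mul_le_mul hE1le h2 (mul_nonneg hnn2 hnnB') (by positivity)
        apply mul_le_mul hps h1
          (mul_nonneg hnn1 (mul_nonneg hnn2 hnnB')) (by positivity)
      refine hstep.trans ?_
      have hfin : δ⁻¹ * (2 ^ E1.card * (2 ^ E2.card * (2 ^ B'.card * (δ ^ k')⁻¹)))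
          = 2 ^ (E1.card + E2.card + B'.card) * (δ ^ (k'+1))⁻¹ := by
        rw [pow_succ, pow_add, pow_add, mul_inv]
        ring
      rw [hfin]
      have hle : E1.card + E2.card + B'.card ≤ B.card := by omega
      have h2pow : (2:ℝ) ^ (E1.card + E2.card + B'.card) ≤ 2 ^ B.card := by
        apply pow_le_pow_right₀ (by norm_num) hle
      apply mul_le_mul_of_nonneg_right h2pow (by positivity)



end Comb

/-- On the tube `ℝⁿ + i I⁺ₙ` there is a constant `c` (depending only on `n`)
such that `|M_n(ζ)| ≤ c · dist(Im ζ, ∂I⁺ₙ)^{-⌊n/2⌋}`, where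
`M_n(ζ) = ∏_{i<j} tanh((ζ_i - ζ_j)/2)` and the distance is the Euclidean
distance from `Im ζ` to the boundary of `I⁺ₙ`. -/
theorem Modd_tube_bound (n : ℕ) :
    ∃ c > 0, ∀ ζ : Fin n → ℂ,
      (show EuclideanSpace ℝ (Fin n) from WithLp.toLp 2 fun i => (ζ i).im) ∈ simplexIplus n →
      ‖∏ p ∈ Finset.univ.filter (fun p : Fin n × Fin n => p.1 < p.2),
          Complex.tanh ((ζ p.1 - ζ p.2) / 2)‖
        ≤ c / (Metric.infDist
            (show EuclideanSpace ℝ (Fin n) from WithLp.toLp 2 fun i => (ζ i).im)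
            (frontier (simplexIplus n))) ^ (n / 2) := by
  refine ⟨(10:ℝ) ^ (n*n+n), by positivity, ?_⟩
  intro ζ hmem
  rcases Nat.eq_zero_or_pos n with rfl | hn
  · -- n = 0 : empty product
    have hT : (Finset.univ.filter (fun p : Fin 0 × Fin 0 => p.1 < p.2)) = ∅ := by
      apply Finset.eq_empty_of_forall_notMem
      intro p
      exact p.1.elim0
    rw [hT]
    simp
  haveI : NeZero n := ⟨by omega⟩
  set l := (show EuclideanSpace ℝ (Fin n) from WithLp.toLp 2 fun i => (ζ i).im) with hldef
  have hli : ∀ i, l i = (ζ i).im := fun i => rfl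
  set d := Metric.infDist l (frontier (simplexIplus n)) with hddef
  have hd0 : 0 < d := infDist_frontier_pos l hmem
  have hlpos : ∀ i, 0 < l i := fun i => (hmem.2 i).1
  have hlπ : ∀ i, l i < Real.pi := fun i => (hmem.2 i).2
  have hmono : StrictMono l := hmem.1
  have hdbot : ∀ i, d ≤ l i := by
    intro i
    refine (infDist_le_bot l hmem).trans ?_
    exact hmono.monotone (Fin.zero_le i)
  have hdtop : ∀ i, d ≤ Real.pi - l i := by
    intro i
    refine (infDist_le_top l hmem).trans ?_
    have : l i ≤ l ⟨n-1, Nat.sub_lt (Nat.pos_of_ne_zero (NeZero.ne n)) one_pos⟩ := by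
      apply hmono.monotone
      rw [Fin.le_def]
      have := i.isLt
      simp only []
      omega
    linarith
  have hdπ : d ≤ Real.pi := by
    have := hdtop 0
    have := hlpos 0
    linarith
  -- the index sets
  set T := Finset.univ.filter (fun p : Fin n × Fin n => p.1 < p.2) with hTdef
  set β : Fin n × Fin n → ℝ := fun q => norm (ζ q.1 - ζ q.2 + ↑Real.pi * Complex.I)
    with hβdef
  set Δ : Fin n × Fin n → ℝ := fun q => norm (ζ q.1 - ζ q.2) with hΔdef
  set B := T.filter (fun p => β p < 1/2) with hBdef
  set L := Finset.univ.filter (fun i : Fin n => l i < 1/2) with hLdef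
  set H := Finset.univ.filter (fun i : Fin n => Real.pi - l i < 1/2) with hHdef
  have hπ3 : 3 < Real.pi := Real.pi_gt_three
  have hdisjLH : Disjoint L H := by
    rw [Finset.disjoint_left]
    intro i hiL hiH
    rw [hLdef, Finset.mem_filter] at hiL
    rw [hHdef, Finset.mem_filter] at hiH
    linarith [hiL.2, hiH.2]
  have hbim : ∀ p : Fin n × Fin n, (ζ p.1 - ζ p.2 + ↑Real.pi * Complex.I).im
      = l p.1 - l p.2 + Real.pi := by
    intro p
    rw [hli p.1, hli p.2]
    simp
  have hBLH : B ⊆ L ×ˢ H := by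
    intro p hp
    rw [hBdef, Finset.mem_filter] at hp
    obtain ⟨hpT, hpβ⟩ := hp
    have him := hbim p
    have h1 : |( ζ p.1 - ζ p.2 + ↑Real.pi * Complex.I).im| ≤ β p :=
      Complex.abs_im_le_norm _
    rw [him] at h1
    have h2 : l p.1 - l p.2 + Real.pi < 1/2 := by
      have := le_abs_self (l p.1 - l p.2 + Real.pi)
      linarith
    have hp2π : l p.2 < Real.pi := hlπ p.2
    have hp1pos : 0 < l p.1 := hlpos p.1
    rw [Finset.mem_product, hLdef, hHdef, Finset.mem_filter, Finset.mem_filter]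
    constructor
    · exact ⟨Finset.mem_univ _, by linarith⟩
    · exact ⟨Finset.mem_univ _, by linarith⟩
  have hβδ : ∀ p ∈ B, 2*d ≤ β p := by
    intro p hp
    rw [hBdef, Finset.mem_filter] at hp
    have h1 : |( ζ p.1 - ζ p.2 + ↑Real.pi * Complex.I).im| ≤ β p :=
      Complex.abs_im_le_norm _
    rw [hbim p] at h1
    have h2 := hdbot p.1
    have h3 := hdtop p.2
    have h4 : l p.1 - l p.2 + Real.pi ≤ |l p.1 - l p.2 + Real.pi| := le_abs_self _
    linarith
  have hβr : ∀ p ∈ B, β p ≤ 1/2 := by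
    intro p hp
    rw [hBdef, Finset.mem_filter] at hp
    exact hp.2.le
  -- apply key_comb
  have hΔsymm : ∀ a b, Δ (a, b) = Δ (b, a) := by
    intro a b
    rw [hΔdef]
    exact norm_sub_rev _ _
  have habs_sub : ∀ u v : ℂ, norm (u - v) ≤ norm u + norm v := by
    intro u v
    simpa [sub_eq_add_neg] using norm_add_le u (-v)
  have htriL : ∀ i a b, Δ (a, b) ≤ β (i, a) + β (i, b) := by
    intro i a b
    rw [hΔdef, hβdef]
    simp only []
    have : ζ a - ζ b = (ζ i - ζ b + ↑Real.pi * Complex.I) -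
        (ζ i - ζ a + ↑Real.pi * Complex.I) := by ring
    rw [this]
    have := habs_sub (ζ i - ζ b + ↑Real.pi * Complex.I) (ζ i - ζ a + ↑Real.pi * Complex.I)
    linarith
  have htriR : ∀ a b j, Δ (a, b) ≤ β (a, j) + β (b, j) := by
    intro a b j
    rw [hΔdef, hβdef]
    simp only []
    have : ζ a - ζ b = (ζ a - ζ j + ↑Real.pi * Complex.I) -
        (ζ b - ζ j + ↑Real.pi * Complex.I) := by ring
    rw [this]
    have := habs_sub (ζ a - ζ j + ↑Real.pi * Complex.I) (ζ b - ζ j + ↑Real.pi * Complex.I)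
    linarith
  obtain ⟨C, k, hk, hC, hprod⟩ := key_comb β Δ (2*d) (by linarith)
    hΔsymm (fun q => norm_nonneg _) htriL htriR
    B.card B L H le_rfl hdisjLH hBLH hβδ hβr
  -- k ≤ n / 2
  have hkn : k ≤ n / 2 := by
    have h1 : L.card + H.card ≤ n := by
      rw [← Finset.card_union_of_disjoint hdisjLH]
      have := Finset.card_le_univ (L ∪ H)
      simpa using this
    have h2 : min L.card H.card ≤ L.card := Nat.min_le_left _ _
    have h3 : min L.card H.card ≤ H.card := Nat.min_le_right _ _
    omega
  -- set decompositions
  have hCT : C ⊆ T := by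
    intro q hq
    rw [hTdef, Finset.mem_filter]
    exact ⟨Finset.mem_univ _, (hC q hq).1⟩
  have hBT : B ⊆ T := Finset.filter_subset _ _
  have hdisjBC : Disjoint B C := by
    rw [Finset.disjoint_left]
    intro q hqB hqC
    obtain ⟨h1, h2⟩ := Finset.mem_product.mp (hBLH hqB)
    rcases (hC q hqC).2.1 with ⟨hL1, hL2⟩ | ⟨hH1, hH2⟩
    · exact (Finset.disjoint_left.mp hdisjLH hL2) h2
    · exact (Finset.disjoint_left.mp hdisjLH h1) hH1
  have hBCT : B ∪ C ⊆ T := Finset.union_subset hBT hCT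
  set R := T \ (B ∪ C) with hRdef
  -- im bounds on differences
  have hwim : ∀ p ∈ T, -Real.pi ≤ (ζ p.1 - ζ p.2).im ∧ (ζ p.1 - ζ p.2).im ≤ 0 := by
    intro p hp
    rw [hTdef, Finset.mem_filter] at hp
    have h1 : l p.1 < l p.2 := hmono hp.2
    have h2 : 0 < l p.1 := hlpos p.1
    have h3 : l p.2 < Real.pi := hlπ p.2
    have h4 : (ζ p.1 - ζ p.2).im = l p.1 - l p.2 := by
      rw [hli p.1, hli p.2]; simp
    rw [h4]
    constructor <;> linarith
  -- pointwise bounds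
  have hfB : ∀ p ∈ B, norm (Complex.tanh ((ζ p.1 - ζ p.2)/2)) ≤ 5 * (β p)⁻¹ := by
    intro p hp
    have hpT := hBT hp
    obtain ⟨h1, h2⟩ := hwim p hpT
    have hβp : 0 < β p := lt_of_lt_of_le (by linarith) (hβδ p hp)
    have hb0 : ζ p.1 - ζ p.2 + ↑Real.pi * Complex.I ≠ 0 := by
      intro h
      rw [hβdef] at hβp
      simp only [] at hβp
      rw [h] at hβp
      simp at hβp
    have := tanh_bound_near_pole (ζ p.1 - ζ p.2) h1 h2 hb0 (hβr p hp)
    rw [div_eq_mul_inv] at this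
    exact this
  have hfC : ∀ q ∈ C, norm (Complex.tanh ((ζ q.1 - ζ q.2)/2)) ≤ Δ q := by
    intro q hq
    exact tanh_bound_compensator _ (hC q hq).2.2
  have hfR : ∀ p ∈ R, norm (Complex.tanh ((ζ p.1 - ζ p.2)/2)) ≤ 10 := by
    intro p hp
    rw [hRdef, Finset.mem_sdiff] at hp
    obtain ⟨h1, h2⟩ := hwim p hp.1
    have hpB : p ∉ B := fun h => hp.2 (Finset.mem_union_left _ h)
    have hβb : 1/2 ≤ β p := by
      by_contra h
      exact hpB (by rw [hBdef, Finset.mem_filter]; exact ⟨hp.1, by linarith⟩)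
    exact tanh_bound_generic (ζ p.1 - ζ p.2) h1 h2 hβb
  -- product manipulations
  rw [show ‖∏ p ∈ T, Complex.tanh ((ζ p.1 - ζ p.2) / 2)‖
      = ∏ p ∈ T, norm (Complex.tanh ((ζ p.1 - ζ p.2) / 2)) by
    rw [norm_prod]]
  have hTsplit : ∏ p ∈ T, norm (Complex.tanh ((ζ p.1 - ζ p.2) / 2))
      = (∏ p ∈ R, norm (Complex.tanh ((ζ p.1 - ζ p.2) / 2))) *
        ((∏ p ∈ B, norm (Complex.tanh ((ζ p.1 - ζ p.2) / 2))) *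
         (∏ q ∈ C, norm (Complex.tanh ((ζ q.1 - ζ q.2) / 2)))) := by
    rw [hRdef, ← Finset.prod_union hdisjBC, Finset.prod_sdiff hBCT]
  rw [hTsplit]
  -- bound each part
  have habsnn : ∀ (s : Finset (Fin n × Fin n)),
      (0:ℝ) ≤ ∏ p ∈ s, norm (Complex.tanh ((ζ p.1 - ζ p.2) / 2)) :=
    fun s => Finset.prod_nonneg (fun p _ => norm_nonneg _)
  have hRle : ∏ p ∈ R, norm (Complex.tanh ((ζ p.1 - ζ p.2) / 2))
      ≤ 10 ^ R.card := by
    rw [← Finset.prod_const]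
    exact Finset.prod_le_prod (fun p _ => norm_nonneg _) hfR
  have hBle : ∏ p ∈ B, norm (Complex.tanh ((ζ p.1 - ζ p.2) / 2))
      ≤ 5 ^ B.card * ∏ p ∈ B, (β p)⁻¹ := by
    have := Finset.prod_le_prod (s := B)
      (fun p _ => norm_nonneg (Complex.tanh ((ζ p.1 - ζ p.2)/2))) hfB
    refine this.trans ?_
    rw [Finset.prod_mul_distrib, Finset.prod_const]
  have hCle : ∏ q ∈ C, norm (Complex.tanh ((ζ q.1 - ζ q.2) / 2))
      ≤ ∏ q ∈ C, Δ q :=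
    Finset.prod_le_prod (fun q _ => norm_nonneg _) hfC
  -- nonnegativity
  have hβinvnn : (0:ℝ) ≤ ∏ p ∈ B, (β p)⁻¹ :=
    Finset.prod_nonneg (fun p _ => inv_nonneg.mpr (norm_nonneg _))
  have hΔprodnn : (0:ℝ) ≤ ∏ q ∈ C, Δ q :=
    Finset.prod_nonneg (fun q _ => norm_nonneg _)
  have hBCle : (∏ p ∈ B, norm (Complex.tanh ((ζ p.1 - ζ p.2) / 2))) *
      (∏ q ∈ C, norm (Complex.tanh ((ζ q.1 - ζ q.2) / 2)))
      ≤ 5 ^ B.card * (2 ^ B.card * ((2*d) ^ k)⁻¹) := by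
    have h1 : (∏ p ∈ B, norm (Complex.tanh ((ζ p.1 - ζ p.2) / 2))) *
        (∏ q ∈ C, norm (Complex.tanh ((ζ q.1 - ζ q.2) / 2)))
        ≤ (5 ^ B.card * ∏ p ∈ B, (β p)⁻¹) * ∏ q ∈ C, Δ q :=
      mul_le_mul hBle hCle (habsnn C) (by positivity)
    refine h1.trans ?_
    rw [mul_assoc]
    apply mul_le_mul_of_nonneg_left hprod (by positivity)
  have htotal : (∏ p ∈ R, norm (Complex.tanh ((ζ p.1 - ζ p.2) / 2))) *
      ((∏ p ∈ B, norm (Complex.tanh ((ζ p.1 - ζ p.2) / 2))) *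
       (∏ q ∈ C, norm (Complex.tanh ((ζ q.1 - ζ q.2) / 2))))
      ≤ 10 ^ R.card * (5 ^ B.card * (2 ^ B.card * ((2*d) ^ k)⁻¹)) := by
    apply mul_le_mul hRle hBCle
      (mul_nonneg (habsnn B) (habsnn C)) (by positivity)
  refine htotal.trans ?_
  -- final numeric estimate
  have hcard : R.card + B.card ≤ n * n := by
    have h1 : R.card + (B ∪ C).card = T.card := by
      rw [hRdef]
      exact Finset.card_sdiff_add_card_eq_card hBCT
    have h2 : B.card ≤ (B ∪ C).card := Finset.card_le_card Finset.subset_union_left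
    have h3 : T.card ≤ n * n := by
      have := Finset.card_le_univ T
      simpa [Fintype.card_prod] using this
    omega
  have hdk : ((2*d) ^ k)⁻¹ ≤ (d ^ k)⁻¹ := by
    apply inv_anti₀ (by positivity)
    apply pow_le_pow_left₀ hd0.le (by linarith)
  have hdm : (d ^ k)⁻¹ ≤ 4 ^ n * (d ^ (n/2))⁻¹ := by
    have hsplit : d ^ (n/2) = d ^ k * d ^ (n/2 - k) := by
      rw [← pow_add]
      congr 1
      omega
    have h14 : d ^ (n/2 - k) ≤ 4 ^ n := by
      have h1 : d ^ (n/2 - k) ≤ Real.pi ^ (n/2 - k) := pow_le_pow_left₀ hd0.le hdπ _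
      have h2 : Real.pi ^ (n/2 - k) ≤ 4 ^ (n/2 - k) :=
        pow_le_pow_left₀ Real.pi_pos.le Real.pi_le_four _
      have h3 : (4:ℝ) ^ (n/2 - k) ≤ 4 ^ n := by
        apply pow_le_pow_right₀ (by norm_num)
        omega
      linarith
    have hmain : d ^ (n/2) ≤ 4 ^ n * d ^ k := by
      rw [hsplit]
      calc d ^ k * d ^ (n/2 - k) ≤ d ^ k * 4 ^ n :=
            mul_le_mul_of_nonneg_left h14 (by positivity)
        _ = 4 ^ n * d ^ k := mul_comm _ _
    rw [inv_eq_one_div, inv_eq_one_div, mul_one_div,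
      div_le_div_iff₀ (by positivity) (by positivity)]
    linarith
  have e1 : (5:ℝ)^B.card * 2^B.card = 10^B.card := by
    rw [← mul_pow]
    norm_num
  have hd2k : (0:ℝ) < (2*d)^k := by positivity
  calc (10:ℝ) ^ R.card * (5 ^ B.card * (2 ^ B.card * ((2*d) ^ k)⁻¹))
      = 10 ^ (R.card + B.card) * ((2*d) ^ k)⁻¹ := by
        rw [pow_add]
        rw [← e1]
        ring
    _ ≤ 10 ^ (R.card + B.card) * (d ^ k)⁻¹ :=
        mul_le_mul_of_nonneg_left hdk (by positivity)
    _ ≤ 10 ^ (n*n) * (d ^ k)⁻¹ := by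
        apply mul_le_mul_of_nonneg_right _ (by positivity)
        apply pow_le_pow_right₀ (by norm_num) hcard
    _ ≤ 10 ^ (n*n) * (4 ^ n * (d ^ (n/2))⁻¹) :=
        mul_le_mul_of_nonneg_left hdm (by positivity)
    _ ≤ 10 ^ (n*n) * (10 ^ n * (d ^ (n/2))⁻¹) := by
        apply mul_le_mul_of_nonneg_left _ (by positivity)
        apply mul_le_mul_of_nonneg_right _ (by positivity)
        apply pow_le_pow_left₀ (by norm_num) (by norm_num)
    _ = 10 ^ (n*n+n) / d ^ (n/2) := by
        rw [pow_add, div_eq_mul_inv]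
        ring
end

section
/- The subalgebra Λ_I (generated by odd power sums in the exponential variables) separates points of the compact space 𝔛 = ⊔_{j=1}^n {x ∈ ℝ^j : e^{-r} ≤ x₁ ≤ … ≤ x_j ≤ e^r}: if P(x) = P(y) for all P ∈ Λ_I with x ∈ 𝔛 ∩ ℝ^i, y ∈ 𝔛 ∩ ℝ^j, then i = j and x = y. -/
open Finset


private lemma sum_pos_list (m : List ℝ) (hm : ∀ z ∈ m, 0 < z) (hne : m ≠ []) :
    0 < m.sum := by
  cases m with
  | nil => exact absurd rfl hne
  | cons b m' =>
    have hb : 0 < b := hm b (by simp)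
    have : 0 ≤ m'.sum := List.sum_nonneg fun z hz => (hm z (by simp [hz])).le
    simpa using add_pos_of_pos_of_nonneg hb this

private lemma head_lt_aux (a b : ℝ) (l' m' : List ℝ)
    (hlp : ∀ z ∈ a :: l', 0 < z) (hmp : ∀ z ∈ b :: m', 0 < z)
    (hms : (b :: m').Pairwise (· ≥ ·))
    (hab : b < a)
    (hsum : ∀ k : ℕ, ((a :: l').map (fun z => z ^ (2 * k + 1))).sum
      = ((b :: m').map (fun z => z ^ (2 * k + 1))).sum) : False := by
  have hb : 0 < b := hmp b (by simp)
  have ha : 0 < a := hlp a (by simp)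
  have hdiv : 1 < a / b := (one_lt_div hb).2 hab
  set L : ℝ := ((b :: m').length : ℝ) with hL
  obtain ⟨n, hn⟩ := pow_unbounded_of_one_lt L hdiv
  have key : ∀ k : ℕ, (a / b) ^ (2 * k + 1) ≤ L := by
    intro k
    set e := 2 * k + 1
    have hbe : 0 < b ^ e := pow_pos hb e
    have hlow : a ^ e ≤ ((a :: l').map (fun z => z ^ e)).sum := by
      simp only [List.map_cons, List.sum_cons]
      have : 0 ≤ (l'.map (fun z => z ^ e)).sum :=
        List.sum_nonneg (by
          intro z hz
          simp only [List.mem_map] at hz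
          obtain ⟨w, hw, rfl⟩ := hz
          exact (pow_pos (hlp w (by simp [hw])) e).le)
      linarith
    have hhigh : ((b :: m').map (fun z => z ^ e)).sum ≤ L * b ^ e := by
      have hcard := List.sum_le_card_nsmul ((b :: m').map (fun z => z ^ e)) (b ^ e) ?_
      · simpa [hL, nsmul_eq_mul, mul_comm] using hcard
      · intro z hz
        simp only [List.mem_map] at hz
        obtain ⟨w, hw, rfl⟩ := hz
        have hwb : w ≤ b := by
          rcases List.mem_cons.1 hw with rfl | hw'
          · exact le_refl _
          · exact List.rel_of_pairwise_cons hms hw'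
        exact pow_le_pow_left₀ (hmp w hw).le hwb e
    have : a ^ e ≤ L * b ^ e := (hlow.trans_eq (hsum k)).trans hhigh
    rw [div_pow]
    rw [div_le_iff₀ hbe]
    linarith
  have h1 : (a / b) ^ n ≤ (a / b) ^ (2 * n + 1) :=
    pow_le_pow_right₀ hdiv.le (by omega)
  exact absurd ((key n).trans_lt (hn.trans_le h1)) (lt_irrefl _)

private lemma list_eq_of_odd_power_sums :
    ∀ (l m : List ℝ), (∀ z ∈ l, 0 < z) → (∀ z ∈ m, 0 < z) →
    l.Pairwise (· ≥ ·) → m.Pairwise (· ≥ ·) →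
    (∀ k : ℕ, (l.map (fun z => z ^ (2 * k + 1))).sum
      = (m.map (fun z => z ^ (2 * k + 1))).sum) →
    l = m := by
  intro l
  induction l with
  | nil =>
    intro m _ hmp _ _ hsum
    by_contra hne
    have := sum_pos_list (m.map (fun z => z ^ (2 * 0 + 1)))
      (by
        intro z hz
        simp only [List.mem_map] at hz
        obtain ⟨w, hw, rfl⟩ := hz
        exact pow_pos (hmp w hw) _)
      (by simpa using fun h => hne h.symm)
    have h0 := (hsum 0).symm
    simp only [List.map_nil, List.sum_nil] at h0
    exact absurd h0 this.ne'
  | cons a l' ih =>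
    intro m hlp hmp hls hms hsum
    cases m with
    | nil =>
      exfalso
      have := sum_pos_list ((a :: l').map (fun z => z ^ (2 * 0 + 1)))
        (by
          intro z hz
          simp only [List.mem_map] at hz
          obtain ⟨w, hw, rfl⟩ := hz
          exact pow_pos (hlp w hw) _)
        (by simp)
      have h0 := hsum 0
      simp only [List.map_nil, List.sum_nil] at h0
      exact absurd h0 this.ne'
    | cons b m' =>
      have hab : a = b := by
        by_contra hne
        rcases lt_or_gt_of_ne hne with h | h
        · exact head_lt_aux b a m' l' hmp hlp hls h (fun k => (hsum k).symm)
        · exact head_lt_aux a b l' m' hlp hmp hms h hsum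
      subst hab
      have htail : l' = m' := by
        apply ih m' (fun z hz => hlp z (by simp [hz])) (fun z hz => hmp z (by simp [hz]))
          hls.of_cons hms.of_cons
        intro k
        have := hsum k
        simp only [List.map_cons, List.sum_cons] at this
        linarith
      rw [htail]


/-- The algebra `Λ_I` generated by the odd power sums separates the points of
the compact space `𝔛 = ⊔_{j=1}^n {x ∈ ℝ^j : e^{-r} ≤ x₁ ≤ … ≤ x_j ≤ e^r}`:
since `Λ_I` is generated by the odd power sums `p_{2k+1}`, two points
`x ∈ 𝔛 ∩ ℝ^i`, `y ∈ 𝔛 ∩ ℝ^j` on which all elements of `Λ_I` (equivalently,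
all the generators `p_{2k+1}`) take the same value satisfy `i = j` and
`x = y`. -/
theorem odd_power_sums_separate_points (n : ℕ) (r : ℝ) (hr : 0 < r)
    (i j : ℕ) (hi1 : 1 ≤ i) (hin : i ≤ n) (hj1 : 1 ≤ j) (hjn : j ≤ n)
    (x : Fin i → ℝ) (y : Fin j → ℝ)
    (hxmono : Monotone x) (hymono : Monotone y)
    (hxmem : ∀ m, x m ∈ Set.Icc (Real.exp (-r)) (Real.exp r))
    (hymem : ∀ m, y m ∈ Set.Icc (Real.exp (-r)) (Real.exp r))
    (hsep : ∀ k : ℕ, ∑ m, x m ^ (2 * k + 1) = ∑ m, y m ^ (2 * k + 1)) :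
    ∃ h : i = j, ∀ m : Fin i, x m = y (Fin.cast h m) := by
  have hxpos : ∀ m, 0 < x m := fun m =>
    lt_of_lt_of_le (Real.exp_pos _) (hxmem m).1
  have hypos : ∀ m, 0 < y m := fun m =>
    lt_of_lt_of_le (Real.exp_pos _) (hymem m).1
  have hsort : ∀ {d : ℕ} (f : Fin d → ℝ), Monotone f →
      ((List.ofFn f).reverse).Pairwise (· ≥ ·) := by
    intro d f hf
    rw [List.pairwise_reverse, List.pairwise_ofFn]
    intro a b hab
    exact hf hab.le
  have hlm := list_eq_of_odd_power_sums (List.ofFn x).reverse (List.ofFn y).reverse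
    (by
      intro z hz
      simp only [List.mem_reverse, List.mem_ofFn] at hz
      obtain ⟨m, rfl⟩ := hz
      exact hxpos m)
    (by
      intro z hz
      simp only [List.mem_reverse, List.mem_ofFn] at hz
      obtain ⟨m, rfl⟩ := hz
      exact hypos m)
    (hsort x hxmono) (hsort y hymono)
    (by
      intro k
      rw [List.map_reverse, List.map_reverse, List.sum_reverse, List.sum_reverse,
        List.map_ofFn, List.map_ofFn, List.sum_ofFn, List.sum_ofFn]
      exact hsep k)
  have hlm' : List.ofFn x = List.ofFn y := List.reverse_injective hlm
  have hij : i = j := by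
    have := congrArg List.length hlm'
    simpa using this
  refine ⟨hij, fun m => ?_⟩
  have h1 : (List.ofFn x)[(m : ℕ)]'(by simp [m.2]) = x m := by simp
  have h2 : (List.ofFn y)[(m : ℕ)]'(by simpa using lt_of_lt_of_le m.2 hij.le) = y (Fin.cast hij m) := by
    simp [Fin.cast]
  rw [← h1, ← h2]
  congr 1
end

section
/- Given continuous symmetric functions f_j : ℝ^j → ℂ for j = 1,…,n, and r, ε > 0, there exists a polynomial P in the odd power sums such that |P(e^{θ₁}, …, e^{θ_j}) − f_j(θ)| < ε for every j ≤ n and every θ ∈ [−r, r]^j. -/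
open Finset MvPolynomial

lemma aux_mem (S T : Multiset ℝ) (hS : ∀ x ∈ S, 0 < x) (hT : ∀ x ∈ T, 0 < x)
    (h : ∀ k : ℕ, (S.map (fun x => x ^ (2*k+1))).sum = (T.map (fun x => x ^ (2*k+1))).sum)
    (M : ℝ) (hMS : M ∈ S) (hMub : ∀ x ∈ T, x ≤ M) : M ∈ T := by
  by_contra hM
  have hMpos : 0 < M := hS M hMS
  have hlow : ∀ k : ℕ, M ^ (2*k+1) ≤ (S.map (fun x => x ^ (2*k+1))).sum := by
    intro k
    refine Multiset.single_le_sum (fun y hy => ?_) _ (Multiset.mem_map_of_mem _ hMS)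
    obtain ⟨z, hz, rfl⟩ := Multiset.mem_map.mp hy
    exact le_of_lt (pow_pos (hS z hz) _)
  rcases eq_or_ne T 0 with rfl | hT0
  · have h0 := h 0
    simp only [Multiset.map_zero, Multiset.sum_zero] at h0
    have := hlow 0
    rw [h0] at this
    simp at this
    nlinarith
  · obtain ⟨c, hcmem, hcmax⟩ : ∃ c ∈ T, ∀ x ∈ T, x ≤ c := by
      obtain ⟨l, hl⟩ := Quotient.exists_rep T
      have hne : T.toFinset.Nonempty := by
        simpa [Multiset.toFinset_nonempty] using hT0
      refine ⟨T.toFinset.max' hne, Multiset.mem_toFinset.mp (T.toFinset.max'_mem hne), ?_⟩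
      exact fun x hx => Finset.le_max' _ _ (Multiset.mem_toFinset.mpr hx)
    have hcpos : 0 < c := hT c hcmem
    have hcM : c < M := lt_of_le_of_ne (hMub c hcmem) (fun hcmM => hM (hcmM ▸ hcmem))
    have hup : ∀ k : ℕ, (T.map (fun x => x ^ (2*k+1))).sum ≤ (Multiset.card T : ℝ) * c ^ (2*k+1) := by
      intro k
      have := Multiset.sum_le_card_nsmul (T.map (fun x => x ^ (2*k+1))) (c ^ (2*k+1)) ?_
      · simpa [Multiset.card_map, nsmul_eq_mul] using this
      · intro y hy
        obtain ⟨z, hz, rfl⟩ := Multiset.mem_map.mp hy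
        exact pow_le_pow_left₀ (le_of_lt (hT z hz)) (hcmax z hz) _
    have hkey : ∀ k : ℕ, (1 : ℝ) ≤ (Multiset.card T : ℝ) * (c / M) ^ (2*k+1) := by
      intro k
      have h1 : M ^ (2*k+1) ≤ (Multiset.card T : ℝ) * c ^ (2*k+1) := (hlow k).trans ((h k).le.trans (hup k))
      have hMp : (0:ℝ) < M ^ (2*k+1) := pow_pos hMpos _
      calc (1:ℝ) ≤ ((Multiset.card T : ℝ) * c ^ (2*k+1)) / M ^ (2*k+1) := (one_le_div hMp).mpr h1
        _ = (Multiset.card T : ℝ) * (c / M) ^ (2*k+1) := by rw [mul_div_assoc, div_pow]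
    have htend : Filter.Tendsto (fun m : ℕ => (Multiset.card T : ℝ) * (c / M) ^ m)
        Filter.atTop (nhds 0) := by
      have := tendsto_pow_atTop_nhds_zero_of_lt_one (le_of_lt (div_pos hcpos hMpos))
        ((div_lt_one hMpos).mpr hcM)
      simpa using this.const_mul (Multiset.card T : ℝ)
    obtain ⟨N, hN⟩ := Filter.eventually_atTop.mp (htend.eventually_lt_const one_pos)
    exact absurd (hkey N) (not_le.mpr (hN (2*N+1) (by omega)))

lemma multiset_eq_of_odd_power_sums (S T : Multiset ℝ) (hS : ∀ x ∈ S, 0 < x)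
    (hT : ∀ x ∈ T, 0 < x)
    (h : ∀ k : ℕ, (S.map (fun x => x ^ (2*k+1))).sum = (T.map (fun x => x ^ (2*k+1))).sum) :
    S = T := by
  obtain ⟨N, hN⟩ : ∃ N, Multiset.card S ≤ N := ⟨_, le_rfl⟩
  induction N generalizing S T with
  | zero =>
    have hS0 : S = 0 := Multiset.card_eq_zero.mp (Nat.le_zero.mp hN)
    subst hS0
    by_contra hT0
    obtain ⟨t, ht⟩ := Multiset.exists_mem_of_ne_zero (Ne.symm hT0)
    have h0 := (h 0).symm
    simp only [Multiset.map_zero, Multiset.sum_zero] at h0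
    have h1 : t ^ (2*0+1) ≤ (T.map (fun x => x ^ (2*0+1))).sum := by
      refine Multiset.single_le_sum (fun y hy => ?_) _ (Multiset.mem_map_of_mem _ ht)
      obtain ⟨z, hz, rfl⟩ := Multiset.mem_map.mp hy
      exact le_of_lt (pow_pos (hT z hz) _)
    rw [h0] at h1
    have := hT t ht
    simp at h1
    nlinarith
  | succ N ih =>
    rcases eq_or_ne S 0 with rfl | hS0
    · by_contra hT0
      obtain ⟨t, ht⟩ := Multiset.exists_mem_of_ne_zero (Ne.symm hT0)
      have h0 := (h 0).symm
      simp only [Multiset.map_zero, Multiset.sum_zero] at h0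
      have h1 : t ^ (2*0+1) ≤ (T.map (fun x => x ^ (2*0+1))).sum := by
        refine Multiset.single_le_sum (fun y hy => ?_) _ (Multiset.mem_map_of_mem _ ht)
        obtain ⟨z, hz, rfl⟩ := Multiset.mem_map.mp hy
        exact le_of_lt (pow_pos (hT z hz) _)
      rw [h0] at h1
      have := hT t ht
      simp at h1
      nlinarith
    · obtain ⟨s₀, hs₀⟩ := Multiset.exists_mem_of_ne_zero hS0
      have hne : (S + T).toFinset.Nonempty :=
        ⟨s₀, Multiset.mem_toFinset.mpr (Multiset.mem_add.mpr (Or.inl hs₀))⟩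
      set M := (S + T).toFinset.max' hne with hMdef
      have hMmem : M ∈ S + T := Multiset.mem_toFinset.mp ((S + T).toFinset.max'_mem hne)
      have hub : ∀ x ∈ S + T, x ≤ M := fun x hx => Finset.le_max' _ _ (Multiset.mem_toFinset.mpr hx)
      have hMS : M ∈ S := by
        rcases Multiset.mem_add.mp hMmem with h' | h'
        · exact h'
        · exact aux_mem T S hT hS (fun k => (h k).symm) M h'
            (fun x hx => hub x (Multiset.mem_add.mpr (Or.inl hx)))
      have hMT : M ∈ T := aux_mem S T hS hT h M hMS
        (fun x hx => hub x (Multiset.mem_add.mpr (Or.inr hx)))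
      have herase : ∀ k : ℕ, ((S.erase M).map (fun x => x ^ (2*k+1))).sum
          = ((T.erase M).map (fun x => x ^ (2*k+1))).sum := by
        intro k
        have hk := h k
        rw [← Multiset.cons_erase hMS, ← Multiset.cons_erase hMT] at hk
        simp only [Multiset.map_cons, Multiset.sum_cons] at hk
        linarith
      have hcard : Multiset.card (S.erase M) ≤ N := by
        rw [Multiset.card_erase_of_mem hMS]
        exact Nat.pred_le_pred hN
      have heq := ih (S.erase M) (T.erase M)
        (fun x hx => hS x (Multiset.mem_of_mem_erase hx))
        (fun x hx => hT x (Multiset.mem_of_mem_erase hx)) herase hcard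
      rw [← Multiset.cons_erase hMS, ← Multiset.cons_erase hMT, heq]

lemma monotone_eq_of_multiset_eq {j : ℕ} {θ θ' : Fin j → ℝ} (hθ : Monotone θ) (hθ' : Monotone θ')
    (h : Multiset.map θ Finset.univ.val = Multiset.map θ' Finset.univ.val) : θ = θ' := by
  have hl : (List.ofFn θ).Perm (List.ofFn θ') := by
    rw [Fin.univ_val_map, Fin.univ_val_map] at h
    exact Multiset.coe_eq_coe.mp h
  have := List.Perm.eq_of_sortedLE (hθ.sortedLE_ofFn) (hθ'.sortedLE_ofFn) hl
  exact List.ofFn_injective this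


/-- Simultaneous Stone–Weierstrass approximation by polynomials in the odd
power sums. -/
theorem approx_by_odd_power_sums (n : ℕ)
    (f : (j : ℕ) → (Fin j → ℝ) → ℂ)
    (hcont : ∀ j, Continuous (f j))
    (hsymm : ∀ (j : ℕ) (τ : Equiv.Perm (Fin j)) (θ : Fin j → ℝ), f j (θ ∘ τ) = f j θ)
    (r ε : ℝ) (hr : 0 < r) (hε : 0 < ε) :
    ∃ P : MvPolynomial ℕ ℂ, ∀ j : ℕ, 1 ≤ j → j ≤ n → ∀ θ : Fin j → ℝ,
      (∀ m, θ m ∈ Set.Icc (-r) r) →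
      ‖MvPolynomial.eval
          (fun k : ℕ => ((∑ m : Fin j, Real.exp (θ m) ^ (2 * k + 1) : ℝ) : ℂ)) P
        - f j θ‖ < ε := by
  classical
  let Y : (j : Fin (n+1)) → Set (Fin (j : ℕ) → ℝ) :=
    fun j => {θ | Monotone θ ∧ ∀ m, θ m ∈ Set.Icc (-r) r}
  haveI hYcomp : ∀ j : Fin (n+1), CompactSpace (Y j) := by
    intro j
    rw [← isCompact_iff_compactSpace]
    have hsub : Y j ⊆ Set.pi Set.univ (fun _ => Set.Icc (-r) r) := fun θ hθ m _ => hθ.2 m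
    refine IsCompact.of_isClosed_subset (isCompact_univ_pi fun _ => isCompact_Icc) ?_ hsub
    have : Y j = {θ : Fin (j:ℕ) → ℝ | Monotone θ} ∩
        ⋂ m, (fun θ : Fin (j:ℕ) → ℝ => θ m) ⁻¹' Set.Icc (-r) r := by
      ext θ; simp [Y, Set.mem_iInter]
    rw [this]
    refine IsClosed.inter ?_ (isClosed_iInter fun m => isClosed_Icc.preimage (continuous_apply m))
    have : {θ : Fin (j:ℕ) → ℝ | Monotone θ} =
        ⋂ (a) (b) (_ : a ≤ b), {θ : Fin (j:ℕ) → ℝ | θ a ≤ θ b} := by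
      ext θ
      simp only [Set.mem_iInter, Set.mem_setOf_eq]
      exact ⟨fun h a b hab => h hab, fun h a b hab => h a b hab⟩
    rw [this]
    exact isClosed_iInter fun a => isClosed_iInter fun b => isClosed_iInter fun _ =>
      isClosed_le (continuous_apply a) (continuous_apply b)
  let X := Σ j : Fin (n+1), Y j
  let g : ℕ → C(X, ℂ) := fun k =>
    ⟨fun x => ((∑ m : Fin (x.1 : ℕ), Real.exp (x.2.1 m) ^ (2*k+1) : ℝ) : ℂ),
     by
       apply continuous_sigma
       intro j
       show Continuous fun a : Y j =>
         (((∑ m : Fin (j:ℕ), Real.exp (a.1 m) ^ (2*k+1) : ℝ)) : ℂ)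
       exact Complex.continuous_ofReal.comp (continuous_finset_sum _ fun m _ =>
         ((Real.continuous_exp.comp ((continuous_apply m).comp continuous_subtype_val)).pow _))⟩
  let F : C(X, ℂ) := ⟨fun x => f x.1 x.2.1,
    by
      apply continuous_sigma
      intro j
      exact (hcont j).comp continuous_subtype_val⟩
  let A : StarSubalgebra ℂ C(X, ℂ) := StarAlgebra.adjoin ℂ (Set.range g)
  have hsep : A.SeparatesPoints := by
    intro x y hxy
    suffices hk : ∃ k, g k x ≠ g k y by
      obtain ⟨k, hk⟩ := hk
      exact ⟨⇑(g k), ⟨g k, StarAlgebra.subset_adjoin ℂ _ ⟨k, rfl⟩, rfl⟩, hk⟩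
    by_contra hcon
    push_neg at hcon
    exfalso
    apply hxy
    obtain ⟨j, θ⟩ := x
    obtain ⟨j', θ'⟩ := y
    set S : Multiset ℝ := Multiset.map (fun m => Real.exp (θ.1 m)) Finset.univ.val with hSdef
    set T : Multiset ℝ := Multiset.map (fun m => Real.exp (θ'.1 m)) Finset.univ.val with hTdef
    have hsums : ∀ k : ℕ,
        (S.map (fun x => x ^ (2*k+1))).sum = (T.map (fun x => x ^ (2*k+1))).sum := by
      intro k
      have hck := hcon k
      simp only [g, ContinuousMap.coe_mk] at hck
      have hck' : (∑ m : Fin (j:ℕ), Real.exp (θ.1 m) ^ (2*k+1))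
          = ∑ m : Fin (j':ℕ), Real.exp (θ'.1 m) ^ (2*k+1) := by
        exact_mod_cast hck
      rw [hSdef, hTdef, Multiset.map_map, Multiset.map_map]
      simpa [Finset.sum_eq_multiset_sum] using hck'
    have hmult : S = T := multiset_eq_of_odd_power_sums S T
      (by rintro x hx; obtain ⟨m, _, rfl⟩ := Multiset.mem_map.mp hx; exact Real.exp_pos _)
      (by rintro x hx; obtain ⟨m, _, rfl⟩ := Multiset.mem_map.mp hx; exact Real.exp_pos _)
      hsums
    have hcards : (j : ℕ) = (j' : ℕ) := by
      have := congrArg Multiset.card hmult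
      simpa [hSdef, hTdef, Multiset.card_map] using this
    obtain rfl : j = j' := Fin.ext hcards
    suffices hθθ : θ = θ' by rw [hθθ]
    apply Subtype.ext
    apply monotone_eq_of_multiset_eq θ.2.1 θ'.2.1
    apply Multiset.map_injective Real.exp_injective
    simpa [hSdef, hTdef, Multiset.map_map, Function.comp_def] using hmult
  have htop := ContinuousMap.starSubalgebra_topologicalClosure_eq_top_of_separatesPoints A hsep
  have hFmem : F ∈ closure (A : Set C(X, ℂ)) := by
    have : F ∈ A.topologicalClosure := by rw [htop]; trivial
    exact this
  obtain ⟨b, hbA, hbd⟩ := Metric.mem_closure_iff.mp hFmem ε hε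
  have hb' : b ∈ Algebra.adjoin ℂ (Set.range g) := by
    have hsg : ∀ k, star (g k) = g k := by
      intro k; ext x
      simp only [ContinuousMap.star_apply, g, ContinuousMap.coe_mk]
      exact Complex.conj_ofReal _
    have hstar : star (Set.range g) = Set.range g := by
      ext c; rw [Set.mem_star]
      constructor
      · rintro ⟨k, hk⟩
        exact ⟨k, by rw [← star_star c, ← hk, hsg k]⟩
      · rintro ⟨k, hk⟩
        exact ⟨k, by rw [← hk, hsg k]⟩
    have hmem : b ∈ Algebra.adjoin ℂ (Set.range g ∪ star (Set.range g)) := hbA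
    rwa [hstar, Set.union_self] at hmem
  rw [Algebra.adjoin_range_eq_range_aeval] at hb'
  obtain ⟨P, hP0⟩ := hb'
  have hP : (aeval g) P = b := hP0
  refine ⟨P, ?_⟩
  intro j hj1 hjn θ hθ
  set τ := Tuple.sort θ with hτdef
  have hjlt : j < n+1 := Nat.lt_succ_of_le hjn
  let x : X := ⟨⟨j, hjlt⟩, ⟨θ ∘ τ, Tuple.monotone_sort θ, fun m => hθ (τ m)⟩⟩
  have hbx : b x = MvPolynomial.eval
      (fun k : ℕ => ((∑ m : Fin j, Real.exp (θ m) ^ (2 * k + 1) : ℝ) : ℂ)) P := by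
    rw [← hP]
    have h1 : (aeval g P) x = MvPolynomial.eval (fun k => g k x) P := by
      have := MvPolynomial.comp_aeval_apply (ContinuousMap.evalAlgHom ℂ ℂ x) (f := g) (p := P)
      simpa [MvPolynomial.aeval_def] using this
    have h2 : (fun k : ℕ => (g k) x)
        = fun k : ℕ => ((∑ m : Fin j, Real.exp (θ m) ^ (2 * k + 1) : ℝ) : ℂ) := by
      funext k
      show ((∑ m : Fin j, Real.exp ((θ ∘ τ) m) ^ (2*k+1) : ℝ) : ℂ) = _
      norm_cast
      exact Equiv.sum_comp τ (fun m => Real.exp (θ m) ^ (2*k+1))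
    rw [h1, h2]
  have hFx : F x = f j θ := by
    have : F x = f j (θ ∘ τ) := rfl
    rw [this, hsymm j τ θ]
  have hfin : ‖b x - F x‖ < ε := by
    calc ‖b x - F x‖ = ‖(b - F) x‖ := by rw [ContinuousMap.sub_apply]
      _ ≤ ‖b - F‖ := ContinuousMap.norm_coe_le_norm _ _
      _ = dist b F := (dist_eq_norm b F).symm
      _ = dist F b := dist_comm _ _
      _ < ε := hbd
  rw [hbx, hFx] at hfin
  exact hfin
end
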